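/- arXiv:1210.6925 — 9 statements merged into one kernel-verified Lean document; each statement's English description precedes it below -/
import Mathlib

section
/- Let G be a finite simple graph on a vertex set V of even cardinality that is pfaffian. Then perfmat G ≤ ∏_{v ∈ V} d(v)^{1/4}, where d(v) denotes the degree of the vertex v in G. -/
open scoped Classical
open Matrix

/-- `M` is a perfect matching of `G`: a set of edges of `G` such that every vertex
belongs to exactly one edge of `M`. -/
def IsPerfMatching {V : Type*} [Fintype V] (G : SimpleGraph V) (M : Finset (Sym2 V)) : Prop :=
  (∀ e ∈ M, e ∈ G.edgeSet) ∧ ∀ v : V, ∃! e, e ∈ M ∧ v ∈ e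

/-- The number of perfect matchings of `G`. -/
noncomputable def perfmat {V : Type*} [Fintype V] (G : SimpleGraph V) : ℕ :=
  Nat.card {M : Finset (Sym2 V) // IsPerfMatching G M}

/-- `G` is pfaffian: there is a real skew-symmetric matrix `S` indexed by the vertices,
with `S u v ∈ {1,-1}` whenever `{u,v}` is an edge and `S u v = 0` otherwise, such that
`det S = (perfmat G)²`. -/
def IsPfaffian {V : Type*} [Fintype V] (G : SimpleGraph V) : Prop :=
  ∃ S : Matrix V V ℝ, Sᵀ = -S ∧
    (∀ u v : V, G.Adj u v → S u v = 1 ∨ S u v = -1) ∧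
    (∀ u v : V, ¬ G.Adj u v → S u v = 0) ∧
    S.det = (perfmat G : ℝ) ^ 2

/-- `G` contains no 4-cycles. -/
def No4Cycles {V : Type*} (G : SimpleGraph V) : Prop :=
  ∀ a b c d : V, a ≠ b → a ≠ c → a ≠ d → b ≠ c → b ≠ d → c ≠ d →
    ¬ (G.Adj a b ∧ G.Adj b c ∧ G.Adj c d ∧ G.Adj d a)

section Aux
variable {V : Type*} [Fintype V] [DecidableEq V]

lemma my_trace_eq_sum_eigenvalues {A : Matrix V V ℝ} (hA : A.IsHermitian) :
    A.trace = ∑ i, hA.eigenvalues i := by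
  conv_lhs => rw [hA.spectral_theorem]
  rw [Unitary.conjStarAlgAut_apply, Matrix.trace_mul_cycle]
  rw [show (star (hA.eigenvectorUnitary : Matrix V V ℝ)) * (hA.eigenvectorUnitary : Matrix V V ℝ) = 1 from
    Matrix.mem_unitaryGroup_iff'.mp hA.eigenvectorUnitary.2]
  simp [Matrix.trace_diagonal]

lemma my_hadamard_psd {A : Matrix V V ℝ} (hA : A.PosSemidef) :
    A.det ≤ ∏ v, A v v := by
  cases isEmpty_or_nonempty V
  · simp
  have hdiag : ∀ v, 0 ≤ A v v := by
    intro v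
    have h := hA.2 (Finsupp.single v 1)
    simpa [dotProduct, Matrix.mulVec, Pi.single_apply] using h
  by_cases hz : ∃ v, A v v = 0
  · obtain ⟨v, hv⟩ := hz
    have hmv : A *ᵥ Pi.single v 1 = 0 :=
      (hA.dotProduct_mulVec_zero_iff _).mp (by simpa [dotProduct, Matrix.mulVec, Pi.single_apply] using hv)
    have hd0 : A.det = 0 :=
      Matrix.exists_mulVec_eq_zero_iff.mp ⟨Pi.single v 1, by simp, hmv⟩
    rw [hd0]
    exact Finset.prod_nonneg fun v _ => hdiag v
  push_neg at hz
  have hd : ∀ v, 0 < A v v := fun v => (hdiag v).lt_of_ne (Ne.symm (hz v))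
  set n := Fintype.card V with hn
  have hnpos : 0 < n := Fintype.card_pos
  have hnne : (n : ℝ) ≠ 0 := Nat.cast_ne_zero.mpr hnpos.ne'
  set w : V → ℝ := fun v => (Real.sqrt (A v v))⁻¹ with hw
  have hw0 : ∀ v, 0 < w v := fun v => inv_pos.mpr (Real.sqrt_pos.mpr (hd v))
  set B := Matrix.diagonal w * A * Matrix.diagonal w with hB
  have hBpsd : B.PosSemidef := by
    have h := hA.mul_mul_conjTranspose_same (Matrix.diagonal w)
    simpa [Matrix.diagonal_conjTranspose] using h
  have hBdiag : ∀ v, B v v = 1 := by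
    intro v
    have h1 : B v v = w v * A v v * w v := by
      rw [hB, Matrix.mul_diagonal, Matrix.diagonal_mul]
    rw [h1, hw]
    have hs : Real.sqrt (A v v) ≠ 0 := (Real.sqrt_pos.mpr (hd v)).ne'
    field_simp
    exact (Real.sq_sqrt (hd v).le).symm
  have htrace : B.trace = (n : ℝ) := by
    simp [Matrix.trace, Matrix.diag, hBdiag, hn]
  have hherm := hBpsd.isHermitian
  have hsum : ∑ i, hherm.eigenvalues i = (n : ℝ) := by
    rw [← my_trace_eq_sum_eigenvalues hherm, htrace]
  have hnn : ∀ i, 0 ≤ hherm.eigenvalues i := hBpsd.eigenvalues_nonneg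
  have hdetB : B.det = ∏ i, hherm.eigenvalues i := by
    simpa using hherm.det_eq_prod_eigenvalues
  have hamgm : ∏ i, hherm.eigenvalues i ≤ 1 := by
    have h := Real.geom_mean_le_arith_mean_weighted Finset.univ (fun _ => (n : ℝ)⁻¹)
      hherm.eigenvalues (fun _ _ => by positivity)
      (by simp [Finset.sum_const, hn])
      (fun i _ => hnn i)
    have h2 : ∑ i, (n : ℝ)⁻¹ * hherm.eigenvalues i = 1 := by
      rw [← Finset.mul_sum, hsum, inv_mul_cancel₀ hnne]
    rw [h2] at h
    have h3 : ∏ i, hherm.eigenvalues i = (∏ i, hherm.eigenvalues i ^ ((n : ℝ)⁻¹)) ^ n := by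
      rw [← Finset.prod_pow]
      refine Finset.prod_congr rfl fun i _ => ?_
      rw [← Real.rpow_natCast (hherm.eigenvalues i ^ ((n : ℝ)⁻¹)) n,
        ← Real.rpow_mul (hnn i), inv_mul_cancel₀ hnne, Real.rpow_one]
    rw [h3]
    exact pow_le_one₀ (Finset.prod_nonneg fun i _ => Real.rpow_nonneg (hnn i) _) h
  have hdetAB : B.det = (∏ v, w v) ^ 2 * A.det := by
    rw [hB, Matrix.det_mul, Matrix.det_mul, Matrix.det_diagonal]; ring
  have hprodw : (∏ v, w v) ^ 2 = (∏ v, A v v)⁻¹ := by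
    rw [← Finset.prod_pow, ← Finset.prod_inv_distrib]
    refine Finset.prod_congr rfl fun v _ => ?_
    show ((Real.sqrt (A v v))⁻¹) ^ 2 = (A v v)⁻¹
    rw [inv_pow, Real.sq_sqrt (hd v).le]
  have hA' : A.det = B.det * ∏ v, A v v := by
    have hp : (0:ℝ) < ∏ v, A v v := Finset.prod_pos fun v _ => hd v
    rw [hdetAB, hprodw]
    field_simp
  rw [hA']
  calc B.det * ∏ v, A v v ≤ 1 * ∏ v, A v v := by
        apply mul_le_mul_of_nonneg_right _ (Finset.prod_nonneg fun v _ => hdiag v)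
        rw [hdetB]; exact hamgm
    _ = ∏ v, A v v := one_mul _

end Aux

/-- For a pfaffian graph `G` on an even number of vertices,
`perfmat G ≤ ∏_v d(v)^{1/4}`. -/
theorem perfmat_le_prod_degree_rpow {V : Type*} [Fintype V] (G : SimpleGraph V)
    (hV : Even (Fintype.card V)) (hG : IsPfaffian G) :
    (perfmat G : ℝ) ≤ ∏ v : V, (G.degree v : ℝ) ^ ((1 : ℝ) / 4) := by
  classical
  obtain ⟨S, hskew, hedge, hnon, hdet⟩ := hG
  set m : ℝ := (perfmat G : ℝ) with hm
  have hm0 : (0 : ℝ) ≤ m := Nat.cast_nonneg _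
  set A := S * Sᴴ with hA
  have hpsd : A.PosSemidef := Matrix.posSemidef_self_mul_conjTranspose S
  have hdiagA : ∀ v, A v v = (G.degree v : ℝ) := by
    intro v
    rw [hA, Matrix.mul_apply]
    have h1 : ∀ u : V, S v u * (Sᴴ) u v = if G.Adj v u then 1 else 0 := by
      intro u
      rw [Matrix.conjTranspose_apply, star_trivial]
      by_cases h : G.Adj v u
      · rcases hedge v u h with h1 | h1 <;> simp [h1, h]
      · simp [hnon v u h, h]
    rw [Finset.sum_congr rfl fun u _ => h1 u, Finset.sum_boole]
    rw [SimpleGraph.degree]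
    congr 1
    congr 1
    ext u
    simp [SimpleGraph.mem_neighborFinset]
  have hdetA : A.det = m ^ 4 := by
    rw [hA, Matrix.det_mul, Matrix.det_conjTranspose, star_trivial, hdet]
    ring
  have hH := my_hadamard_psd hpsd
  rw [hdetA] at hH
  have hH2 : m ^ 4 ≤ ∏ v, (G.degree v : ℝ) := by
    calc m ^ 4 ≤ ∏ v, A v v := hH
      _ = ∏ v, (G.degree v : ℝ) := Finset.prod_congr rfl fun v _ => hdiagA v
  have hprod : ∏ v, (G.degree v : ℝ) ^ ((1 : ℝ) / 4)
      = (∏ v, (G.degree v : ℝ)) ^ ((1 : ℝ) / 4) :=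
    Real.finset_prod_rpow _ _ (fun v _ => Nat.cast_nonneg _) _
  rw [hprod]
  have hmm : m = (m ^ 4) ^ ((1 : ℝ) / 4) := by
    rw [← Real.rpow_natCast m 4, ← Real.rpow_mul hm0]
    norm_num
  calc m = (m ^ 4) ^ ((1 : ℝ) / 4) := hmm
    _ ≤ (∏ v, (G.degree v : ℝ)) ^ ((1 : ℝ) / 4) :=
      Real.rpow_le_rpow (by positivity) hH2 (by norm_num)
end

section
/- For every integer r ≥ 3, the complete bipartite graph K_{r,r} is not pfaffian; that is, for every real skew-symmetric matrix S indexed by the vertices of K_{r,r} with S(u,v) ∈ {1,-1} whenever {u,v} is an edge of K_{r,r} and S(u,v) = 0 otherwise, one has det S < (r!)². -/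
open scoped Classical
open Matrix

/-- A product of `±1` reals is `±1`. -/
lemma my_prod_pm {α : Type*} [Fintype α] (g : α → ℝ) (h : ∀ i, g i = 1 ∨ g i = -1) :
    (∏ i, g i) = 1 ∨ (∏ i, g i) = -1 := by
  refine Finset.prod_induction g (fun x => x = 1 ∨ x = -1) ?_ (Or.inl rfl) (fun i _ => h i)
  rintro x y (rfl|rfl) (rfl|rfl) <;> norm_num


lemma my_six (r : ℕ) (hr : 3 ≤ r) (B : Matrix (Fin r) (Fin r) ℝ)
    (hB : ∀ i j, B i j = 1 ∨ B i j = -1)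
    (hc : ∀ σ : Equiv.Perm (Fin r),
      ((Equiv.Perm.sign σ : ℤ) : ℝ) * ∏ i, B (σ i) i
        = ((Equiv.Perm.sign (1 : Equiv.Perm (Fin r)) : ℤ) : ℝ) * ∏ i, B ((1 : Equiv.Perm (Fin r)) i) i) :
    False := by
  set i0 : Fin r := ⟨0, by omega⟩ with hi0
  set i1 : Fin r := ⟨1, by omega⟩ with hi1
  set i2 : Fin r := ⟨2, by omega⟩ with hi2
  have h01 : i0 ≠ i1 := by simp [hi0, hi1, Fin.ext_iff]
  have h02 : i0 ≠ i2 := by simp [hi0, hi2, Fin.ext_iff]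
  have h12 : i1 ≠ i2 := by simp [hi1, hi2, Fin.ext_iff]
  set T : Finset (Fin r) := {i0, i1, i2} with hT
  set R : ℝ := ∏ i ∈ Tᶜ, B i i with hR
  have split : ∀ σ : Equiv.Perm (Fin r), (∀ i, i ∉ T → σ i = i) →
      (∏ i, B (σ i) i) = B (σ i0) i0 * (B (σ i1) i1 * B (σ i2) i2) * R := by
    intro σ hσ
    rw [← Finset.prod_mul_prod_compl T fun i => B (σ i) i]
    congr 1
    · rw [hT, Finset.prod_insert (by simp [h01, h02]),
        Finset.prod_insert (by simp [h12]), Finset.prod_singleton]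
    · exact Finset.prod_congr rfl fun i hi => by rw [hσ i (Finset.mem_compl.mp hi)]
  set s : ℝ := ((Equiv.Perm.sign (1 : Equiv.Perm (Fin r)) : ℤ) : ℝ)
      * ∏ i, B ((1 : Equiv.Perm (Fin r)) i) i with hs
  -- the six permutations
  have fix_swap : ∀ a b : Fin r, a ∈ T → b ∈ T → ∀ i, i ∉ T → Equiv.swap a b i = i := by
    intro a b ha hb i hi
    exact Equiv.swap_apply_of_ne_of_ne (fun h => hi (h ▸ ha)) (fun h => hi (h ▸ hb))
  have m0 : i0 ∈ T := by simp [hT]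
  have m1 : i1 ∈ T := by simp [hT]
  have m2 : i2 ∈ T := by simp [hT]
  -- E1
  have E1 : B i0 i0 * (B i1 i1 * B i2 i2) * R = s := by
    have := hc 1
    rw [split 1 (fun i _ => rfl)] at this
    simpa using this
  have E2 : -(B i1 i0 * (B i0 i1 * B i2 i2) * R) = s := by
    have := hc (Equiv.swap i0 i1)
    rw [split _ (fix_swap i0 i1 m0 m1)] at this
    rw [Equiv.swap_apply_left, Equiv.swap_apply_right,
      Equiv.swap_apply_of_ne_of_ne (Ne.symm h02) (Ne.symm h12),
      Equiv.Perm.sign_swap h01] at this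
    rw [← this]; push_cast; ring
  have E3 : -(B i2 i0 * (B i1 i1 * B i0 i2) * R) = s := by
    have := hc (Equiv.swap i0 i2)
    rw [split _ (fix_swap i0 i2 m0 m2)] at this
    rw [Equiv.swap_apply_left, Equiv.swap_apply_right,
      Equiv.swap_apply_of_ne_of_ne (Ne.symm h01) h12,
      Equiv.Perm.sign_swap h02] at this
    rw [← this]; push_cast; ring
  have E4 : -(B i0 i0 * (B i2 i1 * B i1 i2) * R) = s := by
    have := hc (Equiv.swap i1 i2)
    rw [split _ (fix_swap i1 i2 m1 m2)] at this
    rw [Equiv.swap_apply_left, Equiv.swap_apply_right,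
      Equiv.swap_apply_of_ne_of_ne h01 h02,
      Equiv.Perm.sign_swap h12] at this
    rw [← this]; push_cast; ring
  have E5 : B i1 i0 * (B i2 i1 * B i0 i2) * R = s := by
    have := hc (Equiv.swap i0 i1 * Equiv.swap i1 i2)
    have hfix : ∀ i, i ∉ T → (Equiv.swap i0 i1 * Equiv.swap i1 i2) i = i := by
      intro i hi
      simp [Equiv.Perm.mul_apply, fix_swap i1 i2 m1 m2 i hi, fix_swap i0 i1 m0 m1 i hi]
    rw [split _ hfix] at this
    have a0 : (Equiv.swap i0 i1 * Equiv.swap i1 i2) i0 = i1 := by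
      simp [Equiv.Perm.mul_apply, Equiv.swap_apply_def, h01, h02, h12, h01.symm, h02.symm, h12.symm]
    have a1 : (Equiv.swap i0 i1 * Equiv.swap i1 i2) i1 = i2 := by
      simp [Equiv.Perm.mul_apply, Equiv.swap_apply_def, h01, h02, h12, h01.symm, h02.symm, h12.symm]
    have a2 : (Equiv.swap i0 i1 * Equiv.swap i1 i2) i2 = i0 := by
      simp [Equiv.Perm.mul_apply, Equiv.swap_apply_def, h01, h02, h12, h01.symm, h02.symm, h12.symm]
    rw [a0, a1, a2, _root_.map_mul, Equiv.Perm.sign_swap h01, Equiv.Perm.sign_swap h12] at this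
    rw [← this]; push_cast; ring
  have E6 : B i2 i0 * (B i0 i1 * B i1 i2) * R = s := by
    have := hc (Equiv.swap i1 i2 * Equiv.swap i0 i1)
    have hfix : ∀ i, i ∉ T → (Equiv.swap i1 i2 * Equiv.swap i0 i1) i = i := by
      intro i hi
      simp [Equiv.Perm.mul_apply, fix_swap i1 i2 m1 m2 i hi, fix_swap i0 i1 m0 m1 i hi]
    rw [split _ hfix] at this
    have a0 : (Equiv.swap i1 i2 * Equiv.swap i0 i1) i0 = i2 := by
      simp [Equiv.Perm.mul_apply, Equiv.swap_apply_def, h01, h02, h12, h01.symm, h02.symm, h12.symm]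
    have a1 : (Equiv.swap i1 i2 * Equiv.swap i0 i1) i1 = i0 := by
      simp [Equiv.Perm.mul_apply, Equiv.swap_apply_def, h01, h02, h12, h01.symm, h02.symm, h12.symm]
    have a2 : (Equiv.swap i1 i2 * Equiv.swap i0 i1) i2 = i1 := by
      simp [Equiv.Perm.mul_apply, Equiv.swap_apply_def, h01, h02, h12, h01.symm, h02.symm, h12.symm]
    rw [a0, a1, a2, _root_.map_mul, Equiv.Perm.sign_swap h12, Equiv.Perm.sign_swap h01] at this
    rw [← this]; push_cast; ring
  -- squares
  have sq : ∀ i j : Fin r, B i j ^ 2 = 1 := by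
    intro i j; rcases hB i j with h | h <;> rw [h] <;> norm_num
  have sqR : R ^ 2 = 1 := by
    rw [hR, ← Finset.prod_pow]
    exact Finset.prod_eq_one fun i _ => sq i i
  have key : (B i0 i0 * (B i1 i1 * B i2 i2) * R)
      * (-(B i1 i0 * (B i0 i1 * B i2 i2) * R))
      * (-(B i2 i0 * (B i1 i1 * B i0 i2) * R))
      * (-(B i0 i0 * (B i2 i1 * B i1 i2) * R))
      * (B i1 i0 * (B i2 i1 * B i0 i2) * R)
      * (B i2 i0 * (B i0 i1 * B i1 i2) * R) = s * s * s * s * s * s := by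
    rw [E1, E2, E3, E4, E5, E6]
  have key2 : -(B i0 i0 ^ 2 * B i0 i1 ^ 2 * B i0 i2 ^ 2 * B i1 i0 ^ 2 * B i1 i1 ^ 2
      * B i1 i2 ^ 2 * B i2 i0 ^ 2 * B i2 i1 ^ 2 * B i2 i2 ^ 2 * (R ^ 2) ^ 3)
      = (s ^ 2) ^ 3 := by
    linear_combination key
  have sqs : s ^ 2 = 1 := by
    rw [← E1, mul_pow, mul_pow, mul_pow, sq, sq, sq, sqR]; norm_num
  rw [sq, sq, sq, sq, sq, sq, sq, sq, sq, sqR, sqs] at key2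
  norm_num at key2


/-- For `r ≥ 3` the complete bipartite graph `K_{r,r}` is not pfaffian:
for every real skew-symmetric matrix `S` indexed by its vertices with entries `±1` on
edges and `0` elsewhere, `det S < (r!)²`. -/
theorem completeBipartite_not_pfaffian (r : ℕ) (hr : 3 ≤ r)
    (S : Matrix (Fin r ⊕ Fin r) (Fin r ⊕ Fin r) ℝ) (hskew : Sᵀ = -S)
    (hedge : ∀ u v, (completeBipartiteGraph (Fin r) (Fin r)).Adj u v →
      S u v = 1 ∨ S u v = -1)
    (hnonedge : ∀ u v, ¬ (completeBipartiteGraph (Fin r) (Fin r)).Adj u v → S u v = 0) :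
    S.det < ((r.factorial : ℝ)) ^ 2 := by
  set B : Matrix (Fin r) (Fin r) ℝ := fun i j => S (Sum.inl i) (Sum.inr j) with hBdef
  have hB : ∀ i j, B i j = 1 ∨ B i j = -1 := fun i j => hedge _ _ (by simp)
  set f : Equiv.Perm (Fin r) → ℝ :=
    fun σ => ((Equiv.Perm.sign σ : ℤ) : ℝ) * ∏ i, B (σ i) i with hf
  have hdetB : B.det = ∑ σ : Equiv.Perm (Fin r), f σ := by
    simp [Matrix.det_apply, hf, Units.smul_def, zsmul_eq_mul]
  have hfpm : ∀ σ, f σ = 1 ∨ f σ = -1 := by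
    intro σ
    have hp := my_prod_pm (fun i => B (σ i) i) (fun i => hB _ _)
    have hsgn : ((Equiv.Perm.sign σ : ℤ) : ℝ) = 1 ∨ ((Equiv.Perm.sign σ : ℤ) : ℝ) = -1 := by
      rcases Int.units_eq_one_or (Equiv.Perm.sign σ) with h | h <;> rw [h] <;> norm_num
    rcases hsgn with h | h <;> rcases hp with h' | h' <;> simp [hf, h, h'] <;> norm_num [h, h']
  have hnc : ¬ ∀ σ, f σ = f 1 := by
    intro h
    exact my_six r hr B hB (fun σ => (h σ).trans (by rw [hf]))
  obtain ⟨σ0, hσ0⟩ := not_forall.mp hnc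
  have hpos : ∃ τ : Equiv.Perm (Fin r), f τ = 1 := by
    rcases hfpm σ0 with h | h
    · exact ⟨σ0, h⟩
    · rcases hfpm 1 with h' | h'
      · exact ⟨1, h'⟩
      · exact absurd (h.trans h'.symm) hσ0
  have hneg : ∃ τ : Equiv.Perm (Fin r), f τ = -1 := by
    rcases hfpm σ0 with h | h
    · rcases hfpm 1 with h' | h'
      · exact absurd (h.trans h'.symm) hσ0
      · exact ⟨1, h'⟩
    · exact ⟨σ0, h⟩
  have hcard : (Finset.univ : Finset (Equiv.Perm (Fin r))).card = r.factorial := by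
    rw [Finset.card_univ, Fintype.card_perm, Fintype.card_fin]
  have hupper : B.det < (r.factorial : ℝ) := by
    obtain ⟨τ, hτ⟩ := hneg
    calc B.det = ∑ σ : Equiv.Perm (Fin r), f σ := hdetB
    _ < ∑ _σ : Equiv.Perm (Fin r), (1 : ℝ) := by
        refine Finset.sum_lt_sum (fun σ _ => ?_) ⟨τ, Finset.mem_univ τ, by rw [hτ]; norm_num⟩
        rcases hfpm σ with h | h <;> rw [h] <;> norm_num
    _ = (r.factorial : ℝ) := by rw [Finset.sum_const, hcard]; simp
  have hlower : -(r.factorial : ℝ) < B.det := by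
    obtain ⟨τ, hτ⟩ := hpos
    calc -(r.factorial : ℝ) = ∑ _σ : Equiv.Perm (Fin r), (-1 : ℝ) := by
          rw [Finset.sum_const, hcard]; simp
    _ < ∑ σ : Equiv.Perm (Fin r), f σ := by
        refine Finset.sum_lt_sum (fun σ _ => ?_) ⟨τ, Finset.mem_univ τ, by rw [hτ]; norm_num⟩
        rcases hfpm σ with h | h <;> rw [h] <;> norm_num
    _ = B.det := hdetB.symm
  have hsq : B.det ^ 2 < ((r.factorial : ℝ)) ^ 2 := sq_lt_sq' hlower hupper
  -- block structure
  have hSeq : S = (Matrix.fromBlocks (-Bᵀ) 0 0 B).submatrix (Equiv.sumComm (Fin r) (Fin r)) id := by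
    ext u v
    match u, v with
    | Sum.inl i, Sum.inl j => simpa using hnonedge (Sum.inl i) (Sum.inl j) (by simp)
    | Sum.inl i, Sum.inr j => simp [hBdef]; rfl
    | Sum.inr i, Sum.inl j =>
        have := congrFun (congrFun hskew (Sum.inl j)) (Sum.inr i)
        simp only [Matrix.transpose_apply, Matrix.neg_apply] at this
        simp [hBdef, this]; rfl
    | Sum.inr i, Sum.inr j => simpa using hnonedge (Sum.inr i) (Sum.inr j) (by simp)
  have hdetS : S.det =
      ((Equiv.Perm.sign (Equiv.sumComm (Fin r) (Fin r) : Equiv.Perm (Fin r ⊕ Fin r)) : ℤ) : ℝ)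
        * ((-Bᵀ).det * B.det) := by
    rw [hSeq, Matrix.det_permute, Matrix.det_fromBlocks_zero₂₁]
  have hdetneg : (-Bᵀ).det = (-1 : ℝ) ^ r * B.det := by
    rw [Matrix.det_neg, Matrix.det_transpose, Fintype.card_fin]
  have hle : S.det ≤ B.det ^ 2 := by
    have hb2 : (0:ℝ) ≤ B.det ^ 2 := sq_nonneg _
    rcases Int.units_eq_one_or
        (Equiv.Perm.sign (Equiv.sumComm (Fin r) (Fin r) : Equiv.Perm (Fin r ⊕ Fin r))) with h | h <;>
      rcases neg_one_pow_eq_or ℝ r with h' | h' <;>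
      rw [hdetS, hdetneg, h, h'] <;> push_cast <;> nlinarith [sq_nonneg B.det]
  linarith
end

section
/- Let G be a finite simple pfaffian graph on n vertices (n even, n ≥ 4) with m edges. Then perfmat G ≤ (2m/n)^{n/4}. Moreover, if g ≥ 3 is an integer such that m ≤ (g/(g-2))·(n-2), then perfmat G < e^{-1/2}·(2g/(g-2))^{n/4}; in particular, if g ≥ 4 then perfmat G < 2^{n/2}. -/
open scoped Classical
open Matrix

/-- For a PSD real matrix, `det^(1/n) ≤ trace / n`. -/
theorem psd_det_le {V : Type*} [Fintype V] [DecidableEq V] {A : Matrix V V ℝ}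
    (hA : A.PosSemidef) (hn : 0 < Fintype.card V) :
    A.det ^ ((Fintype.card V : ℝ)⁻¹) ≤ A.trace / Fintype.card V := by
  set n := Fintype.card V
  have hH := hA.isHermitian
  set μ := hH.eigenvalues with hμ
  have hμ0 : ∀ i, 0 ≤ μ i := fun i => hA.eigenvalues_nonneg i
  have hdet : A.det = ∏ i, μ i := by
    simpa using hH.det_eq_prod_eigenvalues
  have hsum : ∑ i, μ i = A.trace := by
    rw [hH.trace_eq_sum_eigenvalues]
    simp [hμ]
  have hn0 : (0:ℝ) < n := by exact_mod_cast hn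
  have hAMGM := Real.geom_mean_le_arith_mean_weighted Finset.univ (fun _ => (n:ℝ)⁻¹) μ
    (fun _ _ => by positivity)
    (by simp [Finset.card_univ]; field_simp; rfl)
    (fun i _ => hμ0 i)
  rw [Real.finset_prod_rpow _ _ (fun i _ => hμ0 i)] at hAMGM
  rw [hdet]
  calc (∏ i, μ i) ^ ((n:ℝ)⁻¹) ≤ ∑ i : V, (n:ℝ)⁻¹ * μ i := hAMGM
    _ = A.trace / n := by rw [← Finset.mul_sum, hsum]; ring

/-- Let `G` be a pfaffian graph on `n` vertices (`n` even, `n ≥ 4`)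
with `m` edges.  Then `perfmat G ≤ (2m/n)^{n/4}`.  Moreover, if `g ≥ 3` is an integer
with `m ≤ (g/(g-2))(n-2)`, then `perfmat G < e^{-1/2} (2g/(g-2))^{n/4}`; in particular
if `g ≥ 4` then `perfmat G < 2^{n/2}`. -/
theorem perfmat_planar_girth_bound {V : Type*} [Fintype V] (G : SimpleGraph V)
    (hn4 : 4 ≤ Fintype.card V) (hV : Even (Fintype.card V)) (hG : IsPfaffian G) :
    (perfmat G : ℝ) ≤
        (2 * (G.edgeFinset.card : ℝ) / (Fintype.card V : ℝ)) ^ ((Fintype.card V : ℝ) / 4) ∧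
      ∀ g : ℕ, 3 ≤ g →
        (G.edgeFinset.card : ℝ) ≤ ((g : ℝ) / ((g : ℝ) - 2)) * ((Fintype.card V : ℝ) - 2) →
        (perfmat G : ℝ) <
            Real.exp (-(1 : ℝ) / 2) *
              (2 * (g : ℝ) / ((g : ℝ) - 2)) ^ ((Fintype.card V : ℝ) / 4) ∧
          (4 ≤ g → (perfmat G : ℝ) < 2 ^ ((Fintype.card V : ℝ) / 2)) := by
  classical
  obtain ⟨S, hskew, h1, h0, hdet⟩ := hG
  set n := Fintype.card V with hn
  have hnpos : 0 < n := by omega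
  have hn0 : (0:ℝ) < n := by exact_mod_cast hnpos
  have hn4' : (4:ℝ) ≤ n := by exact_mod_cast hn4
  set q : ℝ := (perfmat G : ℝ) with hqdef
  have hq : 0 ≤ q := Nat.cast_nonneg _
  set m : ℝ := (G.edgeFinset.card : ℝ) with hmdef
  have hm : 0 ≤ m := Nat.cast_nonneg _
  set A := Sᵀ * S with hAdef
  have hAps : A.PosSemidef := by
    have := Matrix.posSemidef_conjTranspose_mul_self S
    rwa [Matrix.conjTranspose_eq_transpose_of_trivial] at this
  have hdetA : A.det = q ^ 4 := by
    rw [hAdef, Matrix.det_mul, Matrix.det_transpose, hdet]; ring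
  have hsq : ∀ u v, S u v ^ 2 = if G.Adj u v then (1:ℝ) else 0 := by
    intro u v; by_cases h : G.Adj u v
    · rcases h1 u v h with h' | h' <;> simp [h, h']
    · simp [h, h0 u v h]
  have htr : A.trace = 2 * m := by
    have e1 : A.trace = ∑ v, ∑ u, S u v ^ 2 := by
      simp [hAdef, Matrix.trace, Matrix.diag, Matrix.mul_apply, Matrix.transpose_apply, sq]
    have e2 : ∀ v, (∑ u, S u v ^ 2) = (G.degree v : ℝ) := by
      intro v
      simp_rw [hsq]
      rw [Finset.sum_boole]
      congr 1
      simp [SimpleGraph.degree, SimpleGraph.neighborFinset_eq_filter, SimpleGraph.adj_comm]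
    rw [e1, Finset.sum_congr rfl (fun v _ => e2 v), ← Nat.cast_sum,
      SimpleGraph.sum_degrees_eq_twice_card_edges]
    push_cast; ring
  have key := psd_det_le hAps hnpos
  rw [hdetA, htr, ← hn] at key
  -- key : (q^4) ^ (n⁻¹) ≤ 2 * m / n
  set X : ℝ := 2 * m / (n:ℝ) with hXdef
  have hX : 0 ≤ X := by positivity
  have key2 : q ^ 4 ≤ X ^ (n:ℝ) := by
    have h := Real.rpow_le_rpow (Real.rpow_nonneg (by positivity) _) key (le_of_lt hn0)
    rwa [← Real.rpow_mul (by positivity), inv_mul_cancel₀ hn0.ne', Real.rpow_one] at h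
  have main1 : q ≤ X ^ ((n:ℝ)/4) := by
    have hq4 : q = (q ^ 4) ^ ((4:ℝ)⁻¹) := by
      rw [← Real.rpow_natCast q 4, ← Real.rpow_mul hq]; norm_num
    calc q = (q ^ 4) ^ ((4:ℝ)⁻¹) := hq4
      _ ≤ (X ^ (n:ℝ)) ^ ((4:ℝ)⁻¹) := Real.rpow_le_rpow (by positivity) key2 (by norm_num)
      _ = X ^ ((n:ℝ)/4) := by rw [← Real.rpow_mul hX]; ring_nf
  refine ⟨main1, ?_⟩
  intro g hg3 hmg
  have hg3' : (3:ℝ) ≤ (g:ℝ) := by exact_mod_cast hg3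
  have hg2 : (0:ℝ) < (g:ℝ) - 2 := by linarith
  set c : ℝ := 2 * (g:ℝ) / ((g:ℝ) - 2) with hcdef
  have hc : 0 < c := by positivity
  have h12n : 0 < 1 - 2 / (n:ℝ) := by
    rw [sub_pos, div_lt_one hn0]; linarith
  have hXc : X ≤ c * (1 - 2/(n:ℝ)) := by
    rw [hXdef]
    have h1 : 2 * m / (n:ℝ) ≤ 2 * ((g:ℝ)/((g:ℝ)-2) * ((n:ℝ)-2)) / n := by
      gcongr
    have h2 : 2 * ((g:ℝ)/((g:ℝ)-2) * ((n:ℝ)-2)) / n = c * (1 - 2/(n:ℝ)) := by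
      rw [hcdef]
      have hgne : ((g:ℝ) - 2) ≠ 0 := hg2.ne'
      field_simp
    linarith
  have hstep : q ≤ c ^ ((n:ℝ)/4) * (1 - 2/(n:ℝ)) ^ ((n:ℝ)/4) := by
    calc q ≤ X ^ ((n:ℝ)/4) := main1
      _ ≤ (c * (1 - 2/(n:ℝ))) ^ ((n:ℝ)/4) :=
          Real.rpow_le_rpow hX hXc (by positivity)
      _ = c ^ ((n:ℝ)/4) * (1 - 2/(n:ℝ)) ^ ((n:ℝ)/4) := Real.mul_rpow hc.le h12n.le
  have hlt : (1 - 2/(n:ℝ)) ^ ((n:ℝ)/4) < Real.exp (-(1:ℝ)/2) := by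
    have hx0 : -(2/(n:ℝ)) ≠ 0 := neg_ne_zero.mpr (ne_of_gt (by positivity))
    have h1 : 1 - 2/(n:ℝ) < Real.exp (-(2/(n:ℝ))) := by
      have := Real.add_one_lt_exp hx0
      linarith
    have h2 : (1 - 2/(n:ℝ)) ^ ((n:ℝ)/4) < (Real.exp (-(2/(n:ℝ)))) ^ ((n:ℝ)/4) :=
      Real.rpow_lt_rpow h12n.le h1 (by positivity)
    have h3 : (Real.exp (-(2/(n:ℝ)))) ^ ((n:ℝ)/4) = Real.exp (-(1:ℝ)/2) := by
      rw [← Real.exp_mul]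
      congr 1
      field_simp
      ring
    rwa [h3] at h2
  have hcpow : 0 < c ^ ((n:ℝ)/4) := Real.rpow_pos_of_pos hc _
  have main2 : q < Real.exp (-(1:ℝ)/2) * c ^ ((n:ℝ)/4) := by
    calc q ≤ c ^ ((n:ℝ)/4) * (1 - 2/(n:ℝ)) ^ ((n:ℝ)/4) := hstep
      _ < c ^ ((n:ℝ)/4) * Real.exp (-(1:ℝ)/2) := by
          exact mul_lt_mul_of_pos_left hlt hcpow
      _ = Real.exp (-(1:ℝ)/2) * c ^ ((n:ℝ)/4) := mul_comm _ _
  refine ⟨main2, ?_⟩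
  intro hg4
  have hg4' : (4:ℝ) ≤ (g:ℝ) := by exact_mod_cast hg4
  have hc4 : c ≤ 4 := by
    rw [hcdef, div_le_iff₀ hg2]; linarith
  have h4pow : (4:ℝ) ^ ((n:ℝ)/4) = 2 ^ ((n:ℝ)/2) := by
    have : (4:ℝ) = 2 ^ ((2:ℕ) : ℝ) := by rw [Real.rpow_natCast]; norm_num
    rw [this, ← Real.rpow_mul (by norm_num : (0:ℝ) ≤ 2)]
    congr 1; push_cast; ring
  have hexp1 : Real.exp (-(1:ℝ)/2) < 1 := by
    rw [Real.exp_lt_one_iff]; norm_num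
  have h2pos : (0:ℝ) < 2 ^ ((n:ℝ)/2) := Real.rpow_pos_of_pos (by norm_num) _
  calc q < Real.exp (-(1:ℝ)/2) * c ^ ((n:ℝ)/4) := main2
    _ ≤ Real.exp (-(1:ℝ)/2) * 4 ^ ((n:ℝ)/4) := by
        exact mul_le_mul_of_nonneg_left (Real.rpow_le_rpow hc.le hc4 (by positivity))
          (Real.exp_nonneg _)
    _ = Real.exp (-(1:ℝ)/2) * 2 ^ ((n:ℝ)/2) := by rw [h4pow]
    _ < 1 * 2 ^ ((n:ℝ)/2) := by exact mul_lt_mul_of_pos_right hexp1 h2pos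
    _ = 2 ^ ((n:ℝ)/2) := one_mul _
end

section
/- Let G be a 3-regular finite simple pfaffian graph on n vertices (n even). Then the number of perfect matchings of G is at most 3^{n/4}. -/
open scoped Classical
open Matrix

private lemma trace_eq_sum_eigs {n : Type*} [Fintype n] [DecidableEq n] {A : Matrix n n ℝ}
    (hA : A.IsHermitian) : A.trace = ∑ i, hA.eigenvalues i := by
  conv_lhs => rw [hA.spectral_theorem, Unitary.conjStarAlgAut_apply]
  rw [Matrix.trace_mul_cycle]
  rw [Unitary.coe_star_mul_self, Matrix.one_mul]
  simp [Matrix.trace_diagonal]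

/-- A 3-regular pfaffian graph on an even number `n` of vertices has at
most `3^{n/4}` perfect matchings. -/
theorem perfmat_cubic_pfaffian {V : Type*} [Fintype V] (G : SimpleGraph V)
    [DecidableRel G.Adj] (hV : Even (Fintype.card V))
    (hreg : G.IsRegularOfDegree 3) (hG : IsPfaffian G) :
    (perfmat G : ℝ) ≤ 3 ^ ((Fintype.card V : ℝ) / 4) := by
  set n : ℕ := Fintype.card V with hn
  by_cases hn0 : n = 0
  · -- empty graph: perfmat ≤ 1
    haveI : IsEmpty V := Fintype.card_eq_zero_iff.mp hn0
    haveI : IsEmpty (Sym2 V) := by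
      constructor
      intro x
      induction x using Sym2.ind with
      | _ a b => exact IsEmpty.elim ‹IsEmpty V› a
    haveI : Subsingleton (Finset (Sym2 V)) :=
      ⟨fun a b => by
        simp [Finset.eq_empty_of_isEmpty a, Finset.eq_empty_of_isEmpty b]⟩
    have h1 : perfmat G ≤ 1 := by
      unfold perfmat
      rcases isEmpty_or_nonempty {M : Finset (Sym2 V) // IsPerfMatching G M} with h | h
      · rw [Nat.card_of_isEmpty]
        norm_num
      · obtain ⟨a⟩ := h
        rw [Nat.card_of_subsingleton a]
    calc (perfmat G : ℝ) ≤ 1 := by exact_mod_cast h1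
    _ = 3 ^ ((n : ℝ) / 4) := by rw [hn0]; norm_num
  · obtain ⟨S, hskew, hpm1, hzero, hdet⟩ := hG
    set A : Matrix V V ℝ := S * Sᵀ with hAdef
    have hconj : Sᵀ = Sᴴ := by
      ext i j
      simp [Matrix.conjTranspose_apply]
    have hP : A.PosSemidef := by
      rw [hAdef, hconj]
      exact Matrix.posSemidef_self_mul_conjTranspose S
    have hA : A.IsHermitian := hP.1
    -- determinant of A
    have hdetA : A.det = (perfmat G : ℝ) ^ 4 := by
      rw [hAdef, Matrix.det_mul, Matrix.det_transpose, hdet]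
      ring
    -- trace of A
    have htr : A.trace = 3 * n := by
      rw [Matrix.trace]
      have : ∀ i : V, A.diag i = 3 := by
        intro i
        have : A.diag i = ∑ j, S i j * S i j := by
          simp [hAdef, Matrix.diag, Matrix.mul_apply, Matrix.transpose_apply]
        rw [this]
        have hterm : ∀ j : V, S i j * S i j = if G.Adj i j then (1 : ℝ) else 0 := by
          intro j
          by_cases h : G.Adj i j
          · rcases hpm1 i j h with h1 | h1 <;> simp [h1, h]
          · simp [hzero i j h, h]
        rw [Finset.sum_congr rfl fun j _ => hterm j]
        rw [Finset.sum_boole]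
        have := hreg i
        rw [SimpleGraph.degree, SimpleGraph.neighborFinset_eq_filter] at this
        rw [this]
        norm_num
      rw [Finset.sum_congr rfl fun i _ => this i]
      simp [mul_comm]
      exact hn.symm
    -- AM-GM on the eigenvalues
    have hnpos : (0 : ℝ) < n := by positivity
    have hμ : ∀ i : V, 0 ≤ hA.eigenvalues i := hP.eigenvalues_nonneg
    have hprod : ∏ i, hA.eigenvalues i = (perfmat G : ℝ) ^ 4 := by
      have := hA.det_eq_prod_eigenvalues
      simp only [RCLike.ofReal_real_eq_id, id] at this
      rw [hdetA] at this
      exact this.symm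
    have hsum : ∑ i, hA.eigenvalues i = 3 * n := by
      rw [← trace_eq_sum_eigs hA, htr]
    have hamgm := Real.geom_mean_le_arith_mean_weighted Finset.univ
        (fun _ : V => 1 / (n : ℝ)) hA.eigenvalues
        (fun i _ => by positivity) (by simp [Finset.card_univ, ← hn]; field_simp)
        (fun i _ => hμ i)
    have hrhs : ∑ i : V, (1 / (n : ℝ)) * hA.eigenvalues i = 3 := by
      rw [← Finset.mul_sum, hsum]
      field_simp
    have hlhs : ∏ i : V, hA.eigenvalues i ^ (1 / (n : ℝ))
        = ((perfmat G : ℝ) ^ 4) ^ (1 / (n : ℝ)) := by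
      rw [Real.finset_prod_rpow Finset.univ _ (fun i _ => hμ i), hprod]
    rw [hlhs, hrhs] at hamgm
    -- raise to the n-th power
    have hpge : (0 : ℝ) ≤ (perfmat G : ℝ) ^ 4 := by positivity
    have key : (perfmat G : ℝ) ^ 4 ≤ (3 : ℝ) ^ (n : ℝ) := by
      have := Real.rpow_le_rpow (Real.rpow_nonneg hpge _) hamgm (le_of_lt hnpos)
      rwa [← Real.rpow_mul hpge, one_div, inv_mul_cancel₀ (ne_of_gt hnpos),
        Real.rpow_one] at this
    -- take fourth roots
    have key2 : ((perfmat G : ℝ) ^ 4 : ℝ) ^ ((1 : ℝ) / 4)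
        ≤ ((3 : ℝ) ^ (n : ℝ)) ^ ((1 : ℝ) / 4) :=
      Real.rpow_le_rpow hpge key (by norm_num)
    have hleft : ((perfmat G : ℝ) ^ 4 : ℝ) ^ ((1 : ℝ) / 4) = (perfmat G : ℝ) := by
      rw [← Real.rpow_natCast (perfmat G : ℝ) 4, ← Real.rpow_mul (by positivity)]
      norm_num
    have hright : ((3 : ℝ) ^ (n : ℝ)) ^ ((1 : ℝ) / 4) = 3 ^ ((n : ℝ) / 4) := by
      rw [← Real.rpow_mul (by norm_num)]
      ring_nf
    rw [hleft, hright] at key2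
    exact key2
end

section
/- Let G = (V,E) be a finite simple pfaffian graph on an even number of vertices that contains no 4-cycles. Let M' be a collection of pairwise disjoint unordered pairs {u,v} of distinct vertices of G such that for each pair {u,v} ∈ M' there exists a vertex w of G with {u,w} and {w,v} both edges of G (i.e., u and v are joined by a path of length 2 in G). Then perfmat G ≤ (∏_{{u,v} ∈ M'} (d(u)d(v) - 1))^{1/4} · (∏_{v ∈ V not covered by M'} d(v))^{1/4}, where d(v) is the degree of v in G. -/
open scoped Classical
open Matrix

section AuxPfaffian
variable {n : Type*} [Fintype n] [DecidableEq n]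

lemma psd_diag_nonneg {P : Matrix n n ℝ} (hP : P.PosSemidef) (v : n) : 0 ≤ P v v := by
  have := hP.dotProduct_mulVec_nonneg (Pi.single v 1)
  simpa [dotProduct, mulVec, Pi.single_apply, Finset.sum_ite_eq, Finset.sum_ite_eq'] using this

lemma psd_det_nonneg {P : Matrix n n ℝ} (hP : P.PosSemidef) : 0 ≤ P.det := by
  rw [hP.1.det_eq_prod_eigenvalues]
  apply Finset.prod_nonneg
  intro i _
  simpa using hP.eigenvalues_nonneg i

lemma one_le_det_one_add_psd {M : Matrix n n ℝ} (hM : M.PosSemidef) : 1 ≤ (1 + M).det := by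
  have hs := hM.1.spectral_theorem
  set U := hM.1.eigenvectorUnitary
  have hU : (U : Matrix n n ℝ) * star (U : Matrix n n ℝ) = 1 :=
    (Matrix.mem_unitaryGroup_iff).mp U.2
  have h1 : (1 : Matrix n n ℝ) + M
      = (U : Matrix n n ℝ) * (1 + diagonal (RCLike.ofReal ∘ hM.1.eigenvalues)) *
        star (U : Matrix n n ℝ) := by
    rw [mul_add, add_mul, mul_one, hU, ← Unitary.conjStarAlgAut_apply (S := ℝ), ← hs]
  have hU' : star (U : Matrix n n ℝ) * (U : Matrix n n ℝ) = 1 :=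
    (Matrix.mem_unitaryGroup_iff').mp U.2
  rw [h1, det_mul, det_mul, mul_comm, ← mul_assoc, ← det_mul, hU', det_one, one_mul]
  have : (1 : Matrix n n ℝ) + diagonal (RCLike.ofReal ∘ hM.1.eigenvalues)
      = diagonal (fun i => 1 + hM.1.eigenvalues i) := by
    rw [← diagonal_one, diagonal_add]
    congr 1
  rw [this, det_diagonal]
  calc (1:ℝ) = ∏ _i : n, 1 := by simp
  _ ≤ _ := Finset.prod_le_prod (by simp) (fun i _ => by
      have := hM.eigenvalues_nonneg i; linarith)

lemma psd_posdef_of_det_ne_zero {S : Matrix n n ℝ} (hS : S.PosSemidef) (hd : S.det ≠ 0) :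
    S.PosDef := by
  refine posDef_iff_dotProduct_mulVec.mpr ⟨hS.1, fun x hx => lt_of_le_of_ne (hS.dotProduct_mulVec_nonneg x) ?_⟩
  intro h
  have h0 : S *ᵥ x = 0 := (hS.dotProduct_mulVec_zero_iff x).mp h.symm
  exact hd ((Matrix.exists_mulVec_eq_zero_iff).mp ⟨x, hx, h0⟩)

open scoped MatrixOrder in
lemma det_le_det_add_psd {S F : Matrix n n ℝ} (hS : S.PosSemidef) (hF : F.PosSemidef) :
    S.det ≤ (S + F).det := by
  by_cases hd : S.det = 0
  · rw [hd]; exact psd_det_nonneg (hS.add hF)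
  · set Q := CFC.sqrt S with hQdef
    have hQpsd : Q.PosSemidef := (CFC.sqrt_nonneg S).posSemidef
    have hQQ : Q * Q = S := CFC.sqrt_mul_sqrt_self S hS.nonneg
    have hQdet : Q.det ≠ 0 := by
      intro h
      apply hd
      rw [← hQQ, det_mul, h, mul_zero]
    have hQunit : IsUnit Q := (Matrix.isUnit_iff_isUnit_det _).mpr hQdet.isUnit
    have hQH : Qᴴ = Q := hQpsd.1
    have hQinvH : (Q⁻¹)ᴴ = Q⁻¹ := by rw [Matrix.conjTranspose_nonsing_inv, hQH]
    have hM : (Q⁻¹ * F * Q⁻¹).PosSemidef := by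
      have := hF.conjTranspose_mul_mul_same (Q⁻¹)
      rwa [hQinvH] at this
    have key : S + F = Q * (1 + Q⁻¹ * F * Q⁻¹) * Q := by
      rw [mul_add, add_mul, mul_one, hQQ]
      congr 1
      rw [← mul_assoc, ← mul_assoc, Matrix.mul_nonsing_inv _ hQdet.isUnit, one_mul,
        mul_assoc, Matrix.nonsing_inv_mul _ hQdet.isUnit, mul_one]
    rw [key, det_mul, det_mul]
    have h1 : (1:ℝ) ≤ (1 + Q⁻¹ * F * Q⁻¹).det := one_le_det_one_add_psd hM
    have hSdet : S.det = Q.det * Q.det := by rw [← hQQ, det_mul]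
    have hQd : 0 < Q.det * Q.det := by
      rcases (psd_det_nonneg hQpsd).lt_or_eq with h | h
      · exact mul_pos h h
      · exact absurd h.symm hQdet
    calc S.det = Q.det * 1 * Q.det := by rw [hSdet]; ring
    _ ≤ Q.det * (1 + Q⁻¹ * F * Q⁻¹).det * Q.det := by nlinarith

lemma fischer_sum {m l : Type*} [Fintype m] [DecidableEq m] [Fintype l] [DecidableEq l]
    {P : Matrix (m ⊕ l) (m ⊕ l) ℝ} (hP : P.PosSemidef) :
    P.det ≤ (P.toBlocks₁₁).det * (P.toBlocks₂₂).det := by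
  set A := P.toBlocks₁₁ with hA
  set B := P.toBlocks₁₂ with hB
  set D := P.toBlocks₂₂ with hD
  have hC : P.toBlocks₂₁ = Bᴴ := by
    ext i j
    have := congrFun (congrFun hP.1 (Sum.inl j)) (Sum.inr i)
    simp only [conjTranspose_apply, star_trivial]
    have h2 : P (Sum.inr i) (Sum.inl j) = P (Sum.inl j) (Sum.inr i) := by
      have := congrFun (congrFun hP.1 (Sum.inr i)) (Sum.inl j)
      simpa [conjTranspose_apply] using this.symm
    exact h2
  have hPeq : P = fromBlocks A B Bᴴ D := by rw [← hC, fromBlocks_toBlocks]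
  have hApsd : A.PosSemidef := hP.submatrix Sum.inl
  have hDpsd : D.PosSemidef := hP.submatrix Sum.inr
  by_cases hdA : A.det = 0
  · -- P is singular
    obtain ⟨x, hx, hAx⟩ := (Matrix.exists_mulVec_eq_zero_iff).mpr hdA
    have hy : P *ᵥ (Sum.elim x 0) = 0 := by
      apply (hP.dotProduct_mulVec_zero_iff _).mp
      rw [hPeq]
      rw [show (Sum.elim x (0 : l → ℝ)) = Sum.elim x 0 from rfl, fromBlocks_mulVec]
      have hstar : star (Sum.elim x (0 : l → ℝ)) = Sum.elim (star x) 0 := by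
        ext (i | i) <;> simp
      rw [hstar, sumElim_dotProduct_sumElim]
      simp [hAx]
    have hPdet : P.det = 0 := by
      apply (Matrix.exists_mulVec_eq_zero_iff).mp
      refine ⟨Sum.elim x 0, ?_, hy⟩
      intro h
      apply hx
      ext i
      exact congrFun h (Sum.inl i)
    rw [hPdet]
    exact mul_nonneg (psd_det_nonneg hApsd) (psd_det_nonneg hDpsd)
  · have hAposdef : A.PosDef := psd_posdef_of_det_ne_zero hApsd hdA
    haveI : Invertible A := Matrix.invertibleOfIsUnitDet A (Ne.isUnit hdA)
    have hSchur : (D - Bᴴ * A⁻¹ * B).PosSemidef := by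
      rw [← Matrix.PosDef.fromBlocks₁₁ B D hAposdef, ← hPeq]
      exact hP
    have hX : (Bᴴ * A⁻¹ * B).PosSemidef := hApsd.inv.conjTranspose_mul_mul_same B
    have hdet : P.det = A.det * (D - Bᴴ * A⁻¹ * B).det := by
      rw [hPeq, Matrix.det_fromBlocks₁₁, Matrix.invOf_eq_nonsing_inv]
    have hle : (D - Bᴴ * A⁻¹ * B).det ≤ D.det := by
      have := det_le_det_add_psd hSchur hX
      rwa [sub_add_cancel] at this
    rw [hdet]
    exact mul_le_mul_of_nonneg_left hle (psd_det_nonneg hApsd)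

open scoped Classical in
lemma fischer_pred {V : Type*} [Fintype V] {P : Matrix V V ℝ} (hP : P.PosSemidef)
    (p : V → Prop) :
    P.det ≤ (P.submatrix ((↑) : {x // p x} → V) (↑)).det *
      (P.submatrix ((↑) : {x // ¬ p x} → V) (↑)).det := by
  classical
  set e := Equiv.sumCompl p
  have hdet : P.det = (P.submatrix e e).det := (Matrix.det_submatrix_equiv_self e P).symm
  have hQ : (P.submatrix e e).PosSemidef := hP.submatrix e
  have h11 : (P.submatrix e e).toBlocks₁₁ = P.submatrix ((↑) : {x // p x} → V) (↑) := rfl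
  have h22 : (P.submatrix e e).toBlocks₂₂ = P.submatrix ((↑) : {x // ¬ p x} → V) (↑) := rfl
  rw [hdet, ← h11, ← h22]
  exact fischer_sum hQ

lemma mem_filter_out {α : Type*} {f1 : Fintype α} {p : α → Prop} {d : DecidablePred p} {x : α}
    (h : x ∈ @Finset.filter α p d (@Finset.univ α f1)) : p x :=
  (Finset.mem_filter.mp h).2

lemma mem_filter_in {α : Type*} {f1 : Fintype α} {p : α → Prop} {d : DecidablePred p} {x : α}
    (h : p x) : x ∈ @Finset.filter α p d (@Finset.univ α f1) :=
  Finset.mem_filter.mpr ⟨Finset.mem_univ _, h⟩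

lemma det_irrel {n : Type*} {i1 i2 : DecidableEq n} {f1 f2 : Fintype n} (M : Matrix n n ℝ) :
    @Matrix.det n i1 f1 ℝ _ M = @Matrix.det n i2 f2 ℝ _ M := by
  cases Subsingleton.elim i1 i2
  cases Subsingleton.elim f1 f2
  rfl

lemma det_subtype_eq {V : Type*} [Fintype V] (P : Matrix V V ℝ) (v₀ : V)
    {sd : DecidableEq {x // x = v₀}} {st : Fintype {x // x = v₀}} :
    @Matrix.det _ sd st ℝ _ (P.submatrix ((↑) : {x // x = v₀} → V) (↑)) = P v₀ v₀ := by
  rw [← Matrix.det_submatrix_equiv_self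
    (⟨fun _ => ⟨v₀, rfl⟩, fun _ => 0, fun i => Subsingleton.elim _ _,
      fun x => Subtype.ext x.2.symm⟩ : Fin 1 ≃ {x // x = v₀}), Matrix.det_fin_one]
  rfl

open scoped Classical in
lemma hadamard_aux : ∀ (N : ℕ) {V : Type*} [Fintype V], Fintype.card V = N →
    ∀ {P : Matrix V V ℝ}, P.PosSemidef → P.det ≤ ∏ v, P v v := by
  intro N
  induction N with
  | zero =>
    intro V _ hcard P hP
    haveI := Fintype.card_eq_zero_iff.mp hcard
    simp [Matrix.det_isEmpty]
  | succ n ih =>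
    intro V _ hcard P hP
    have hpos : 0 < Fintype.card V := by omega
    obtain ⟨v₀⟩ := Fintype.card_pos_iff.mp hpos
    have hF := fischer_pred hP (fun x => x = v₀)
    have hcard' : Fintype.card {x // ¬ x = v₀} = n := by
      have := Fintype.card_subtype_compl (fun x => x = v₀)
      rw [Fintype.card_subtype_eq] at this
      omega
    have h2 := ih hcard' (hP.submatrix ((↑) : {x // ¬ x = v₀} → V))
    have hprod : (∏ x : {x // ¬ x = v₀}, P x.val x.val)
        = ∏ w ∈ Finset.univ.filter (fun w => ¬ w = v₀), P w w :=
      (Finset.prod_subtype (p := fun w => ¬ w = v₀) _ (fun w => by simp) (fun w => P w w)).symm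
    have hsplit : ∏ v, P v v = P v₀ v₀ * ∏ w ∈ Finset.univ.filter (fun w => ¬ w = v₀), P w w := by
      rw [← Finset.prod_filter_mul_prod_filter_not Finset.univ (fun w => w = v₀) (fun w => P w w)]
      congr 1
      have : Finset.univ.filter (fun w => w = v₀) = {v₀} := by ext w; simp
      rw [this, Finset.prod_singleton]
    rw [det_subtype_eq] at hF
    simp only [Matrix.submatrix_apply] at h2
    refine le_trans hF ?_
    rw [hsplit]
    apply mul_le_mul_of_nonneg_left _ (psd_diag_nonneg hP v₀)
    rw [← hprod]
    refine le_trans (le_of_eq ?_) h2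
    exact det_irrel _

open scoped Classical in
lemma det2_subtype_eq {V : Type*} [Fintype V] (P : Matrix V V ℝ) {u v : V} (huv : u ≠ v)
    {sd : DecidableEq {x // x = u ∨ x = v}} {st : Fintype {x // x = u ∨ x = v}} :
    @Matrix.det _ sd st ℝ _ (P.submatrix ((↑) : {x // x = u ∨ x = v} → V) (↑))
      = P u u * P v v - P u v * P v u := by
  rw [← Matrix.det_submatrix_equiv_self
    (⟨fun i => if i = 0 then ⟨u, Or.inl rfl⟩ else ⟨v, Or.inr rfl⟩,
      fun x => if x.val = u then 0 else 1,
      fun i => by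
        fin_cases i
        · show (if (u:V) = u then (0 : Fin 2) else 1) = 0
          rw [if_pos rfl]
        · show (if (v:V) = u then (0 : Fin 2) else 1) = 1
          rw [if_neg (fun h : (v:V) = u => huv h.symm)],
      fun x => by
        rcases x with ⟨x, hx | hx⟩ <;> subst hx
        · simp
        · simp [Ne.symm huv]⟩ :
      Fin 2 ≃ {x // x = u ∨ x = v}), Matrix.det_fin_two]
  simp [Matrix.submatrix_apply]

open scoped Classical in
lemma main_aux : ∀ (N : ℕ) {V : Type*} [Fintype V] {P : Matrix V V ℝ}, P.PosSemidef →
    ∀ (M : Finset (V × V)), M.card = N →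
    (∀ p ∈ M, p.1 ≠ p.2) →
    (∀ p ∈ M, ∀ q ∈ M, p ≠ q → ({p.1, p.2} : Set V) ∩ {q.1, q.2} = ∅) →
    P.det ≤ (∏ p ∈ M, (P p.1 p.1 * P p.2 p.2 - P p.1 p.2 * P p.2 p.1)) *
      ∏ w ∈ Finset.univ.filter (fun w => ∀ p ∈ M, w ≠ p.1 ∧ w ≠ p.2), P w w := by
  intro N
  induction N with
  | zero =>
    intro V _ P hP M hM hne hdisj
    rw [Finset.card_eq_zero] at hM
    subst hM
    rw [Finset.prod_empty, one_mul, Finset.filter_true_of_mem (by simp)]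
    exact hadamard_aux _ rfl hP
  | succ n ih =>
    intro V _ P hP M hM hne hdisj
    have hMne : M.Nonempty := Finset.card_pos.mp (by omega)
    obtain ⟨p₀, hp₀⟩ := hMne
    have huv : p₀.1 ≠ p₀.2 := hne p₀ hp₀
    have hF := fischer_pred hP (fun x => x = p₀.1 ∨ x = p₀.2)
    rw [det2_subtype_eq P huv] at hF
    have hpair_nonneg : 0 ≤ P p₀.1 p₀.1 * P p₀.2 p₀.2 - P p₀.1 p₀.2 * P p₀.2 p₀.1 := by
      have h0 := psd_det_nonneg (hP.submatrix ((↑) : {x // x = p₀.1 ∨ x = p₀.2} → V))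
      rwa [det2_subtype_eq P huv] at h0
    -- components of other pairs avoid p₀
    have hcomp : ∀ q ∈ M.erase p₀, ¬ (q.1 = p₀.1 ∨ q.1 = p₀.2) ∧ ¬ (q.2 = p₀.1 ∨ q.2 = p₀.2) := by
      intro q hq
      have hqM := Finset.mem_of_mem_erase hq
      have hqne : q ≠ p₀ := Finset.ne_of_mem_erase hq
      have h := hdisj q hqM p₀ hp₀ hqne
      rw [Set.eq_empty_iff_forall_notMem] at h
      constructor
      · intro hc
        exact h q.1 ⟨Or.inl rfl, by rcases hc with h' | h' <;> [exact Or.inl h'; exact Or.inr h']⟩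
      · intro hc
        exact h q.2 ⟨Or.inr rfl, by rcases hc with h' | h' <;> [exact Or.inl h'; exact Or.inr h']⟩
    set Q := P.submatrix ((↑) : {x // ¬ (x = p₀.1 ∨ x = p₀.2)} → V)
      ((↑) : {x // ¬ (x = p₀.1 ∨ x = p₀.2)} → V) with hQ
    have hQpsd : Q.PosSemidef := by
      rw [hQ]; exact hP.submatrix _
    set f : {x // x ∈ M.erase p₀} →
        ({x // ¬ (x = p₀.1 ∨ x = p₀.2)} × {x // ¬ (x = p₀.1 ∨ x = p₀.2)}) :=
      fun q => (⟨q.1.1, (hcomp q.1 q.2).1⟩, ⟨q.1.2, (hcomp q.1 q.2).2⟩) with hf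
    set M'' := (M.erase p₀).attach.image f with hM''
    have hfinj : Function.Injective f := by
      intro a b hab
      have h1 := congrArg (fun z => z.1.val) hab
      have h2 := congrArg (fun z => z.2.val) hab
      exact Subtype.ext (Prod.ext h1 h2)
    have hcard'' : M''.card = n := by
      rw [hM'', Finset.card_image_of_injective _ hfinj, Finset.card_attach,
        Finset.card_erase_of_mem hp₀, hM]
      omega
    have hne'' : ∀ r ∈ M'', r.1 ≠ r.2 := by
      intro r hr heq
      obtain ⟨a, _, rfl⟩ := Finset.mem_image.mp hr
      exact hne a.val (Finset.mem_of_mem_erase a.2) (congrArg Subtype.val heq)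
    have hdisj'' : ∀ r ∈ M'', ∀ s ∈ M'', r ≠ s →
        ({r.1, r.2} : Set {x // ¬ (x = p₀.1 ∨ x = p₀.2)}) ∩ {s.1, s.2} = ∅ := by
      intro r hr s hs hrs
      obtain ⟨a, _, rfl⟩ := Finset.mem_image.mp hr
      obtain ⟨b, _, rfl⟩ := Finset.mem_image.mp hs
      have hab : a.val ≠ b.val := fun h => hrs (congrArg f (Subtype.ext h))
      have h := hdisj a.val (Finset.mem_of_mem_erase a.2) b.val (Finset.mem_of_mem_erase b.2) hab
      rw [Set.eq_empty_iff_forall_notMem] at h ⊢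
      rintro x ⟨hx1, hx2⟩
      apply h x.val
      constructor
      · rcases hx1 with h' | h' <;> [exact Or.inl (congrArg Subtype.val h');
          exact Or.inr (congrArg Subtype.val h')]
      · rcases hx2 with h' | h' <;> [exact Or.inl (congrArg Subtype.val h');
          exact Or.inr (congrArg Subtype.val h')]
    have key2 := ih hQpsd M'' hcard'' hne'' hdisj''
    -- transfer pair product
    have hprod1 : (∏ r ∈ M'', (Q r.1 r.1 * Q r.2 r.2 - Q r.1 r.2 * Q r.2 r.1))
        = ∏ q ∈ M.erase p₀, (P q.1 q.1 * P q.2 q.2 - P q.1 q.2 * P q.2 q.1) := by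
      rw [hM'', Finset.prod_image (fun a _ b _ h => hfinj h)]
      rw [← Finset.prod_attach (M.erase p₀)
        (fun q => (P q.1 q.1 * P q.2 q.2 - P q.1 q.2 * P q.2 q.1))]
      rfl
    -- directional facts for the uncovered-vertex bijection
    have hAdir : ∀ (x : {x // ¬ (x = p₀.1 ∨ x = p₀.2)}),
        (∀ r ∈ M'', x ≠ r.1 ∧ x ≠ r.2) → ∀ p ∈ M, x.val ≠ p.1 ∧ x.val ≠ p.2 := by
      intro x hx p hpM
      by_cases hpp : p = p₀
      · subst hpp
        have := x.2
        push_neg at this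
        exact this
      · have hpe : p ∈ M.erase p₀ := Finset.mem_erase.mpr ⟨hpp, hpM⟩
        have hr : f ⟨p, hpe⟩ ∈ M'' := by
          rw [hM'']
          exact Finset.mem_image_of_mem f (Finset.mem_attach _ _)
        obtain ⟨h1, h2⟩ := hx _ hr
        exact ⟨fun hv => h1 (Subtype.ext hv), fun hv => h2 (Subtype.ext hv)⟩
    have hBdir : ∀ w : V, (∀ p ∈ M, w ≠ p.1 ∧ w ≠ p.2) → ¬ (w = p₀.1 ∨ w = p₀.2) := by
      intro w hw hc
      obtain ⟨h1, h2⟩ := hw p₀ hp₀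
      rcases hc with h | h <;> [exact h1 h; exact h2 h]
    have hBdir2 : ∀ (w : V) (hw : ∀ p ∈ M, w ≠ p.1 ∧ w ≠ p.2),
        ∀ r ∈ M'', (⟨w, hBdir w hw⟩ : {x // ¬ (x = p₀.1 ∨ x = p₀.2)}) ≠ r.1 ∧
          (⟨w, hBdir w hw⟩ : {x // ¬ (x = p₀.1 ∨ x = p₀.2)}) ≠ r.2 := by
      intro w hw r hr
      rw [hM''] at hr
      obtain ⟨a, _, rfl⟩ := Finset.mem_image.mp hr
      obtain ⟨h1, h2⟩ := hw a.val (Finset.mem_of_mem_erase a.2)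
      exact ⟨fun hv => h1 (congrArg Subtype.val hv), fun hv => h2 (congrArg Subtype.val hv)⟩
    refine le_trans hF ?_
    refine le_trans (mul_le_mul_of_nonneg_left (le_trans (le_of_eq (det_irrel _)) key2) hpair_nonneg) (le_of_eq ?_)
    rw [← mul_assoc, hprod1, Finset.mul_prod_erase M
      (fun q => (P q.1 q.1 * P q.2 q.2 - P q.1 q.2 * P q.2 q.1)) hp₀]
    congr 1
    refine Finset.prod_bij' (fun x _ => x.val)
      (fun w hw => ⟨w, hBdir w (mem_filter_out hw)⟩) ?_ ?_ ?_ ?_ ?_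
    · intro x hx
      exact mem_filter_in (hAdir x (mem_filter_out hx))
    · intro w hw
      exact mem_filter_in (hBdir2 w (mem_filter_out hw))
    · intro x hx
      rfl
    · intro w hw
      rfl
    · intro x hx
      rfl

end AuxPfaffian

/-- Let `G` be a pfaffian graph on an even number of vertices with no
4-cycles, and let `M'` be a collection of pairwise disjoint pairs of distinct vertices,
each pair joined by a path of length 2 in `G`.  Then
`perfmat G ≤ (∏_{{u,v}∈M'} (d(u)d(v)-1))^{1/4} (∏_{v uncovered} d(v))^{1/4}`. -/
theorem perfmat_le_of_match_in_square {V : Type*} [Fintype V] (G : SimpleGraph V)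
    [DecidableRel G.Adj] (hV : Even (Fintype.card V)) (hG : IsPfaffian G)
    (h4 : No4Cycles G) (M' : Finset (V × V))
    (hne : ∀ p ∈ M', p.1 ≠ p.2)
    (hdisj : ∀ p ∈ M', ∀ q ∈ M', p ≠ q → ({p.1, p.2} : Set V) ∩ {q.1, q.2} = ∅)
    (hpath : ∀ p ∈ M', ∃ w : V, G.Adj p.1 w ∧ G.Adj w p.2) :
    (perfmat G : ℝ) ≤
      (∏ p ∈ M', ((G.degree p.1 : ℝ) * (G.degree p.2 : ℝ) - 1)) ^ ((1 : ℝ) / 4) *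
        (∏ v ∈ Finset.univ.filter (fun v : V => ∀ p ∈ M', v ≠ p.1 ∧ v ≠ p.2),
          (G.degree v : ℝ)) ^ ((1 : ℝ) / 4) := by
  obtain ⟨S, hskew, hedge, hnon, hdet⟩ := hG
  set P := S * Sᵀ with hPdef
  have hSH : Sᴴ = Sᵀ := by ext i j; simp [Matrix.conjTranspose_apply]
  have hPpsd : P.PosSemidef := by
    have := Matrix.posSemidef_self_mul_conjTranspose S
    rwa [hSH] at this
  have hdetP : P.det = (perfmat G : ℝ) ^ 4 := by
    rw [hPdef, Matrix.det_mul, Matrix.det_transpose, hdet]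
    ring
  have hsq : ∀ v w, S v w * S v w = if G.Adj v w then (1:ℝ) else 0 := by
    intro v w
    by_cases h : G.Adj v w
    · rcases hedge v w h with h1 | h1 <;> simp [h1, h]
    · simp [hnon v w h, h]
  have hdiag : ∀ v, P v v = (G.degree v : ℝ) := by
    intro v
    have h1 : P v v = ∑ w, S v w * S v w := by
      simp [hPdef, Matrix.mul_apply, Matrix.transpose_apply]
    rw [h1]
    rw [Finset.sum_congr rfl (fun w _ => hsq v w), Finset.sum_boole]
    congr 1
    rw [← SimpleGraph.neighborFinset_eq_filter, SimpleGraph.degree]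
  -- common neighbours
  have hoff : ∀ u v : V, u ≠ v → (∃ w, G.Adj u w ∧ G.Adj v w) → P u v * P v u = 1 := by
    intro u v huv hex
    have hsymm : P v u = P u v := by
      have : Pᵀ = P := by
        rw [hPdef, Matrix.transpose_mul, Matrix.transpose_transpose]
      exact congrFun (congrFun this u) v
    set s := Finset.univ.filter (fun w => G.Adj u w ∧ G.Adj v w) with hs
    have hcard : ∀ a ∈ s, ∀ b ∈ s, a = b := by
      intro a ha b hb
      rw [hs, Finset.mem_filter] at ha hb
      obtain ⟨-, hau, hav⟩ := ha
      obtain ⟨-, hbu, hbv⟩ := hb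
      by_contra hab
      exact h4 u a v b (G.ne_of_adj hau) huv (G.ne_of_adj hbu)
        (fun h => (G.ne_of_adj hav) h.symm) hab (fun h => (G.ne_of_adj hbv) h)
        ⟨hau, hav.symm, hbv, hbu.symm⟩
    obtain ⟨w₀, hw1, hw2⟩ := hex
    have hw0 : w₀ ∈ s := by
      rw [hs, Finset.mem_filter]
      exact ⟨Finset.mem_univ _, hw1, hw2⟩
    have hsing : s = {w₀} := by
      apply Finset.eq_singleton_iff_unique_mem.mpr
      exact ⟨hw0, fun b hb => hcard b hb w₀ hw0⟩
    have hPuv : P u v = S u w₀ * S v w₀ := by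
      have h1 : P u v = ∑ w, S u w * S v w := by
        simp [hPdef, Matrix.mul_apply, Matrix.transpose_apply]
      have h2 : ∑ w ∈ s, S u w * S v w = ∑ w, S u w * S v w := by
        rw [hs]
        apply Finset.sum_filter_of_ne
        intro w _ hne0
        constructor
        · by_contra hc
          exact hne0 (by rw [hnon u w hc, zero_mul])
        · by_contra hc
          exact hne0 (by rw [hnon v w hc, mul_zero])
      rw [h1, ← h2, hsing, Finset.sum_singleton]
    rw [hsymm, hPuv]
    have e1 := hsq u w₀
    have e2 := hsq v w₀
    rw [if_pos hw1] at e1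
    rw [if_pos hw2] at e2
    nlinarith [e1, e2]
  -- apply the main inequality
  have key := main_aux M'.card hPpsd M' rfl hne hdisj
  rw [hdetP] at key
  have hApos : ∀ p ∈ M', (0:ℝ) ≤ (G.degree p.1 : ℝ) * (G.degree p.2 : ℝ) - 1 := by
    intro p hp
    obtain ⟨w, hw1, hw2⟩ := hpath p hp
    have h1 : 0 < G.degree p.1 := by
      rw [SimpleGraph.degree_pos_iff_exists_adj]
      exact ⟨w, hw1⟩
    have h2 : 0 < G.degree p.2 := by
      rw [SimpleGraph.degree_pos_iff_exists_adj]
      exact ⟨w, hw2.symm⟩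
    have : (1:ℝ) ≤ (G.degree p.1 : ℝ) * (G.degree p.2 : ℝ) := by
      have e1 : (1:ℝ) ≤ (G.degree p.1 : ℝ) := by exact_mod_cast h1
      have e2 : (1:ℝ) ≤ (G.degree p.2 : ℝ) := by exact_mod_cast h2
      nlinarith
    linarith
  have hconv1 : (∏ p ∈ M', (P p.1 p.1 * P p.2 p.2 - P p.1 p.2 * P p.2 p.1))
      = ∏ p ∈ M', ((G.degree p.1 : ℝ) * (G.degree p.2 : ℝ) - 1) := by
    apply Finset.prod_congr rfl
    intro p hp
    rw [hdiag p.1, hdiag p.2, hoff p.1 p.2 (hne p hp) ?_]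
    obtain ⟨w, hw1, hw2⟩ := hpath p hp
    exact ⟨w, hw1, hw2.symm⟩
  have hconv2 : (∏ w ∈ Finset.univ.filter (fun w => ∀ p ∈ M', w ≠ p.1 ∧ w ≠ p.2), P w w)
      = ∏ w ∈ Finset.univ.filter (fun w => ∀ p ∈ M', w ≠ p.1 ∧ w ≠ p.2), (G.degree w : ℝ) :=
    Finset.prod_congr rfl (fun w _ => hdiag w)
  rw [hconv1, hconv2] at key
  set A := ∏ p ∈ M', ((G.degree p.1 : ℝ) * (G.degree p.2 : ℝ) - 1) with hA
  set B := ∏ w ∈ Finset.univ.filter (fun w => ∀ p ∈ M', w ≠ p.1 ∧ w ≠ p.2), (G.degree w : ℝ)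
    with hB
  have hAnn : 0 ≤ A := Finset.prod_nonneg hApos
  have hBnn : 0 ≤ B := Finset.prod_nonneg (fun w _ => by positivity)
  have hroot : (perfmat G : ℝ) ≤ (A * B) ^ ((1:ℝ)/4) := by
    have h1 : (((perfmat G : ℝ)) ^ (4:ℕ)) ^ ((1:ℝ)/4) = (perfmat G : ℝ) := by
      rw [← Real.rpow_natCast ((perfmat G : ℝ)) 4, ← Real.rpow_mul (by positivity)]
      norm_num
    rw [← h1]
    exact Real.rpow_le_rpow (by positivity) key (by norm_num)
  rwa [Real.mul_rpow hAnn hBnn] at hroot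
end

section
/- Let G be a 3-regular finite simple pfaffian graph on n vertices that contains no 4-cycles and possesses a Hamiltonian cycle. If n is divisible by 4, then perfmat G ≤ 8^{n/8}; if n is even but not divisible by 4, then perfmat G ≤ 8^{(n-2)/8}·√3. -/
open scoped Classical
open Matrix

section AuxMatrix

variable {ι : Type*} [Fintype ι] [DecidableEq ι]

lemma aux_psd_det_nonneg {A : Matrix ι ι ℝ} (hA : A.PosSemidef) : 0 ≤ A.det := by
  rw [hA.1.det_eq_prod_eigenvalues]
  refine Finset.prod_nonneg fun i _ => ?_
  simpa using hA.eigenvalues_nonneg i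

lemma aux_psd_det_le_one {C : Matrix ι ι ℝ} (hC : C.PosSemidef)
    (h1C : (1 - C).PosSemidef) : C.det ≤ 1 := by
  rw [hC.1.det_eq_prod_eigenvalues]
  have key : ∀ i, (0:ℝ) ≤ hC.1.eigenvalues i ∧ hC.1.eigenvalues i ≤ 1 := by
    intro i
    refine ⟨hC.eigenvalues_nonneg i, ?_⟩
    set v : ι → ℝ := ⇑(hC.1.eigenvectorBasis i) with hv
    have hCv : C *ᵥ v = hC.1.eigenvalues i • v := hC.1.mulVec_eigenvectorBasis i
    have hvv : star v ⬝ᵥ v = 1 := by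
      have h1 : (inner ℝ (hC.1.eigenvectorBasis i) (hC.1.eigenvectorBasis i) : ℝ) = star v ⬝ᵥ v :=
        EuclideanSpace.inner_eq_star_dotProduct _ _
      have h2 : (inner ℝ (hC.1.eigenvectorBasis i) (hC.1.eigenvectorBasis i) : ℝ) = 1 := by
        rw [real_inner_self_eq_norm_mul_norm, hC.1.eigenvectorBasis.orthonormal.1 i, mul_one]
      rw [← h1, h2]
    have h0 := h1C.dotProduct_mulVec_nonneg v
    rw [sub_mulVec, one_mulVec, dotProduct_sub, hCv, dotProduct_smul, smul_eq_mul, hvv,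
      mul_one] at h0
    linarith
  refine Finset.prod_le_one (fun i _ => by simpa using (key i).1)
    (fun i _ => by simpa using (key i).2)

lemma aux_det_le_det_add {P Q : Matrix ι ι ℝ} (hP : P.PosSemidef) (hQ : Q.PosSemidef) :
    P.det ≤ (P + Q).det := by
  have hPQ : (P + Q).PosSemidef := hP.add hQ
  by_cases hdet : (P + Q).det = 0
  · obtain ⟨v, hv0, hv⟩ := Matrix.exists_mulVec_eq_zero_iff.mpr hdet
    have h0 : star v ⬝ᵥ P *ᵥ v = 0 := by
      have h1 : star v ⬝ᵥ (P + Q) *ᵥ v = 0 := by rw [hv, dotProduct_zero]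
      rw [add_mulVec, dotProduct_add] at h1
      have h2 := hP.dotProduct_mulVec_nonneg v
      have h3 := hQ.dotProduct_mulVec_nonneg v
      linarith
    have hker : P *ᵥ v = 0 := (hP.dotProduct_mulVec_zero_iff v).mp h0
    have hd : P.det = 0 := Matrix.exists_mulVec_eq_zero_iff.mp ⟨v, hv0, hker⟩
    rw [hd, hdet]
  · obtain ⟨S, hSpsd, hSS⟩ : ∃ S : Matrix ι ι ℝ, S.PosSemidef ∧ S * S = P + Q := by
      open scoped MatrixOrder in
      exact ⟨CFC.sqrt (P + Q), (CFC.sqrt_nonneg (P + Q)).posSemidef,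
        CFC.sqrt_mul_sqrt_self (P + Q) hPQ.nonneg⟩
    have hdS : S.det ≠ 0 := by
      intro h; exact hdet (by rw [← hSS, det_mul, h, mul_zero])
    have hunit : IsUnit S.det := isUnit_iff_ne_zero.mpr hdS
    have hSinv : S⁻¹.PosSemidef := hSpsd.inv
    have hSiH : S⁻¹ᴴ = S⁻¹ := hSinv.1
    set C := S⁻¹ * P * S⁻¹ with hCdef
    have hCpsd : C.PosSemidef := by
      have := hP.mul_mul_conjTranspose_same S⁻¹
      rwa [hSiH] at this
    have hid : S⁻¹ * (P + Q) * S⁻¹ = 1 := by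
      rw [← hSS, ← Matrix.mul_assoc, Matrix.nonsing_inv_mul S hunit, Matrix.one_mul,
        Matrix.mul_nonsing_inv S hunit]
    have h1C : (1 - C).PosSemidef := by
      have hQ' := hQ.mul_mul_conjTranspose_same S⁻¹
      rw [hSiH] at hQ'
      have heq : 1 - C = S⁻¹ * Q * S⁻¹ := by
        rw [← hid, hCdef, Matrix.mul_add, Matrix.add_mul]
        abel
      rwa [heq]
    have hPC : P = S * C * S := by
      rw [hCdef, ← Matrix.mul_assoc, ← Matrix.mul_assoc, Matrix.mul_nonsing_inv S hunit,
        Matrix.one_mul, Matrix.mul_assoc, Matrix.nonsing_inv_mul S hunit, Matrix.mul_one]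
    have hdetP : P.det = (P + Q).det * C.det := by
      conv_lhs => rw [hPC]
      rw [← hSS]
      simp only [det_mul]
      ring
    rw [hdetP]
    have h1 : C.det ≤ 1 := aux_psd_det_le_one hCpsd h1C
    have h2 : (0:ℝ) ≤ (P + Q).det := aux_psd_det_nonneg hPQ
    nlinarith [aux_psd_det_nonneg hCpsd]

lemma aux_fischer_step {m n : Type*} [Fintype m] [Fintype n] [DecidableEq m] [DecidableEq n]
    {A : Matrix m m ℝ} {B : Matrix m n ℝ} {D : Matrix n n ℝ}
    (h : (Matrix.fromBlocks A B Bᴴ D).PosSemidef) :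
    (Matrix.fromBlocks A B Bᴴ D).det ≤ A.det * D.det := by
  have hA : A.PosSemidef := by
    have h' := h.submatrix (Sum.inl : m → m ⊕ n)
    have he : (Matrix.fromBlocks A B Bᴴ D).submatrix (Sum.inl : m → m ⊕ n) Sum.inl = A := by
      ext i j; simp
    rwa [he] at h'
  have hD : D.PosSemidef := by
    have h' := h.submatrix (Sum.inr : n → m ⊕ n)
    have he : (Matrix.fromBlocks A B Bᴴ D).submatrix (Sum.inr : n → m ⊕ n) Sum.inr = D := by
      ext i j; simp
    rwa [he] at h'
  by_cases hdetA : A.det = 0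
  · obtain ⟨v, hv0, hker⟩ := Matrix.exists_mulVec_eq_zero_iff.mpr hdetA
    set w : m ⊕ n → ℝ := Sum.elim v 0 with hw
    have hq : star w ⬝ᵥ (Matrix.fromBlocks A B Bᴴ D) *ᵥ w = 0 := by
      have hst : star w = Sum.elim (star v) 0 := by
        ext (i | i) <;> simp [hw]
      rw [hst, hw, Matrix.fromBlocks_mulVec, sumElim_dotProduct_sumElim]
      simp [hker]
    have hker2 := (h.dotProduct_mulVec_zero_iff w).mp hq
    have hw0 : w ≠ 0 := by
      intro h0
      exact hv0 (funext fun i => congrFun h0 (Sum.inl i))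
    have hd : (Matrix.fromBlocks A B Bᴴ D).det = 0 :=
      Matrix.exists_mulVec_eq_zero_iff.mp ⟨w, hw0, hker2⟩
    rw [hd, hdetA, zero_mul]
  · have hApd : A.PosDef := by
      refine Matrix.PosDef.of_dotProduct_mulVec_pos hA.1 fun x hx => ?_
      rcases (hA.dotProduct_mulVec_nonneg x).lt_or_eq with h' | h'
      · exact h'
      · exact absurd (Matrix.exists_mulVec_eq_zero_iff.mp
          ⟨x, hx, (hA.dotProduct_mulVec_zero_iff x).mp h'.symm⟩) hdetA
    haveI : Invertible A := A.invertibleOfIsUnitDet (isUnit_iff_ne_zero.mpr hdetA)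
    have hSchur : (D - Bᴴ * A⁻¹ * B).PosSemidef := (Matrix.PosDef.fromBlocks₁₁ B D hApd).mp h
    have hX : (Bᴴ * A⁻¹ * B).PosSemidef := hA.inv.conjTranspose_mul_mul_same B
    rw [Matrix.det_fromBlocks₁₁, Matrix.invOf_eq_nonsing_inv]
    have hmono : (D - Bᴴ * A⁻¹ * B).det ≤ D.det := by
      have := aux_det_le_det_add hSchur hX
      rwa [sub_add_cancel] at this
    exact mul_le_mul_of_nonneg_left hmono (aux_psd_det_nonneg hA)

lemma aux_fischer_pairs : ∀ (m : ℕ) (N : Matrix (Fin m × Fin 2) (Fin m × Fin 2) ℝ),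
    N.PosSemidef →
    N.det ≤ ∏ k : Fin m,
      (N (k,0) (k,0) * N (k,1) (k,1) - N (k,0) (k,1) * N (k,1) (k,0)) := by
  intro m
  induction m with
  | zero => intro N hN; simp [Matrix.det_isEmpty]
  | succ m ih =>
    intro N hN
    set e : (Fin m × Fin 2) ⊕ Fin 2 ≃ Fin (m+1) × Fin 2 :=
      ((Equiv.sumCongr (Equiv.refl (Fin m × Fin 2)) (Equiv.uniqueProd (Fin 2) (Fin 1)).symm).trans
        ((Equiv.sumProdDistrib (Fin m) (Fin 1) (Fin 2)).symm.trans
          (Equiv.prodCongr finSumFinEquiv (Equiv.refl (Fin 2))))) with he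
    have he1 : ∀ (k : Fin m) (s : Fin 2), e (Sum.inl (k, s)) = (k.castSucc, s) := by
      intro k s
      simp [he, Equiv.sumProdDistrib]
      rfl
    have he2 : ∀ (s : Fin 2), e (Sum.inr s) = (Fin.last m, s) := by
      intro s
      simp [he, Equiv.sumProdDistrib]
      rfl
    have hsym : ∀ a b, N a b = N b a := by
      intro a b
      conv_lhs => rw [← hN.1]
      simp [conjTranspose_apply]
    set A := N.submatrix (fun p => e (Sum.inl p)) (fun p => e (Sum.inl p)) with hAdef
    set B := N.submatrix (fun p => e (Sum.inl p)) (fun s => e (Sum.inr s)) with hBdef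
    set D := N.submatrix (fun s => e (Sum.inr s)) (fun s => e (Sum.inr s)) with hDdef
    have hblocks : N.submatrix ⇑e ⇑e = fromBlocks A B Bᴴ D := by
      ext i j
      cases i with
      | inl i => cases j with
        | inl j => simp [hAdef]
        | inr j => simp [hBdef]
      | inr i => cases j with
        | inl j => simp [hBdef, conjTranspose_apply]; exact hsym _ _
        | inr j => simp [hDdef]
    have hA : A.PosSemidef := hN.submatrix _
    have hD : D.PosSemidef := hN.submatrix _
    have hstep : N.det ≤ A.det * D.det := by
      have h1 : N.det = (N.submatrix ⇑e ⇑e).det := (Matrix.det_submatrix_equiv_self e N).symm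
      rw [h1, hblocks]
      exact aux_fischer_step (by rw [← hblocks]; exact hN.submatrix ⇑e)
    have hIH := ih A hA
    have hDdet : D.det = N (Fin.last m, 0) (Fin.last m, 0) * N (Fin.last m, 1) (Fin.last m, 1)
        - N (Fin.last m, 0) (Fin.last m, 1) * N (Fin.last m, 1) (Fin.last m, 0) := by
      rw [Matrix.det_fin_two]
      simp [hDdef, he2]
    have hDnn : 0 ≤ D.det := aux_psd_det_nonneg hD
    rw [Fin.prod_univ_castSucc]
    calc N.det ≤ A.det * D.det := hstep
      _ ≤ (∏ k : Fin m, (A (k,0) (k,0) * A (k,1) (k,1) - A (k,0) (k,1) * A (k,1) (k,0))) * D.det :=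
          mul_le_mul_of_nonneg_right hIH hDnn
      _ = _ := by
          rw [hDdet]
          congr 1

end AuxMatrix

lemma aux_walk_support_getElem {V : Type*} {G : SimpleGraph V} {u v : V} (p : G.Walk u v) :
    ∀ (i : ℕ) (h : i < p.support.length), p.support[i] = p.getVert i := by
  induction p with
  | nil =>
    intro i h
    simp only [SimpleGraph.Walk.support_nil, List.length_singleton] at h
    interval_cases i
    simp
  | cons ha q ih =>
    intro i h
    cases i with
    | zero => simp
    | succ i =>
      simp only [SimpleGraph.Walk.support_cons, List.getElem_cons_succ,
        SimpleGraph.Walk.getVert_cons_succ]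
      exact ih i (by simp at h ⊢; omega)

lemma aux_main {V : Type*} [Fintype V] (G : SimpleGraph V) [DecidableRel G.Adj]
    (hreg : G.IsRegularOfDegree 3) (hG : IsPfaffian G) (h4 : No4Cycles G)
    (hham : G.IsHamiltonian) (m t : ℕ) (hn : Fintype.card V = 2 * m)
    (ht : m = 2 * t ∨ m = 2 * t + 1) :
    ((perfmat G : ℝ)) ^ 4 ≤ 8 ^ (2 * t) * (if m = 2 * t then (1:ℝ) else 9) := by
  classical
  obtain ⟨S, hskew, h1, h2, hdetS⟩ := hG
  set n := Fintype.card V with hncard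
  set M := S * Sᵀ with hM
  have hH : Sᴴ = Sᵀ := by ext i j; simp [conjTranspose_apply]
  have hMpsd : M.PosSemidef := by rw [hM, ← hH]; exact posSemidef_self_mul_conjTranspose S
  have hdetM : M.det = ((perfmat G : ℝ)) ^ 4 := by
    rw [hM, det_mul, det_transpose, hdetS]; ring
  have hMapply : ∀ a b, M a b = ∑ w, S a w * S b w := by
    intro a b; simp [hM, mul_apply, transpose_apply]
  have hsymM : ∀ a b, M a b = M b a := by
    intro a b
    rw [hMapply, hMapply]
    exact Finset.sum_congr rfl fun w _ => mul_comm _ _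
  have hdiag : ∀ a, M a a = 3 := by
    intro a
    rw [hMapply]
    have hterm : ∀ w, S a w * S a w = if G.Adj a w then (1:ℝ) else 0 := by
      intro w
      by_cases hadj : G.Adj a w
      · rcases h1 a w hadj with h | h <;> rw [h] <;> norm_num [hadj]
      · rw [h2 a w hadj]; simp [hadj]
    rw [Finset.sum_congr rfl fun w _ => hterm w, Finset.sum_boole]
    have : (Finset.univ.filter (G.Adj a)).card = 3 := by
      rw [← SimpleGraph.neighborFinset_eq_filter]
      exact hreg a
    rw [this]; norm_num
  -- hamiltonian cycle
  have hne1 : Fintype.card V ≠ 1 := by omega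
  obtain ⟨a, p, hp⟩ := hham hne1
  have hlen : p.length = n := hp.length_eq
  have hgvn : p.getVert n = a := by rw [← hlen]; exact p.getVert_length
  have hsuplen : p.support.length = n + 1 := by
    rw [SimpleGraph.Walk.length_support, hlen]
  have htailnd : p.support.tail.Nodup := by
    have hcnt := (SimpleGraph.Walk.isHamiltonianCycle_iff_isCycle_and_support_count_tail_eq_one.mp
      hp).2
    exact List.nodup_iff_count_le_one.mpr (fun x => le_of_eq (hcnt x))
  have htlen : p.support.tail.length = n := by
    rw [List.length_tail, hsuplen]
    omega
  have hget : ∀ (i : ℕ) (h : i < n),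
      p.support.tail[i]'(by rw [htlen]; exact h) = p.getVert (i+1) := by
    intro i h
    rw [List.getElem_tail]
    exact aux_walk_support_getElem p (i+1) (by omega)
  have hinj : ∀ i j, i < n → j < n → p.getVert i = p.getVert j → i = j := by
    intro i j hi hj hij
    have hi' : (if i = 0 then n else i) - 1 < n := by split <;> omega
    have hj' : (if j = 0 then n else j) - 1 < n := by split <;> omega
    have hn0 : 0 < n := by omega
    have e1 : p.getVert ((if i = 0 then n else i) - 1 + 1) = p.getVert i := by
      by_cases h0 : i = 0
      · rw [if_pos h0, Nat.sub_add_cancel hn0, hgvn, h0, SimpleGraph.Walk.getVert_zero]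
      · rw [if_neg h0]; congr 1; omega
    have e2 : p.getVert ((if j = 0 then n else j) - 1 + 1) = p.getVert j := by
      by_cases h0 : j = 0
      · rw [if_pos h0, Nat.sub_add_cancel hn0, hgvn, h0, SimpleGraph.Walk.getVert_zero]
      · rw [if_neg h0]; congr 1; omega
    have hgeq : p.support.tail[(if i = 0 then n else i) - 1]'(by rw [htlen]; exact hi')
        = p.support.tail[(if j = 0 then n else j) - 1]'(by rw [htlen]; exact hj') := by
      rw [hget _ hi', hget _ hj', e1, e2, hij]
    have := (List.Nodup.getElem_inj_iff htailnd).mp hgeq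
    split at this <;> split at this <;> omega
  set g : ℕ → V := fun i => p.getVert i with hg
  have hadj : ∀ i, i < n → G.Adj (g i) (g (i+1)) := by
    intro i h
    exact p.adj_getVert_succ (by rw [hlen]; exact h)
  have hoff : ∀ j, j + 2 < n → (M (g j) (g (j+2))) ^ 2 = 1 := by
    intro j hj
    have hadj1 : G.Adj (g j) (g (j+1)) := hadj j (by omega)
    have hadj2 : G.Adj (g (j+1)) (g (j+2)) := hadj (j+1) (by omega)
    have hMval : M (g j) (g (j+2)) = S (g j) (g (j+1)) * S (g (j+2)) (g (j+1)) := by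
      rw [hMapply]
      apply Finset.sum_eq_single_of_mem (g (j+1)) (Finset.mem_univ _)
      intro w _ hw
      by_cases ha : G.Adj (g j) w
      · by_cases hb : G.Adj (g (j+2)) w
        · exfalso
          refine h4 (g j) (g (j+1)) (g (j+2)) w hadj1.ne ?_ ha.ne hadj2.ne
            (fun hh => hw hh.symm) hb.ne ⟨hadj1, hadj2, hb, ha.symm⟩
          intro hh
          have := hinj j (j+2) (by omega) (by omega) hh
          omega
        · rw [h2 _ _ hb]; ring
      · rw [h2 _ _ ha]; ring
    rw [hMval]
    rcases h1 _ _ hadj1 with hA | hA <;> rcases h1 _ _ hadj2.symm with hB | hB <;>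
      rw [hA, hB] <;> norm_num
  -- the pairing
  set I : Fin m × Fin 2 → ℕ := fun ks =>
    if (ks.1 : ℕ) < 2*t then 4*((ks.1 : ℕ)/2) + (ks.1 : ℕ) % 2 + 2*(ks.2 : ℕ)
    else 2*(ks.1 : ℕ) + (ks.2 : ℕ) with hI
  have hIlt : ∀ ks, I ks < n := by
    rintro ⟨k, s⟩
    have hk := k.isLt
    have hs := s.isLt
    simp only [hI]
    split <;> omega
  set W : Fin m × Fin 2 → V := fun ks => g (I ks) with hW
  have hWinj : Function.Injective W := by
    rintro ⟨k, s⟩ ⟨k', s'⟩ hxy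
    have heq := hinj _ _ (hIlt (k,s)) (hIlt (k',s')) hxy
    have hk := k.isLt
    have hk' := k'.isLt
    have hs := s.isLt
    have hs' := s'.isLt
    simp only [hI] at heq
    have hkk : (k:ℕ) = (k':ℕ) ∧ (s:ℕ) = (s':ℕ) := by
      split at heq <;> split at heq <;> omega
    exact Prod.ext (Fin.ext hkk.1) (Fin.ext hkk.2)
  have hWbij : Function.Bijective W := by
    refine (Fintype.bijective_iff_injective_and_card W).mpr ⟨hWinj, ?_⟩
    simp only [Fintype.card_prod, Fintype.card_fin]
    omega
  set eqv : (Fin m × Fin 2) ≃ V := Equiv.ofBijective W hWbij with heqv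
  set N := M.submatrix ⇑eqv ⇑eqv with hNdef
  have hNpsd : N.PosSemidef := hMpsd.submatrix ⇑eqv
  have hNdet : N.det = M.det := Matrix.det_submatrix_equiv_self eqv M
  have hfp := aux_fischer_pairs m N hNpsd
  have hNMW : ∀ (k : Fin m) (s s' : Fin 2), N (k,s) (k,s') = M (W (k,s)) (W (k,s')) := by
    intro k s s'; rfl
  have hfact : ∀ k : Fin m,
      (N (k,0) (k,0) * N (k,1) (k,1) - N (k,0) (k,1) * N (k,1) (k,0))
        ≤ (if (k:ℕ) < 2*t then (8:ℝ) else 9) := by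
    intro k
    rw [hNMW, hNMW, hNMW, hNMW, hdiag, hdiag, hsymM (W (k,1)) (W (k,0))]
    by_cases hk : (k:ℕ) < 2*t
    · have h0 : W (k,0) = g (4*((k:ℕ)/2) + (k:ℕ) % 2) := by
        simp [hW, hI, hk]
      have h1' : W (k,1) = g (4*((k:ℕ)/2) + (k:ℕ) % 2 + 2) := by
        simp only [hW, hI]
        norm_num [hk]
      have hsq := hoff (4*((k:ℕ)/2) + (k:ℕ) % 2) (by have := k.isLt; omega)
      rw [if_pos hk, h0, h1']
      nlinarith [hsq]
    · rw [if_neg hk]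
      nlinarith [sq_nonneg (M (W (k,0)) (W (k,1)))]
  have hnonneg : ∀ k : Fin m,
      (0:ℝ) ≤ N (k,0) (k,0) * N (k,1) (k,1) - N (k,0) (k,1) * N (k,1) (k,0) := by
    intro k
    have hsub := hNpsd.submatrix (fun s : Fin 2 => ((k, s) : Fin m × Fin 2))
    have hdet2 := aux_psd_det_nonneg hsub
    rwa [Matrix.det_fin_two] at hdet2
  have hprodle : (∏ k : Fin m, (N (k,0) (k,0) * N (k,1) (k,1) - N (k,0) (k,1) * N (k,1) (k,0)))
      ≤ ∏ k : Fin m, (if (k:ℕ) < 2*t then (8:ℝ) else 9) :=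
    Finset.prod_le_prod (fun k _ => hnonneg k) (fun k _ => hfact k)
  have hprodval : (∏ k : Fin m, (if (k:ℕ) < 2*t then (8:ℝ) else 9))
      = 8 ^ (2*t) * (if m = 2*t then (1:ℝ) else 9) := by
    rcases ht with htm | htm
    · rw [if_pos htm]
      rw [Finset.prod_congr rfl (fun k _ => if_pos (by have := k.isLt; omega))]
      rw [Finset.prod_const, Finset.card_univ, Fintype.card_fin, htm, mul_one]
    · rw [if_neg (by omega)]
      subst htm
      rw [Fin.prod_univ_castSucc]
      congr 1
      · rw [Finset.prod_congr rfl (fun k _ => if_pos (by simpa using k.isLt))]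
        rw [Finset.prod_const, Finset.card_univ, Fintype.card_fin]
      · rw [if_neg (by simp)]
  calc ((perfmat G : ℝ)) ^ 4 = M.det := hdetM.symm
    _ = N.det := hNdet.symm
    _ ≤ _ := hfp
    _ ≤ _ := hprodle
    _ = _ := hprodval

/-- Let `G` be a 3-regular pfaffian graph on `n` vertices with no
4-cycles and a Hamiltonian cycle.  If `4 ∣ n` then `perfmat G ≤ 8^{n/8}`; if `n` is even
but not divisible by 4 then `perfmat G ≤ 8^{(n-2)/8} √3`. -/
theorem perfmat_cubic_hamiltonian_bound {V : Type*} [Fintype V] (G : SimpleGraph V)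
    [DecidableRel G.Adj] (hreg : G.IsRegularOfDegree 3) (hG : IsPfaffian G)
    (h4 : No4Cycles G) (hham : G.IsHamiltonian) :
    (4 ∣ Fintype.card V → (perfmat G : ℝ) ≤ 8 ^ ((Fintype.card V : ℝ) / 8)) ∧
      (Even (Fintype.card V) → ¬ 4 ∣ Fintype.card V →
        (perfmat G : ℝ) ≤ 8 ^ (((Fintype.card V : ℝ) - 2) / 8) * Real.sqrt 3) := by
  set n := Fintype.card V with hn
  constructor
  · intro hdvd
    obtain ⟨t, htn⟩ := hdvd
    have hmain := aux_main G hreg hG h4 hham (2*t) t (by omega) (Or.inl rfl)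
    rw [if_pos rfl, mul_one] at hmain
    have hb : (0:ℝ) ≤ (8:ℝ) ^ ((n:ℝ)/8) := Real.rpow_nonneg (by norm_num) _
    refine le_of_pow_le_pow_left₀ (n := 4) (by norm_num) hb ?_
    have h8 : ((8:ℝ) ^ ((n:ℝ)/8)) ^ (4:ℕ) = (8:ℝ) ^ (2*t) := by
      rw [← Real.rpow_natCast ((8:ℝ) ^ ((n:ℝ)/8)) 4, ← Real.rpow_mul (by norm_num)]
      rw [← Real.rpow_natCast (8:ℝ) (2*t)]
      congr 1
      have hnr : (n:ℝ) = 4*t := by exact_mod_cast htn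
      rw [hnr]
      push_cast
      ring
    rw [h8]
    exact hmain
  · intro heven hndvd
    have h2 : n % 4 = 2 := by
      rcases heven with ⟨r, hr⟩
      omega
    set t := n / 4 with htdef
    have hmain := aux_main G hreg hG h4 hham (2*t+1) t (by omega) (Or.inr rfl)
    rw [if_neg (by omega)] at hmain
    have hb : (0:ℝ) ≤ (8:ℝ) ^ (((n:ℝ)-2)/8) * Real.sqrt 3 :=
      mul_nonneg (Real.rpow_nonneg (by norm_num) _) (Real.sqrt_nonneg _)
    refine le_of_pow_le_pow_left₀ (n := 4) (by norm_num) hb ?_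
    have h8 : ((8:ℝ) ^ (((n:ℝ)-2)/8) * Real.sqrt 3) ^ (4:ℕ) = (8:ℝ) ^ (2*t) * 9 := by
      rw [mul_pow]
      have hs : (Real.sqrt 3) ^ (4:ℕ) = 9 := by
        have h3 : (Real.sqrt 3) ^ 2 = 3 := Real.sq_sqrt (by norm_num)
        nlinarith [h3]
      rw [hs]
      congr 1
      rw [← Real.rpow_natCast ((8:ℝ) ^ (((n:ℝ)-2)/8)) 4, ← Real.rpow_mul (by norm_num)]
      rw [← Real.rpow_natCast (8:ℝ) (2*t)]
      congr 1
      have hnr : (n:ℝ) = 4*t + 2 := by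
        have : n = 4*t + 2 := by omega
        exact_mod_cast this
      rw [hnr]
      push_cast
      ring
    rw [h8]
    exact hmain
end

section
/- Let G be a 3-regular finite simple pfaffian graph on n vertices (n even) that has at least one perfect matching and contains no 4-cycles. Then the number of perfect matchings of G is at most 8^{n/12}·3^{n/12}. -/
open scoped Classical
open Matrix

open Finset

lemma key_ineq {x : ℝ} (h0 : 0 ≤ x) (h9 : x ≤ 9) :
    x ≤ 3 * Real.exp ((x - 3)/3 - (x-3)^2/150) := by
  obtain ⟨u, hu_def⟩ : ∃ u : ℝ, u = (x - 3)/3 - (x-3)^2/150 := ⟨_, rfl⟩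
  rw [← hu_def]
  have hu : -2 ≤ u := by rw [hu_def]; nlinarith [sq_nonneg (x-3), sq_nonneg x]
  have h2 : 1 + u/2 ≤ Real.exp (u/2) := by linarith [Real.add_one_le_exp (u/2)]
  have h3 : (0:ℝ) ≤ 1 + u/2 := by linarith
  have h4 : (1 + u/2)^2 ≤ Real.exp (u/2) ^ 2 := pow_le_pow_left₀ h3 h2 2
  have h5 : Real.exp (u/2) ^ 2 = Real.exp u := by
    rw [sq, ← Real.exp_add]; ring_nf
  have h6 : x ≤ 3 * (1 + u/2)^2 := by
    rw [hu_def]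
    nlinarith [sq_nonneg (x-3), mul_nonneg (sq_nonneg (x-3)) (sq_nonneg (53-x)), sq_nonneg ((x-3)*(53-x))]
  nlinarith [h4, h5, h6]

lemma exp_bound : (9:ℝ)/8 ≤ Real.exp (3/25) := by
  have h := Real.add_one_le_exp (3/100 : ℝ)
  have h2 : ((1:ℝ) + 3/100)^4 ≤ Real.exp (3/100)^4 :=
    pow_le_pow_left₀ (by norm_num) (by linarith) 4
  have h3 : Real.exp (3/100)^4 = Real.exp (3/25) := by
    rw [← Real.exp_nat_mul]; norm_num
  nlinarith [h2, h3]
section specvar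
variable {m : Type*} [Fintype m] [DecidableEq m]

lemma trace_eq_sum_eigen {A : Matrix m m ℝ} (hA : A.IsHermitian) :
    A.trace = ∑ i, hA.eigenvalues i := by
  conv_lhs => rw [hA.spectral_theorem, Unitary.conjStarAlgAut_apply]
  rw [Matrix.trace_mul_cycle, (Matrix.mem_unitaryGroup_iff').mp (hA.eigenvectorUnitary).2,
    one_mul, Matrix.trace_diagonal]
  simp

lemma trace_sq_eq_sum_eigen_sq {A : Matrix m m ℝ} (hA : A.IsHermitian) :
    (A * A).trace = ∑ i, (hA.eigenvalues i)^2 := by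
  have h1 : (star (hA.eigenvectorUnitary : Matrix m m ℝ)) * (hA.eigenvectorUnitary : Matrix m m ℝ) = 1 :=
    (Matrix.mem_unitaryGroup_iff').mp (hA.eigenvectorUnitary).2
  conv_lhs => rw [hA.spectral_theorem, Unitary.conjStarAlgAut_apply]
  have h2 : ((hA.eigenvectorUnitary : Matrix m m ℝ) * diagonal (RCLike.ofReal ∘ hA.eigenvalues)
      * (star (hA.eigenvectorUnitary : Matrix m m ℝ))) * ((hA.eigenvectorUnitary : Matrix m m ℝ) * diagonal (RCLike.ofReal ∘ hA.eigenvalues)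
      * (star (hA.eigenvectorUnitary : Matrix m m ℝ)))
      = (hA.eigenvectorUnitary : Matrix m m ℝ) * (diagonal (RCLike.ofReal ∘ hA.eigenvalues) * diagonal (RCLike.ofReal ∘ hA.eigenvalues)) * (star (hA.eigenvectorUnitary : Matrix m m ℝ)) := by
    simp only [Matrix.mul_assoc]
    rw [← Matrix.mul_assoc (star (hA.eigenvectorUnitary : Matrix m m ℝ)) (hA.eigenvectorUnitary : Matrix m m ℝ), h1, Matrix.one_mul]
  rw [h2, Matrix.trace_mul_cycle, h1, one_mul, Matrix.diagonal_mul_diagonal, Matrix.trace_diagonal]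
  simp [sq]
end specvar

section aux
variable {V : Type*} [Fintype V] [DecidableEq V]

lemma common_le_one (G : SimpleGraph V) [DecidableRel G.Adj]
    (h4 : ∀ a b c d : V, a ≠ b → a ≠ c → a ≠ d → b ≠ c → b ≠ d → c ≠ d →
      ¬ (G.Adj a b ∧ G.Adj b c ∧ G.Adj c d ∧ G.Adj d a))
    {u v : V} (huv : u ≠ v) : #(G.neighborFinset u ∩ G.neighborFinset v) ≤ 1 := by
  by_contra h
  push_neg at h
  obtain ⟨w1, hw1, w2, hw2, hne⟩ := Finset.one_lt_card.mp h
  rw [Finset.mem_inter, SimpleGraph.mem_neighborFinset, SimpleGraph.mem_neighborFinset] at hw1 hw2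
  obtain ⟨h1u, h1v⟩ := hw1
  obtain ⟨h2u, h2v⟩ := hw2
  exact h4 u w1 v w2 (G.ne_of_adj h1u) huv (G.ne_of_adj h2u) (G.ne_of_adj h1v).symm hne
    (G.ne_of_adj h2v) ⟨h1u, h1v.symm, h2v, h2u.symm⟩

lemma sum_card_inter (G : SimpleGraph V) [DecidableRel G.Adj]
    (hreg : G.IsRegularOfDegree 3) (u : V) :
    ∑ v, (#(G.neighborFinset u ∩ G.neighborFinset v) : ℝ) = 9 := by
  have h1 : ∀ v : V, (#(G.neighborFinset u ∩ G.neighborFinset v) : ℝ)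
      = ∑ w ∈ G.neighborFinset u, (if w ∈ G.neighborFinset v then (1:ℝ) else 0) := by
    intro v
    rw [Finset.sum_ite_mem, Finset.sum_const]
    simp
  rw [Finset.sum_congr rfl (fun v _ => h1 v), Finset.sum_comm]
  have h2 : ∀ w : V, ∑ v, (if w ∈ G.neighborFinset v then (1:ℝ) else 0) = 3 := by
    intro w
    have h3 : ∀ v : V, (w ∈ G.neighborFinset v) = (v ∈ G.neighborFinset w) := by
      intro v
      simp [SimpleGraph.mem_neighborFinset, SimpleGraph.adj_comm]
    simp_rw [h3]
    rw [Finset.sum_ite_mem, Finset.univ_inter, Finset.sum_const,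
      show #(G.neighborFinset w) = 3 from hreg w]
    norm_num
  rw [Finset.sum_congr rfl (fun w _ => h2 w), Finset.sum_const,
    show #(G.neighborFinset u) = 3 from hreg u]
  norm_num
end aux

section aux2
variable {V : Type*} [Fintype V] [DecidableEq V]

lemma entry_eq (G : SimpleGraph V) [DecidableRel G.Adj] (S : Matrix V V ℝ)
    (hS0 : ∀ u v, ¬ G.Adj u v → S u v = 0) (u v : V) :
    (Sᵀ * S) u v = ∑ w ∈ G.neighborFinset u ∩ G.neighborFinset v, S w u * S w v := by
  rw [Matrix.mul_apply]
  simp only [Matrix.transpose_apply]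
  rw [← Finset.sum_subset (Finset.subset_univ _)]
  intro w _ hw
  rw [Finset.mem_inter] at hw
  rcases not_and_or.mp hw with h | h
  · rw [hS0 w u (fun hadj => h ((SimpleGraph.mem_neighborFinset _ _ _).mpr hadj.symm)), zero_mul]
  · rw [hS0 w v (fun hadj => h ((SimpleGraph.mem_neighborFinset _ _ _).mpr hadj.symm)), mul_zero]

lemma diag_eq (G : SimpleGraph V) [DecidableRel G.Adj] (hreg : G.IsRegularOfDegree 3)
    (S : Matrix V V ℝ)
    (hS1 : ∀ u v, G.Adj u v → S u v = 1 ∨ S u v = -1)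
    (hS0 : ∀ u v, ¬ G.Adj u v → S u v = 0) (u : V) :
    (Sᵀ * S) u u = 3 := by
  rw [entry_eq G S hS0 u u, Finset.inter_self]
  have h1 : ∀ w ∈ G.neighborFinset u, S w u * S w u = (1:ℝ) := by
    intro w hw
    have hadj : G.Adj w u := ((SimpleGraph.mem_neighborFinset _ _ _).mp hw).symm
    rcases hS1 w u hadj with h | h <;> rw [h] <;> norm_num
  rw [Finset.sum_congr rfl h1, Finset.sum_const, show #(G.neighborFinset u) = 3 from hreg u]
  norm_num

lemma offdiag_sq (G : SimpleGraph V) [DecidableRel G.Adj] (S : Matrix V V ℝ)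
    (hS1 : ∀ u v, G.Adj u v → S u v = 1 ∨ S u v = -1)
    (hS0 : ∀ u v, ¬ G.Adj u v → S u v = 0)
    {u v : V} (hc : #(G.neighborFinset u ∩ G.neighborFinset v) ≤ 1) :
    ((Sᵀ * S) u v)^2 = (#(G.neighborFinset u ∩ G.neighborFinset v) : ℝ) := by
  rcases Nat.le_one_iff_eq_zero_or_eq_one.mp hc with h | h
  · rw [entry_eq G S hS0 u v, Finset.card_eq_zero.mp h]
    simp
  · obtain ⟨w, hw⟩ := Finset.card_eq_one.mp h
    have hwmem : w ∈ G.neighborFinset u ∩ G.neighborFinset v := by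
      rw [hw]; exact Finset.mem_singleton_self w
    rw [Finset.mem_inter, SimpleGraph.mem_neighborFinset, SimpleGraph.mem_neighborFinset] at hwmem
    rw [entry_eq G S hS0 u v, hw, Finset.sum_singleton, Finset.card_singleton, mul_pow]
    have e1 : S w u ^ 2 = 1 := by
      rcases hS1 w u hwmem.1.symm with h' | h' <;> rw [h'] <;> norm_num
    have e2 : S w v ^ 2 = 1 := by
      rcases hS1 w v hwmem.2.symm with h' | h' <;> rw [h'] <;> norm_num
    rw [e1, e2]
    norm_num
end aux2

section eig
variable {V : Type*} [Fintype V] [DecidableEq V]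

lemma eigen_le_nine (G : SimpleGraph V) [DecidableRel G.Adj]
    (hreg : G.IsRegularOfDegree 3) (S : Matrix V V ℝ)
    (hS1 : ∀ u v, G.Adj u v → S u v = 1 ∨ S u v = -1)
    (hS0 : ∀ u v, ¬ G.Adj u v → S u v = 0)
    (hA : (Sᵀ * S).IsHermitian) (i : V) : hA.eigenvalues i ≤ 9 := by
  set v : V → ℝ := ⇑(hA.eigenvectorBasis i) with hv_def
  have hnorm1 : ‖hA.eigenvectorBasis i‖ = 1 := hA.eigenvectorBasis.orthonormal.1 i
  have hnorm : ∑ w, (v w)^2 = 1 := by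
    have h := EuclideanSpace.norm_eq (hA.eigenvectorBasis i)
    rw [hnorm1] at h
    have h2 : (1:ℝ)^2 = (√(∑ w, ‖(hA.eigenvectorBasis i) w‖ ^ 2))^2 := by rw [← h]
    rw [Real.sq_sqrt (by positivity)] at h2
    simpa [hv_def, Real.norm_eq_abs, sq_abs] using h2.symm
  have heig : hA.eigenvalues i = ∑ u, ((S *ᵥ v) u)^2 := by
    rw [hA.eigenvalues_eq]
    simp only [← hv_def, star_trivial, RCLike.re_to_real]
    rw [← Matrix.mulVec_mulVec, Matrix.dotProduct_mulVec, Matrix.vecMul_transpose]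
    simp [dotProduct, sq]
  have hterm : ∀ u, ((S *ᵥ v) u)^2 ≤ 3 * ∑ w ∈ G.neighborFinset u, (v w)^2 := by
    intro u
    have hrestrict : (S *ᵥ v) u = ∑ w ∈ G.neighborFinset u, S u w * v w := by
      rw [Matrix.mulVec, dotProduct]
      rw [← Finset.sum_subset (Finset.subset_univ (G.neighborFinset u))]
      intro w _ hw
      rw [hS0 u w (by simpa [SimpleGraph.mem_neighborFinset] using hw), zero_mul]
    rw [hrestrict]
    calc (∑ w ∈ G.neighborFinset u, S u w * v w)^2
        ≤ (∑ w ∈ G.neighborFinset u, (S u w)^2) * ∑ w ∈ G.neighborFinset u, (v w)^2 :=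
          Finset.sum_mul_sq_le_sq_mul_sq _ _ _
      _ ≤ 3 * ∑ w ∈ G.neighborFinset u, (v w)^2 := by
          have h2 : ∀ w ∈ G.neighborFinset u, (S u w)^2 = (1:ℝ) := by
            intro w hw
            rcases hS1 u w ((SimpleGraph.mem_neighborFinset _ _ _).mp hw) with h | h <;>
              rw [h] <;> norm_num
          have : ∑ w ∈ G.neighborFinset u, (S u w)^2 = 3 := by
            rw [Finset.sum_congr rfl h2, Finset.sum_const,
              show #(G.neighborFinset u) = 3 from hreg u]
            norm_num
          rw [this]
  have hswap : ∑ u, ∑ w ∈ G.neighborFinset u, (v w)^2 = 3 := by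
    have : ∀ u, ∑ w ∈ G.neighborFinset u, (v w)^2
        = ∑ w, if w ∈ G.neighborFinset u then (v w)^2 else 0 := by
      intro u; rw [Finset.sum_ite_mem, Finset.univ_inter]
    rw [Finset.sum_congr rfl (fun u _ => this u), Finset.sum_comm]
    have : ∀ w, ∑ u, (if w ∈ G.neighborFinset u then (v w)^2 else 0) = 3 * (v w)^2 := by
      intro w
      have h1 : ∀ u, w ∈ G.neighborFinset u ↔ u ∈ G.neighborFinset w := by
        intro u; simp [SimpleGraph.mem_neighborFinset, SimpleGraph.adj_comm]
      rw [Finset.sum_congr rfl (fun u _ => by rw [if_congr (h1 u) rfl rfl])]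
      rw [Finset.sum_ite_mem, Finset.univ_inter, Finset.sum_const,
        show #(G.neighborFinset w) = 3 from hreg w]
      simp [mul_comm]
    rw [Finset.sum_congr rfl (fun w _ => this w), ← Finset.mul_sum, hnorm, mul_one]
  calc hA.eigenvalues i = ∑ u, ((S *ᵥ v) u)^2 := heig
    _ ≤ ∑ u, 3 * ∑ w ∈ G.neighborFinset u, (v w)^2 := Finset.sum_le_sum (fun u _ => hterm u)
    _ = 3 * ∑ u, ∑ w ∈ G.neighborFinset u, (v w)^2 := by rw [Finset.mul_sum]
    _ = 9 := by rw [hswap]; norm_num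
end eig

/-- A 3-regular pfaffian graph on an even number `n` of vertices which
has a perfect matching and contains no 4-cycles has at most `8^{n/12} 3^{n/12}` perfect
matchings. -/
theorem perfmat_cubic_no4cycle_bound {V : Type*} [Fintype V] (G : SimpleGraph V)
    [DecidableRel G.Adj] (hV : Even (Fintype.card V))
    (hreg : G.IsRegularOfDegree 3) (hG : IsPfaffian G)
    (hpm : ∃ M : Finset (Sym2 V), IsPerfMatching G M) (h4 : No4Cycles G) :
    (perfmat G : ℝ) ≤
      8 ^ ((Fintype.card V : ℝ) / 12) * 3 ^ ((Fintype.card V : ℝ) / 12) := by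
  letI : DecidableEq V := Classical.decEq V
  obtain ⟨S, hskew, hS1, hS0, hdet⟩ := hG
  set N : ℝ := (Fintype.card V : ℝ) with hN
  have hherm : Sᴴ = Sᵀ := by
    ext a b
    simp [Matrix.conjTranspose_apply]
  have hA : (Sᵀ * S).IsHermitian := by
    have h := Matrix.isHermitian_conjTranspose_mul_self S
    rwa [hherm] at h
  have hpsd : (Sᵀ * S).PosSemidef := by
    have h := Matrix.posSemidef_conjTranspose_mul_self S
    rwa [hherm] at h
  have hsymm : ∀ u v : V, (Sᵀ * S) v u = (Sᵀ * S) u v := by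
    intro u v
    conv_lhs => rw [← hA]
    simp [Matrix.conjTranspose_apply]
  have htrace : (Sᵀ * S).trace = 3 * N := by
    have h : ∀ u : V, (Sᵀ * S).diag u = 3 := fun u => diag_eq G hreg S hS1 hS0 u
    rw [Matrix.trace, Finset.sum_congr rfl (fun u _ => h u), Finset.sum_const]
    simp [hN, mul_comm]
  have hsum_off : ∑ u : V, ∑ v ∈ Finset.univ.erase u, ((Sᵀ * S) u v)^2 = 6 * N := by
    have h1 : ∀ u : V, ∑ v ∈ Finset.univ.erase u, ((Sᵀ * S) u v)^2 = 6 := by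
      intro u
      have h2 : ∀ v ∈ Finset.univ.erase u, ((Sᵀ * S) u v)^2
          = (#(G.neighborFinset u ∩ G.neighborFinset v) : ℝ) := by
        intro v hv
        exact offdiag_sq G S hS1 hS0 (common_le_one G h4 (Finset.ne_of_mem_erase hv).symm)
      rw [Finset.sum_congr rfl h2, Finset.sum_erase_eq_sub (Finset.mem_univ u),
        sum_card_inter G hreg u, Finset.inter_self,
        show #(G.neighborFinset u) = 3 from hreg u]
      norm_num
    rw [Finset.sum_congr rfl (fun u _ => h1 u), Finset.sum_const]
    simp [hN, mul_comm]
  have htrace2 : ((Sᵀ * S) * (Sᵀ * S)).trace = 15 * N := by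
    have h0 : ∀ u : V, ((Sᵀ * S) * (Sᵀ * S)).diag u = ∑ v, ((Sᵀ * S) u v)^2 := by
      intro u
      rw [Matrix.diag_apply, Matrix.mul_apply]
      exact Finset.sum_congr rfl fun v _ => by rw [hsymm u v]; ring
    rw [Matrix.trace, Finset.sum_congr rfl (fun u _ => h0 u)]
    have h1 : ∀ u : V, ∑ v, ((Sᵀ * S) u v)^2
        = 9 + ∑ v ∈ Finset.univ.erase u, ((Sᵀ * S) u v)^2 := by
      intro u
      rw [← Finset.add_sum_erase _ _ (Finset.mem_univ u), diag_eq G hreg S hS1 hS0 u]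
      norm_num
    rw [Finset.sum_congr rfl (fun u _ => h1 u), Finset.sum_add_distrib, hsum_off,
      Finset.sum_const]
    simp only [nsmul_eq_mul, Finset.card_univ, ← hN]
    ring
  have hx0 : ∀ i : V, 0 ≤ hA.eigenvalues i := fun i => hpsd.eigenvalues_nonneg i
  have hx9 : ∀ i : V, hA.eigenvalues i ≤ 9 := fun i => eigen_le_nine G hreg S hS1 hS0 hA i
  have hsum : ∑ i, hA.eigenvalues i = 3 * N := by rw [← trace_eq_sum_eigen hA, htrace]
  have hsum2 : ∑ i, (hA.eigenvalues i)^2 = 15 * N := by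
    rw [← trace_sq_eq_sum_eigen_sq hA, htrace2]
  have hprod : (perfmat G : ℝ)^4 = ∏ i, hA.eigenvalues i := by
    have h := hA.det_eq_prod_eigenvalues
    have h2 : (Sᵀ * S).det = (perfmat G : ℝ)^4 := by
      rw [Matrix.det_mul, Matrix.det_transpose, hdet]; ring
    rw [h2] at h
    simpa using h
  have hbound : (perfmat G : ℝ)^4 ≤ (3:ℝ)^(Fintype.card V) * Real.exp (-N/25) := by
    have step1 : ∏ i, hA.eigenvalues i
        ≤ ∏ i : V, (3 * Real.exp ((hA.eigenvalues i - 3)/3 - (hA.eigenvalues i - 3)^2/150)) :=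
      Finset.prod_le_prod (fun i _ => hx0 i) (fun i _ => key_ineq (hx0 i) (hx9 i))
    have step2 : ∏ i : V, (3 * Real.exp ((hA.eigenvalues i - 3)/3 - (hA.eigenvalues i - 3)^2/150))
        = (3:ℝ)^(Fintype.card V)
          * Real.exp (∑ i, ((hA.eigenvalues i - 3)/3 - (hA.eigenvalues i - 3)^2/150)) := by
      rw [Finset.prod_mul_distrib, Finset.prod_const, Real.exp_sum, Finset.card_univ]
    have step3 : ∑ i, ((hA.eigenvalues i - 3)/3 - (hA.eigenvalues i - 3)^2/150) = -N/25 := by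
      have e1 : ∀ i : V, (hA.eigenvalues i - 3)/3 - (hA.eigenvalues i - 3)^2/150
          = (1/3 + 1/25) * hA.eigenvalues i - (1/150) * (hA.eigenvalues i)^2 - (1 + 9/150) := by
        intro i; ring
      rw [Finset.sum_congr rfl (fun i _ => e1 i), Finset.sum_sub_distrib, Finset.sum_sub_distrib,
        ← Finset.mul_sum, ← Finset.mul_sum, hsum, hsum2, Finset.sum_const, Finset.card_univ]
      simp only [nsmul_eq_mul, ← hN]
      ring
    rw [step2, step3] at step1
    rw [hprod]
    exact step1
  have hrpow : (3:ℝ)^(Fintype.card V) * Real.exp (-N/25) ≤ (24:ℝ) ^ (N/3) := by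
    rw [Real.rpow_def_of_pos (by norm_num : (0:ℝ) < 24)]
    have h3 : (3:ℝ)^(Fintype.card V) = Real.exp (N * Real.log 3) := by
      rw [← Real.exp_log (show (0:ℝ) < 3^(Fintype.card V) by positivity), Real.log_pow, hN]
    rw [h3, ← Real.exp_add]
    apply Real.exp_le_exp.mpr
    have hlog : Real.log 3 - 1/25 ≤ Real.log 24 / 3 := by
      have h27 : Real.log 27 = 3 * Real.log 3 := by
        rw [show (27:ℝ) = 3^(3:ℕ) by norm_num, Real.log_pow]
        push_cast; ring
      have hre : Real.log 27 - Real.log 24 = Real.log (27/24) :=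
        (Real.log_div (by norm_num) (by norm_num)).symm
      have hb : Real.log (27/24) ≤ 3/25 := by
        rw [show (27:ℝ)/24 = 9/8 by norm_num]
        calc Real.log (9/8) ≤ Real.log (Real.exp (3/25)) :=
              Real.log_le_log (by norm_num) exp_bound
          _ = 3/25 := Real.log_exp _
      linarith
    have hn : (0:ℝ) ≤ N := by rw [hN]; positivity
    calc N * Real.log 3 + -N/25 = N * (Real.log 3 - 1/25) := by ring
      _ ≤ N * (Real.log 24 / 3) := mul_le_mul_of_nonneg_left hlog hn
      _ = Real.log 24 * (N/3) := by ring
  have h24 : (perfmat G : ℝ) ≤ (24:ℝ) ^ (N/12) := by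
    have hq0 : (0:ℝ) ≤ (24:ℝ) ^ (N/12) := Real.rpow_nonneg (by norm_num) _
    have hpow4 : ((24:ℝ) ^ (N/12))^(4:ℕ) = (24:ℝ) ^ (N/3) := by
      rw [← Real.rpow_natCast ((24:ℝ) ^ (N/12)) 4, ← Real.rpow_mul (by norm_num)]
      congr 1
      ring
    refine le_of_pow_le_pow_left₀ (by norm_num : (4:ℕ) ≠ 0) hq0 ?_
    rw [hpow4]
    exact le_trans hbound hrpow
  have hfinal : (8:ℝ) ^ (N/12) * (3:ℝ) ^ (N/12) = (24:ℝ) ^ (N/12) := by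
    rw [← Real.mul_rpow (by norm_num) (by norm_num)]
    norm_num
  rw [hfinal]
  exact h24
end

section
/- Let n ≥ 3 and set φ = (1+√5)/2 and ψ = (1-√5)/2. If n is odd, then det(I_n - T_{n,+}²) = det(I_n - T_{n,-}²) = (φⁿ + ψⁿ)². If n is even, then det(I_n - T_{n,+}²) = (φⁿ + ψⁿ + 2)² and det(I_n - T_{n,-}²) = (φⁿ + ψⁿ - 2)². -/
open Matrix

/-- The `n × n` real skew-symmetric matrix whose `(i, i+1)` entry is `1` and `(i+1, i)`
entry is `-1` for `1 ≤ i ≤ n-1` (here indexed from `0`), whose `(1, n)` entry is `ε` and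
`(n, 1)` entry is `-ε`, and all of whose other entries are `0`.  `T_{n,+}` and `T_{n,-}`
are obtained for `ε = 1` and `ε = -1` respectively. -/
def Tpm (n : ℕ) (ε : ℝ) : Matrix (Fin n) (Fin n) ℝ :=
  Matrix.of fun i j =>
    if (i : ℕ) + 1 = (j : ℕ) then 1
    else if (j : ℕ) + 1 = (i : ℕ) then -1
    else if (i : ℕ) = 0 ∧ (j : ℕ) = n - 1 then ε
    else if (j : ℕ) = 0 ∧ (i : ℕ) = n - 1 then -ε
    else 0

/-- The matrix `T_{n,+}`. -/
def Tplus (n : ℕ) : Matrix (Fin n) (Fin n) ℝ := Tpm n 1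

/-- The matrix `T_{n,-}`. -/
def Tminus (n : ℕ) : Matrix (Fin n) (Fin n) ℝ := Tpm n (-1)

/-- successor index with wraparound -/
def nextIdx {n : ℕ} (i : Fin n) : Fin n := ⟨((i : ℕ) + 1) % n, Nat.mod_lt _ i.pos⟩

/-- signed cyclic shift matrix -/
def Cmat (n : ℕ) (δ : ℝ) : Matrix (Fin n) (Fin n) ℝ :=
  Matrix.of fun i k => (if (i : ℕ) = n - 1 then δ else 1) * (if k = nextIdx i then 1 else 0)

lemma nextIdx_val {n : ℕ} (a : Fin n) :
    (nextIdx a : ℕ) = if (a : ℕ) = n - 1 then 0 else (a : ℕ) + 1 := by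
  show ((a : ℕ) + 1) % n = _
  by_cases ha : (a : ℕ) = n - 1
  · have h1 : (a : ℕ) + 1 = n := by have := a.isLt; omega
    rw [if_pos ha, h1, Nat.mod_self]
  · rw [if_neg ha, Nat.mod_eq_of_lt (by have := a.isLt; omega)]

lemma nextIdx_injective {n : ℕ} : Function.Injective (nextIdx (n := n)) := by
  intro i j h
  have hi := i.isLt; have hj := j.isLt
  have h' := congrArg Fin.val h
  rw [nextIdx_val, nextIdx_val] at h'
  apply Fin.ext
  split_ifs at h' <;> omega

lemma Cmat_mul_transpose (n : ℕ) (δ : ℝ) (hδ : δ * δ = 1) :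
    Cmat n δ * (Cmat n δ)ᵀ = 1 := by
  ext i j
  simp only [Matrix.mul_apply, Cmat, Matrix.transpose_apply, Matrix.of_apply,
    mul_ite, mul_one, mul_zero, ite_mul, zero_mul, Finset.sum_ite_eq',
    Finset.mem_univ, if_true, Matrix.one_apply]
  by_cases hij : i = j
  · subst hij
    simp only [if_pos rfl]
    by_cases h1 : (i : ℕ) = n - 1 <;> simp [h1, hδ]
  · have hne : nextIdx j ≠ nextIdx i := fun h => hij (nextIdx_injective h).symm
    simp [hne, hij]

lemma det_smul_one_sub_Cmat {m : ℕ} (hm : 1 ≤ m) (x δ : ℝ) :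
    (x • (1 : Matrix (Fin (m+1)) (Fin (m+1)) ℝ) - Cmat (m+1) δ).det = x ^ (m+1) - δ := by
  set A := x • (1 : Matrix (Fin (m+1)) (Fin (m+1)) ℝ) - Cmat (m+1) δ with hA
  have hAapp : ∀ i j : Fin (m+1), A i j =
      (if i = j then x else 0) -
        (if (i : ℕ) = m then δ else 1) * (if j = nextIdx i then 1 else 0) := by
    intro i j
    simp [hA, Cmat, Matrix.one_apply, mul_ite]
  rw [Matrix.det_succ_column_zero]
  have hlast0 : (Fin.last m) ≠ (0 : Fin (m+1)) := by
    intro h; have := congrArg Fin.val h; simp at this; omega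
  rw [← Finset.sum_subset (s₁ := {(0 : Fin (m+1)), Fin.last m}) (Finset.subset_univ _)]
  · rw [Finset.sum_pair (Ne.symm hlast0)]
    have hnv : ((nextIdx (0 : Fin (m+1))) : ℕ) = 1 := by
      rw [nextIdx_val, Fin.val_zero, if_neg (by omega)]
    have hA00 : A 0 0 = x := by
      have h0 : (0 : Fin (m+1)) ≠ nextIdx 0 := by
        intro h; rw [← h, Fin.val_zero] at hnv; omega
      rw [hAapp, if_pos rfl, if_neg h0]; ring
    have h1 : (0 : Fin (m+1)) = nextIdx (Fin.last m) := by
      apply Fin.ext; rw [nextIdx_val]; simp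
    have hAl0 : A (Fin.last m) 0 = -δ := by
      rw [hAapp, if_neg hlast0, if_pos h1,
        if_pos (show ((Fin.last m : Fin (m+1)) : ℕ) = m from rfl)]
      ring
    -- minor at 0
    have hM0 : (A.submatrix (Fin.succAbove 0) Fin.succ).det = x ^ m := by
      rw [Fin.succAbove_zero]
      have htri : (A.submatrix Fin.succ Fin.succ).BlockTriangular id := by
        intro i j hij
        have hij' : (j : ℕ) < (i : ℕ) := hij
        simp only [Matrix.submatrix_apply, id] at hij ⊢
        have h1 : i.succ ≠ j.succ := fun h => by
          have := Fin.succ_injective _ h; subst this; exact lt_irrefl _ hij'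
        have h2 : j.succ ≠ nextIdx i.succ := by
          intro h; have h' := congrArg Fin.val h
          rw [nextIdx_val] at h'
          have hi := i.isLt; have hj := j.isLt
          have hsi : ((i.succ : Fin (m+1)) : ℕ) = (i : ℕ) + 1 := rfl
          have hsj : ((j.succ : Fin (m+1)) : ℕ) = (j : ℕ) + 1 := rfl
          rw [hsi, hsj] at h'
          split_ifs at h' <;> omega
        rw [hAapp, if_neg h1, if_neg h2]; ring
      rw [Matrix.det_of_upperTriangular htri]
      have hdiag : ∀ i : Fin m, (A.submatrix Fin.succ Fin.succ) i i = x := by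
        intro i
        simp only [Matrix.submatrix_apply]
        have h2 : i.succ ≠ nextIdx i.succ := by
          intro h; have h' := congrArg Fin.val h
          rw [nextIdx_val] at h'
          have hi := i.isLt
          have hsi : ((i.succ : Fin (m+1)) : ℕ) = (i : ℕ) + 1 := rfl
          rw [hsi] at h'
          split_ifs at h' <;> omega
        rw [hAapp, if_pos rfl, if_neg h2]; ring
      rw [Finset.prod_congr rfl (fun i _ => hdiag i), Finset.prod_const,
        Finset.card_univ, Fintype.card_fin]
    -- minor at last
    have hMl : (A.submatrix (Fin.last m).succAbove Fin.succ).det = (-1) ^ m := by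
      rw [Fin.succAbove_last]
      have htri : (A.submatrix Fin.castSucc Fin.succ).BlockTriangular OrderDual.toDual := by
        intro i j hij
        have hij' : (i : ℕ) < (j : ℕ) := hij
        simp only [Matrix.submatrix_apply]
        have hci : ((i.castSucc : Fin (m+1)) : ℕ) = (i : ℕ) := rfl
        have hsj : ((j.succ : Fin (m+1)) : ℕ) = (j : ℕ) + 1 := rfl
        have h1 : i.castSucc ≠ j.succ := by
          intro h; have := congrArg Fin.val h; rw [hci, hsj] at this; omega
        have h2 : j.succ ≠ nextIdx i.castSucc := by
          intro h; have h' := congrArg Fin.val h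
          rw [nextIdx_val, hci, hsj] at h'
          have hi := i.isLt
          split_ifs at h' <;> omega
        rw [hAapp, if_neg h1, if_neg h2]; ring
      rw [Matrix.det_of_lowerTriangular _ htri]
      have hdiag : ∀ i : Fin m, (A.submatrix Fin.castSucc Fin.succ) i i = -1 := by
        intro i
        simp only [Matrix.submatrix_apply]
        have hi := i.isLt
        have hci : ((i.castSucc : Fin (m+1)) : ℕ) = (i : ℕ) := rfl
        have hsi : ((i.succ : Fin (m+1)) : ℕ) = (i : ℕ) + 1 := rfl
        have h1 : i.castSucc ≠ i.succ := by
          intro h; have := congrArg Fin.val h; rw [hci, hsi] at this; omega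
        have h2 : i.succ = nextIdx i.castSucc := by
          apply Fin.ext; rw [nextIdx_val, hci, if_neg (by omega), hsi]
        have h3 : ((i.castSucc : Fin (m+1)) : ℕ) ≠ m := by rw [hci]; omega
        rw [hAapp, if_neg h1, if_pos h2, if_neg h3]; ring
      rw [Finset.prod_congr rfl (fun i _ => hdiag i), Finset.prod_const,
        Finset.card_univ, Fintype.card_fin]
    rw [hA00, hAl0, hM0, hMl,
      show ((Fin.last m : Fin (m+1)) : ℕ) = m from rfl, Fin.val_zero, pow_zero]
    have hneg : ((-1 : ℝ)) ^ m * (-δ) * (-1) ^ m = -δ := by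
      rw [mul_comm (((-1 : ℝ)) ^ m * (-δ)), ← mul_assoc, ← pow_add,
        Even.neg_one_pow ⟨m, rfl⟩]
      ring
    rw [hneg]; ring
  · intro i _ hi
    simp only [Finset.mem_insert, Finset.mem_singleton, not_or] at hi
    have hAi0 : A i 0 = 0 := by
      have h2 : (0 : Fin (m+1)) ≠ nextIdx i := by
        intro h; have h' := congrArg Fin.val h
        rw [nextIdx_val, Fin.val_zero] at h'
        have hiv := i.isLt
        have : (i : ℕ) = m := by split_ifs at h' <;> omega
        exact hi.2 (Fin.ext this)
      rw [hAapp, if_neg hi.1, if_neg h2]; ring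
    rw [hAi0]; ring


lemma Tpm_eq_Cmat_sub (n : ℕ) (hn : 3 ≤ n) (ε : ℝ) :
    Tpm n ε = Cmat n (-ε) - (Cmat n (-ε))ᵀ := by
  ext i j
  have hi := i.isLt; have hj := j.isLt
  simp only [Tpm, Cmat, Matrix.sub_apply, Matrix.transpose_apply, Matrix.of_apply]
  have hni : ((nextIdx i : Fin n) : ℕ) = if (i : ℕ) = n - 1 then 0 else (i : ℕ) + 1 :=
    nextIdx_val i
  have hnj : ((nextIdx j : Fin n) : ℕ) = if (j : ℕ) = n - 1 then 0 else (j : ℕ) + 1 :=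
    nextIdx_val j
  have e1 : (j = nextIdx i) ↔ ((j : ℕ) = if (i : ℕ) = n - 1 then 0 else (i : ℕ) + 1) := by
    rw [Fin.ext_iff, hni]
  have e2 : (i = nextIdx j) ↔ ((i : ℕ) = if (j : ℕ) = n - 1 then 0 else (j : ℕ) + 1) := by
    rw [Fin.ext_iff, hnj]
  simp only [e1, e2]
  by_cases hi1 : (i : ℕ) = n - 1 <;> by_cases hj1 : (j : ℕ) = n - 1 <;>
    (try simp only [hi1, hj1, if_true, if_false, eq_self_iff_true, if_pos, reduceIte, and_true, true_and, and_false, false_and, not_false_iff, not_true, if_false])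
  all_goals try split_ifs
  all_goals first | rfl | ring1 | omega | (exfalso; omega)

lemma det_one_sub_Tpm_sq (n : ℕ) (hn : 3 ≤ n) (ε : ℝ) (hε : ε * ε = 1)
    (a b : ℝ) (hab3 : a + b = 3) (hab1 : a * b = 1)
    (p q : ℝ) (hp : p * p = a) (hq : q * q = b) :
    ((1 : Matrix (Fin n) (Fin n) ℝ) - Tpm n ε ^ 2).det =
      (-1) ^ n * ((p ^ n + ε) * ((-p) ^ n + ε) * ((q ^ n + ε) * ((-q) ^ n + ε))) := by
  obtain ⟨m, rfl⟩ : ∃ m, n = m + 1 := ⟨n - 1, by omega⟩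
  have hm : 1 ≤ m := by omega
  set N := m + 1 with hN
  set C := Cmat N (-ε) with hCdef
  have hδ : (-ε) * (-ε) = 1 := by rw [neg_mul_neg, hε]
  have hC : C * Cᵀ = 1 := Cmat_mul_transpose N (-ε) hδ
  have hC' : Cᵀ * C = 1 := mul_eq_one_comm.mp hC
  have hT : Tpm N ε = C - Cᵀ := Tpm_eq_Cmat_sub N hn ε
  -- determinant of x•1 - C and of x•1 + C
  have hdf : ∀ x : ℝ, (x • (1 : Matrix (Fin N) (Fin N) ℝ) - C).det = x ^ N + ε := by
    intro x
    rw [hCdef, hN, det_smul_one_sub_Cmat hm x (-ε)]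
    ring
  have hdp : ∀ x : ℝ, (x • (1 : Matrix (Fin N) (Fin N) ℝ) + C).det
      = (-1) ^ N * ((-x) ^ N + ε) := by
    intro x
    have h1 : x • (1 : Matrix (Fin N) (Fin N) ℝ) + C
        = (-1 : ℝ) • ((-x) • (1 : Matrix (Fin N) (Fin N) ℝ) - C) := by
      module
    rw [h1, Matrix.det_smul, Fintype.card_fin, hdf]
  -- the key algebraic identity
  have e1 : (C - Cᵀ) ^ 2 = C * C - 1 - 1 + Cᵀ * Cᵀ := by
    rw [sq, sub_mul, mul_sub, mul_sub, hC, hC']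
    abel
  have e2 : Cᵀ * Cᵀ * (C * C) = 1 := by
    rw [mul_assoc, ← mul_assoc Cᵀ C C, hC', one_mul, hC']
  have key : ((1 : Matrix (Fin N) (Fin N) ℝ) - Tpm N ε ^ 2) * (C * C)
      = (a • 1 - C * C) * (C * C - b • 1) := by
    rw [hT, e1]
    simp only [sub_mul, add_mul, mul_sub, one_mul, mul_one, smul_mul_assoc,
      mul_smul_comm, smul_smul]
    rw [e2]
    match_scalars <;> linarith [hab1, hab3]
  -- factorizations of the quadratics
  have f1 : (p • (1 : Matrix (Fin N) (Fin N) ℝ) - C) * (p • 1 + C) = a • 1 - C * C := by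
    simp only [mul_add, add_mul, sub_mul, mul_sub, smul_mul_assoc, mul_smul_comm,
      one_mul, mul_one, smul_smul]
    match_scalars <;> linarith [hp]
  -- assembling
  have hdetC : C.det * C.det = 1 := by
    have h1 : (C * Cᵀ).det = 1 := by rw [hC, Matrix.det_one]
    rwa [Matrix.det_mul, Matrix.det_transpose] at h1
  have hmain : ((1 : Matrix (Fin N) (Fin N) ℝ) - Tpm N ε ^ 2).det
      = (a • (1 : Matrix (Fin N) (Fin N) ℝ) - C * C).det * (C * C - b • 1).det := by
    calc ((1 : Matrix (Fin N) (Fin N) ℝ) - Tpm N ε ^ 2).det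
        = ((1 : Matrix (Fin N) (Fin N) ℝ) - Tpm N ε ^ 2).det * (C.det * C.det) := by
          rw [hdetC, mul_one]
      _ = (((1 : Matrix (Fin N) (Fin N) ℝ) - Tpm N ε ^ 2) * (C * C)).det := by
          rw [Matrix.det_mul, Matrix.det_mul]
      _ = ((a • (1 : Matrix (Fin N) (Fin N) ℝ) - C * C) * (C * C - b • 1)).det := by rw [key]
      _ = _ := Matrix.det_mul _ _
  have hd1 : (a • (1 : Matrix (Fin N) (Fin N) ℝ) - C * C).det
      = (p ^ N + ε) * ((-1) ^ N * ((-p) ^ N + ε)) := by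
    rw [← f1, Matrix.det_mul, hdf, hdp]
  have hd2 : (C * C - b • (1 : Matrix (Fin N) (Fin N) ℝ)).det
      = (-1) ^ N * ((q ^ N + ε) * ((-1) ^ N * ((-q) ^ N + ε))) := by
    have h1 : C * C - b • (1 : Matrix (Fin N) (Fin N) ℝ)
        = (-1 : ℝ) • ((b • 1 - C * C)) := by
      module
    have f2' : (q • (1 : Matrix (Fin N) (Fin N) ℝ) - C) * (q • 1 + C) = b • 1 - C * C := by
      simp only [mul_add, add_mul, sub_mul, mul_sub, smul_mul_assoc, mul_smul_comm,
        one_mul, mul_one, smul_smul]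
      match_scalars <;> linarith [hq]
    rw [h1, Matrix.det_smul, Fintype.card_fin, ← f2', Matrix.det_mul, hdf, hdp]
  rw [hmain, hd1, hd2]
  have hsq : ((-1 : ℝ)) ^ N * (-1) ^ N = 1 := by
    rw [← pow_add, Even.neg_one_pow ⟨N, rfl⟩]
  calc (p ^ N + ε) * ((-1 : ℝ) ^ N * ((-p) ^ N + ε)) *
        ((-1) ^ N * ((q ^ N + ε) * ((-1) ^ N * ((-q) ^ N + ε))))
      = ((-1) ^ N * (-1) ^ N) * ((-1) ^ N *
          ((p ^ N + ε) * ((-p) ^ N + ε) * ((q ^ N + ε) * ((-q) ^ N + ε)))) := by ring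
    _ = _ := by rw [hsq, one_mul]

/-- Let `n ≥ 3`, `φ = (1+√5)/2` and `ψ = (1-√5)/2`.  If `n` is odd
then `det(I - T_{n,+}²) = det(I - T_{n,-}²) = (φⁿ + ψⁿ)²`; if `n` is even then
`det(I - T_{n,+}²) = (φⁿ + ψⁿ + 2)²` and `det(I - T_{n,-}²) = (φⁿ + ψⁿ - 2)²`. -/
theorem det_one_sub_T_sq (n : ℕ) (hn : 3 ≤ n) :
    (Odd n →
      ((1 : Matrix (Fin n) (Fin n) ℝ) - Tplus n ^ 2).det =
          (((1 + Real.sqrt 5) / 2) ^ n + ((1 - Real.sqrt 5) / 2) ^ n) ^ 2 ∧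
        ((1 : Matrix (Fin n) (Fin n) ℝ) - Tminus n ^ 2).det =
          (((1 + Real.sqrt 5) / 2) ^ n + ((1 - Real.sqrt 5) / 2) ^ n) ^ 2) ∧
    (Even n →
      ((1 : Matrix (Fin n) (Fin n) ℝ) - Tplus n ^ 2).det =
          (((1 + Real.sqrt 5) / 2) ^ n + ((1 - Real.sqrt 5) / 2) ^ n + 2) ^ 2 ∧
        ((1 : Matrix (Fin n) (Fin n) ℝ) - Tminus n ^ 2).det =
          (((1 + Real.sqrt 5) / 2) ^ n + ((1 - Real.sqrt 5) / 2) ^ n - 2) ^ 2) := by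
  have hs : Real.sqrt 5 ^ 2 = 5 := Real.sq_sqrt (by norm_num)
  set u : ℝ := (1 + Real.sqrt 5) / 2 with hu
  set v : ℝ := (1 - Real.sqrt 5) / 2 with hv
  have h3 : u * u + v * v = 3 := by rw [hu, hv]; linear_combination hs / 2
  have h1' : (u * u) * (v * v) = 1 := by
    rw [hu, hv]; linear_combination ((Real.sqrt 5 ^ 2 + 3) / 16) * hs
  have huv : u * v = -1 := by rw [hu, hv]; linear_combination (-(1/4 : ℝ)) * hs
  have key : ∀ ε : ℝ, ε * ε = 1 →
      ((1 : Matrix (Fin n) (Fin n) ℝ) - Tpm n ε ^ 2).det =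
        (-1) ^ n * ((u ^ n + ε) * ((-u) ^ n + ε) * ((v ^ n + ε) * ((-v) ^ n + ε))) :=
    fun ε hε => det_one_sub_Tpm_sq n hn ε hε (u * u) (v * v) h3 h1' u v rfl rfl
  constructor
  · intro hodd
    have hno : ((-1 : ℝ)) ^ n = -1 := Odd.neg_one_pow hodd
    have hAB : u ^ n * v ^ n = -1 := by rw [← mul_pow, huv]; exact Odd.neg_one_pow hodd
    have hnu : (-u) ^ n = -(u ^ n) := Odd.neg_pow hodd u
    have hnv : (-v) ^ n = -(v ^ n) := Odd.neg_pow hodd v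
    constructor
    · rw [show Tplus n = Tpm n 1 from rfl, key 1 (by norm_num), hno, hnu, hnv]
      linear_combination (-(u ^ n * v ^ n + 1)) * hAB
    · rw [show Tminus n = Tpm n (-1) from rfl, key (-1) (by norm_num), hno, hnu, hnv]
      linear_combination (-(u ^ n * v ^ n + 1)) * hAB
  · intro heven
    have hne : ((-1 : ℝ)) ^ n = 1 := Even.neg_one_pow heven
    have hAB : u ^ n * v ^ n = 1 := by rw [← mul_pow, huv]; exact Even.neg_one_pow heven
    have hnu : (-u) ^ n = u ^ n := Even.neg_pow heven u
    have hnv : (-v) ^ n = v ^ n := Even.neg_pow heven v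
    constructor
    · rw [show Tplus n = Tpm n 1 from rfl, key 1 (by norm_num), hne, hnu, hnv]
      linear_combination (u ^ n * v ^ n + 2 * u ^ n + 2 * v ^ n + 3) * hAB
    · rw [show Tminus n = Tpm n (-1) from rfl, key (-1) (by norm_num), hne, hnu, hnv]
      linear_combination (u ^ n * v ^ n - 2 * u ^ n - 2 * v ^ n + 3) * hAB
end

section
/- For n ≥ 3 let φ(j, C_n) denote the number of matchings of the cycle graph C_n consisting of exactly j edges (with φ(0, C_n) = 1), and let M(t) = ∑_{j=0}^{⌊n/2⌋} φ(j, C_n)·t^{2j}. Then for every real t: if n is odd, det(I_n + t·T_{n,+}) = det(I_n + t·T_{n,-}) = M(t); if n is even, det(I_n + t·T_{n,+}) = M(t) + 2tⁿ and det(I_n + t·T_{n,-}) = M(t) - 2tⁿ. -/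
open Matrix

/-- The cycle graph `C_n` on vertices `1, …, n` (indexed here from `0`), with edges
`{i, i+1}` for `1 ≤ i ≤ n-1` together with `{1, n}`. -/
def cycGraph (n : ℕ) : SimpleGraph (Fin n) where
  Adj i j := i ≠ j ∧ ((i : ℕ) + 1 = (j : ℕ) ∨ (j : ℕ) + 1 = (i : ℕ) ∨
    ((i : ℕ) = 0 ∧ (j : ℕ) = n - 1) ∨ ((j : ℕ) = 0 ∧ (i : ℕ) = n - 1))
  symm := ⟨by intro i j h; exact ⟨h.1.symm, by tauto⟩⟩
  loopless := ⟨by intro i h; exact h.1 rfl⟩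

/-- `M` is a matching of the cycle graph `C_n`: a set of pairwise disjoint edges. -/
def IsCycleMatching (n : ℕ) (M : Finset (Sym2 (Fin n))) : Prop :=
  (∀ e ∈ M, e ∈ (cycGraph n).edgeSet) ∧
    ∀ e ∈ M, ∀ f ∈ M, e ≠ f → ∀ v : Fin n, ¬ (v ∈ e ∧ v ∈ f)

/-- `φ(j, C_n)`: the number of matchings of the cycle graph `C_n` consisting of exactly
`j` edges. -/
noncomputable def numCycleMatchings (n j : ℕ) : ℕ :=
  Nat.card {M : Finset (Sym2 (Fin n)) // IsCycleMatching n M ∧ M.card = j}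

namespace Cyc18
variable {n : ℕ} [NeZero n]

lemma eq_add_one_iff (hn : 3 ≤ n) {a b : Fin n} :
    b = a + 1 ↔ ((a : ℕ) + 1 = b ∨ ((a : ℕ) = n - 1 ∧ (b : ℕ) = 0)) := by
  have ha := a.isLt; have hb := b.isLt
  have h1 : 1 % n = 1 := Nat.mod_eq_of_lt (by omega)
  rw [Fin.ext_iff, Fin.add_def, Fin.val_one', h1]
  simp only []
  rcases Nat.lt_or_ge (a.val + 1) n with h2 | h2
  · rw [Nat.mod_eq_of_lt h2]; omega
  · have h3 : (a.val + 1) % n = 0 := by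
      have : a.val + 1 = n := by omega
      simp [this]
    rw [h3]; omega

lemma eq_sub_one_iff (hn : 3 ≤ n) {a b : Fin n} :
    b = a - 1 ↔ ((b : ℕ) + 1 = a ∨ ((b : ℕ) = n - 1 ∧ (a : ℕ) = 0)) := by
  rw [eq_sub_iff_add_eq, eq_comm, eq_add_one_iff hn]

lemma add_one_ne (hn : 3 ≤ n) (a : Fin n) : a + 1 ≠ a := by
  intro h
  have := (eq_add_one_iff hn (a := a) (b := a + 1)).mp rfl
  rw [h] at this; omega

lemma sub_one_ne (hn : 3 ≤ n) (a : Fin n) : a - 1 ≠ a := by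
  intro h
  have := (eq_sub_one_iff hn (a := a) (b := a - 1)).mp rfl
  rw [h] at this; omega

lemma add_one_ne_sub_one (hn : 3 ≤ n) (a : Fin n) : a + 1 ≠ a - 1 := by
  intro h
  have h1 := (eq_add_one_iff hn (a := a) (b := a + 1)).mp rfl
  have h2 := (eq_sub_one_iff hn (a := a) (b := a - 1)).mp rfl
  rw [h] at h1
  have ha := a.isLt
  omega

lemma adj_iff (hn : 3 ≤ n) {a b : Fin n} :
    (cycGraph n).Adj a b ↔ (b = a + 1 ∨ b = a - 1) := by
  rw [eq_add_one_iff hn, eq_sub_one_iff hn]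
  constructor
  · rintro ⟨-, h⟩; tauto
  · intro h
    refine ⟨?_, by tauto⟩
    intro rfl
    have ha := a.isLt
    omega

end Cyc18
namespace Cyc18
set_option linter.unusedSectionVars false
variable {n : ℕ} [NeZero n] {t ε : ℝ}

lemma Tpm_apply (ε : ℝ) (a b : Fin n) : Tpm n ε a b =
    if (a : ℕ) + 1 = (b : ℕ) then 1
    else if (b : ℕ) + 1 = (a : ℕ) then -1
    else if (a : ℕ) = 0 ∧ (b : ℕ) = n - 1 then ε
    else if (b : ℕ) = 0 ∧ (a : ℕ) = n - 1 then -ε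
    else 0 := rfl

lemma A_diag (hn : 3 ≤ n) (t ε : ℝ) (a : Fin n) :
    ((1 : Matrix (Fin n) (Fin n) ℝ) + t • Tpm n ε) a a = 1 := by
  have ha := a.isLt
  have h : ¬ ((a:ℕ) = 0 ∧ (a:ℕ) = n - 1) := by omega
  have h' : ¬ (a = 0 ∧ (a:ℕ) = n - 1) := fun hh => h ⟨by simp [hh.1], hh.2⟩
  simp [Matrix.add_apply, Matrix.one_apply, Tpm_apply, h, h']

lemma A_ne (t ε : ℝ) {a b : Fin n} (h : a ≠ b) :
    ((1 : Matrix (Fin n) (Fin n) ℝ) + t • Tpm n ε) a b = t * Tpm n ε a b := by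
  simp [Matrix.add_apply, Matrix.one_apply, h]

lemma Tpm_not_adj (hn : 3 ≤ n) (ε : ℝ) {a b : Fin n}
    (h1 : a ≠ b + 1) (h2 : a ≠ b - 1) : Tpm n ε a b = 0 := by
  rw [Ne, eq_add_one_iff hn] at h1
  rw [Ne, eq_sub_one_iff hn] at h2
  push_neg at h1
  push_neg at h2
  have ha := a.isLt; have hb := b.isLt
  rw [Tpm_apply]
  rw [if_neg (by omega), if_neg (by omega), if_neg (by omega), if_neg (by omega)]

lemma Tpm_mul_adj (hn : 3 ≤ n) (hε : ε * ε = 1) {a b : Fin n}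
    (h : b = a + 1 ∨ b = a - 1) : Tpm n ε a b * Tpm n ε b a = -1 := by
  have ha := a.isLt; have hb := b.isLt
  rw [Tpm_apply, Tpm_apply]
  rcases h with h | h
  · rw [eq_add_one_iff hn] at h
    rcases h with h | h
    · rw [if_pos h, if_neg (by omega), if_pos h]
      ring
    · rw [if_neg (by omega), if_neg (by omega), if_neg (by omega),
        if_pos ⟨h.2, h.1⟩, if_neg (by omega), if_neg (by omega),
        if_pos ⟨h.2, h.1⟩]
      nlinarith [hε]
  · rw [eq_sub_one_iff hn] at h
    rcases h with h | h
    · rw [if_neg (by omega), if_pos h, if_pos h]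
      ring
    · rw [if_neg (by omega), if_neg (by omega), if_pos ⟨h.2, h.1⟩,
        if_neg (by omega), if_neg (by omega), if_neg (by omega),
        if_pos ⟨h.2, h.1⟩]
      nlinarith [hε]

end Cyc18
namespace Cyc18
set_option linter.unusedSectionVars false
variable {n : ℕ}

lemma edge_exists {e : Sym2 (Fin n)} (he : e ∈ (cycGraph n).edgeSet) :
    ∃ a b : Fin n, a ≠ b ∧ e = s(a, b) := by
  induction e using Sym2.ind with
  | _ a b =>
    rw [SimpleGraph.mem_edgeSet] at he
    exact ⟨a, b, he.1, rfl⟩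

lemma cover_exists {M : Finset (Sym2 (Fin n))} (hM : IsCycleMatching n M)
    {e : Sym2 (Fin n)} (he : e ∈ M) {i : Fin n} (hi : i ∈ e) :
    ∃ j, j ≠ i ∧ s(i, j) = e := by
  obtain ⟨a, b, hab, rfl⟩ := edge_exists (hM.1 e he)
  rw [Sym2.mem_iff] at hi
  rcases hi with rfl | rfl
  · exact ⟨b, fun h => hab h.symm, rfl⟩
  · exact ⟨a, hab, Sym2.eq_swap⟩

lemma cover_unique {M : Finset (Sym2 (Fin n))} (hM : IsCycleMatching n M)
    {i j j' : Fin n} (hj : j ≠ i) (hj' : j' ≠ i)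
    (h : s(i, j) ∈ M) (h' : s(i, j') ∈ M) : j = j' := by
  by_contra hne
  have hef : s(i, j) ≠ s(i, j') := fun hh => hne (Sym2.congr_right.mp hh)
  exact hM.2 _ h _ h' hef i ⟨Sym2.mem_mk_left i j, Sym2.mem_mk_left i j'⟩

noncomputable def gfun (M : Finset (Sym2 (Fin n))) (i : Fin n) : Fin n :=
  if h : ∃ j, j ≠ i ∧ s(i, j) ∈ M then h.choose else i

lemma gfun_eq {M : Finset (Sym2 (Fin n))} (hM : IsCycleMatching n M)
    {i j : Fin n} (hj : j ≠ i) (hm : s(i, j) ∈ M) : gfun M i = j := by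
  have h : ∃ j, j ≠ i ∧ s(i, j) ∈ M := ⟨j, hj, hm⟩
  rw [gfun, dif_pos h]
  exact cover_unique hM h.choose_spec.1 hj h.choose_spec.2 hm

lemma gfun_fixed {M : Finset (Sym2 (Fin n))} {i : Fin n}
    (h : ∀ e ∈ M, i ∉ e) : gfun M i = i := by
  rw [gfun, dif_neg]
  rintro ⟨j, -, hm⟩
  exact h _ hm (Sym2.mem_mk_left i j)

lemma gfun_invol {M : Finset (Sym2 (Fin n))} (hM : IsCycleMatching n M) :
    Function.Involutive (gfun M) := by
  intro i
  by_cases h : ∃ j, j ≠ i ∧ s(i, j) ∈ M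
  · obtain ⟨j, hj, hm⟩ := h
    rw [gfun_eq hM hj hm]
    exact gfun_eq hM hj.symm (Sym2.eq_swap ▸ hm)
  · push_neg at h
    have hi : gfun M i = i := by
      rw [gfun, dif_neg]
      rintro ⟨j, hj, hm⟩
      exact (h j hj) hm
    rw [hi, hi]

open scoped Classical in
noncomputable def permOf (M : Finset (Sym2 (Fin n))) : Equiv.Perm (Fin n) :=
  if h : IsCycleMatching n M then (gfun_invol h).toPerm else 1

open scoped Classical in
lemma permOf_apply {M : Finset (Sym2 (Fin n))} (hM : IsCycleMatching n M) (i : Fin n) :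
    permOf M i = gfun M i := by
  rw [permOf, dif_pos hM]; rfl

open scoped Classical in
lemma permOf_invol (M : Finset (Sym2 (Fin n))) : Function.Involutive (permOf M) := by
  rw [permOf]
  split_ifs with h
  · exact gfun_invol h
  · intro i; rfl

lemma permOf_eq {M : Finset (Sym2 (Fin n))} (hM : IsCycleMatching n M)
    {i j : Fin n} (hj : j ≠ i) (hm : s(i, j) ∈ M) : permOf M i = j := by
  rw [permOf_apply hM]; exact gfun_eq hM hj hm

lemma permOf_fixed {M : Finset (Sym2 (Fin n))} (hM : IsCycleMatching n M)
    {i : Fin n} (h : ∀ e ∈ M, i ∉ e) : permOf M i = i := by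
  rw [permOf_apply hM]; exact gfun_fixed h

lemma permOf_spec {M : Finset (Sym2 (Fin n))} (hM : IsCycleMatching n M) (i : Fin n) :
    (permOf M i = i ∧ ∀ e ∈ M, i ∉ e) ∨ (s(i, permOf M i) ∈ M ∧ permOf M i ≠ i) := by
  by_cases h : ∃ j, j ≠ i ∧ s(i, j) ∈ M
  · obtain ⟨j, hj, hm⟩ := h
    right
    rw [permOf_eq hM hj hm]
    exact ⟨hm, hj⟩
  · push_neg at h
    left
    have hfix : ∀ e ∈ M, i ∉ e := by
      intro e he hi
      obtain ⟨j, hj, rfl⟩ := cover_exists hM he hi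
      exact (h j hj) (by rwa [Sym2.eq_swap] at he ⊢)
    exact ⟨permOf_fixed hM hfix, hfix⟩

lemma matching_subset {M M' : Finset (Sym2 (Fin n))} (h : M' ⊆ M)
    (hM : IsCycleMatching n M) : IsCycleMatching n M' :=
  ⟨fun e he => hM.1 e (h he), fun e he f hf => hM.2 e (h he) f (h hf)⟩

lemma permOf_empty : permOf (∅ : Finset (Sym2 (Fin n))) = 1 := by
  have hM : IsCycleMatching n (∅ : Finset (Sym2 (Fin n))) := by
    constructor <;> simp [IsCycleMatching]
  ext i
  rw [permOf_apply hM, gfun_fixed (by simp)]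
  rfl

end Cyc18
namespace Cyc18
set_option linter.unusedSectionVars false
set_option linter.unusedVariables false
variable {n : ℕ}

lemma not_covered_of_insert {M : Finset (Sym2 (Fin n))} {a b : Fin n}
    (hM : IsCycleMatching n (insert (s(a, b)) M)) (he : s(a, b) ∉ M)
    {v : Fin n} (hv : v ∈ s(a, b)) : ∀ f ∈ M, v ∉ f := by
  intro f hf hvf
  have hne : s(a, b) ≠ f := fun h => he (h ▸ hf)
  exact hM.2 _ (Finset.mem_insert_self _ _) f (Finset.mem_insert_of_mem hf) hne v ⟨hv, hvf⟩

lemma permOf_insert {M : Finset (Sym2 (Fin n))} {a b : Fin n}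
    (hM : IsCycleMatching n (insert (s(a, b)) M)) (he : s(a, b) ∉ M) (hab : a ≠ b) :
    permOf (insert (s(a, b)) M) = Equiv.swap a b * permOf M := by
  have hM' : IsCycleMatching n M := matching_subset (Finset.subset_insert _ _) hM
  have hafix : permOf M a = a :=
    permOf_fixed hM' (not_covered_of_insert hM he (Sym2.mem_mk_left a b))
  have hbfix : permOf M b = b :=
    permOf_fixed hM' (not_covered_of_insert hM he (Sym2.mem_mk_right a b))
  ext i
  simp only [Equiv.Perm.coe_mul, Function.comp_apply]
  by_cases ha : i = a
  · subst ha
    rw [permOf_eq hM (Ne.symm hab) (Finset.mem_insert_self _ _), hafix, Equiv.swap_apply_left]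
  by_cases hb : i = b
  · subst hb
    rw [permOf_eq hM hab (by rw [Sym2.eq_swap]; exact Finset.mem_insert_self _ _),
      hbfix, Equiv.swap_apply_right]
  rcases permOf_spec hM' i with ⟨hfix, hcov⟩ | ⟨hmem, hne⟩
  · have : ∀ e ∈ insert (s(a, b)) M, i ∉ e := by
      intro e hee hie
      rcases Finset.mem_insert.mp hee with rfl | hee
      · rcases Sym2.mem_iff.mp hie with rfl | rfl
        · exact ha rfl
        · exact hb rfl
      · exact hcov e hee hie
    rw [permOf_fixed hM this, hfix, Equiv.swap_apply_of_ne_of_ne ha hb]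
  · set j := permOf M i with hj
    have hja : j ≠ a := by
      intro h
      exact not_covered_of_insert hM he (Sym2.mem_mk_left a b) _ hmem
        (h ▸ Sym2.mem_mk_right i j)
    have hjb : j ≠ b := by
      intro h
      exact not_covered_of_insert hM he (Sym2.mem_mk_right a b) _ hmem
        (h ▸ Sym2.mem_mk_right i j)
    rw [permOf_eq hM hne (Finset.mem_insert_of_mem hmem),
      Equiv.swap_apply_of_ne_of_ne hja hjb]

lemma sign_permOf {M : Finset (Sym2 (Fin n))} (hM : IsCycleMatching n M) :
    Equiv.Perm.sign (permOf M) = (-1) ^ M.card := by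
  classical
  induction M using Finset.induction_on with
  | empty => simp [permOf_empty]
  | @insert e M he ih =>
    obtain ⟨a, b, hab, rfl⟩ := edge_exists (hM.1 e (Finset.mem_insert_self _ _))
    have hM' : IsCycleMatching n M := matching_subset (Finset.subset_insert _ _) hM
    rw [permOf_insert hM he hab, Equiv.Perm.sign_mul, Equiv.Perm.sign_swap hab, ih hM',
      Finset.card_insert_of_notMem he, pow_succ]
    rw [mul_comm]

lemma prod_permOf {n : ℕ} [NeZero n] (hn : 3 ≤ n) {t ε : ℝ} (hε : ε * ε = 1)
    {M : Finset (Sym2 (Fin n))} (hM : IsCycleMatching n M) :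
    ∏ i, ((1 : Matrix (Fin n) (Fin n) ℝ) + t • Tpm n ε) (permOf M i) i
      = (-(t * t)) ^ M.card := by
  classical
  induction M using Finset.induction_on with
  | empty =>
    simp only [permOf_empty, Finset.card_empty, pow_zero]
    rw [Finset.prod_congr rfl (fun i _ => by
      rw [show ((1 : Equiv.Perm (Fin n)) i) = i from rfl, A_diag hn])]
    simp
  | @insert e M he ih =>
    obtain ⟨a, b, hab, rfl⟩ := edge_exists (hM.1 e (Finset.mem_insert_self _ _))
    have hM' : IsCycleMatching n M := matching_subset (Finset.subset_insert _ _) hM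
    have hins := permOf_insert hM he hab
    have hpa : permOf (insert (s(a,b)) M) a = b := by
      rw [hins]; simp [permOf_fixed hM' (not_covered_of_insert hM he (Sym2.mem_mk_left a b))]
    have hpb : permOf (insert (s(a,b)) M) b = a := by
      rw [hins]; simp [permOf_fixed hM' (not_covered_of_insert hM he (Sym2.mem_mk_right a b))]
    have hsub : ({a, b} : Finset (Fin n)) ⊆ Finset.univ := Finset.subset_univ _
    have hsplit := Finset.prod_sdiff (f := fun i =>
      ((1 : Matrix (Fin n) (Fin n) ℝ) + t • Tpm n ε) (permOf (insert (s(a,b)) M) i) i) hsub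
    have hsplit' := Finset.prod_sdiff (f := fun i =>
      ((1 : Matrix (Fin n) (Fin n) ℝ) + t • Tpm n ε) (permOf M i) i) hsub
    have hadj : b = a + 1 ∨ b = a - 1 := by
      have := hM.1 _ (Finset.mem_insert_self (s(a,b)) M)
      rw [SimpleGraph.mem_edgeSet, adj_iff hn] at this
      exact this
    have hpair : ∏ i ∈ ({a, b} : Finset (Fin n)),
        ((1 : Matrix (Fin n) (Fin n) ℝ) + t • Tpm n ε) (permOf (insert (s(a,b)) M) i) i
        = -(t * t) := by
      rw [Finset.prod_pair hab, hpa, hpb, A_ne t ε (Ne.symm hab), A_ne t ε hab]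
      have := Tpm_mul_adj hn hε hadj
      nlinarith [this]
    have hpair' : ∏ i ∈ ({a, b} : Finset (Fin n)),
        ((1 : Matrix (Fin n) (Fin n) ℝ) + t • Tpm n ε) (permOf M i) i = 1 := by
      rw [Finset.prod_pair hab,
        permOf_fixed hM' (not_covered_of_insert hM he (Sym2.mem_mk_left a b)),
        permOf_fixed hM' (not_covered_of_insert hM he (Sym2.mem_mk_right a b)),
        A_diag hn, A_diag hn, mul_one]
    have hrest : ∀ i ∈ Finset.univ \ ({a, b} : Finset (Fin n)),
        permOf (insert (s(a,b)) M) i = permOf M i := by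
      intro i hi
      simp only [Finset.mem_sdiff, Finset.mem_insert, Finset.mem_singleton] at hi
      push_neg at hi
      obtain ⟨-, ha, hb⟩ := hi
      rw [hins]
      simp only [Equiv.Perm.coe_mul, Function.comp_apply]
      rcases permOf_spec hM' i with ⟨hfix, -⟩ | ⟨hmem, hne⟩
      · rw [hfix, Equiv.swap_apply_of_ne_of_ne ha hb]
      · set j := permOf M i
        have hja : j ≠ a := fun h =>
          not_covered_of_insert hM he (Sym2.mem_mk_left a b) _ hmem (h ▸ Sym2.mem_mk_right i j)
        have hjb : j ≠ b := fun h =>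
          not_covered_of_insert hM he (Sym2.mem_mk_right a b) _ hmem (h ▸ Sym2.mem_mk_right i j)
        rw [Equiv.swap_apply_of_ne_of_ne hja hjb]
    have heq : ∏ i ∈ Finset.univ \ ({a, b} : Finset (Fin n)),
        ((1 : Matrix (Fin n) (Fin n) ℝ) + t • Tpm n ε) (permOf (insert (s(a,b)) M) i) i
        = ∏ i ∈ Finset.univ \ ({a, b} : Finset (Fin n)),
        ((1 : Matrix (Fin n) (Fin n) ℝ) + t • Tpm n ε) (permOf M i) i :=
      Finset.prod_congr rfl (fun i hi => by rw [hrest i hi])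
    calc ∏ i, ((1 : Matrix (Fin n) (Fin n) ℝ) + t • Tpm n ε) (permOf (insert (s(a,b)) M) i) i
        = (∏ i ∈ Finset.univ \ ({a, b} : Finset (Fin n)),
            ((1 : Matrix (Fin n) (Fin n) ℝ) + t • Tpm n ε) (permOf (insert (s(a,b)) M) i) i)
          * (-(t * t)) := by rw [← hpair, hsplit]
      _ = (∏ i, ((1 : Matrix (Fin n) (Fin n) ℝ) + t • Tpm n ε) (permOf M i) i) * (-(t * t)) := by
          rw [heq, ← hsplit', hpair', mul_one]
      _ = (-(t * t)) ^ (insert (s(a,b)) M).card := by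
          rw [ih hM', Finset.card_insert_of_notMem he, pow_succ]

end Cyc18
namespace Cyc18
set_option linter.unusedSectionVars false
set_option linter.unusedVariables false
variable {n : ℕ} [NeZero n]
open Fin.CommRing

def Good (σ : Equiv.Perm (Fin n)) : Prop :=
  ∀ i, σ i = i ∨ σ i = i + 1 ∨ σ i = i - 1

def rot (n : ℕ) [NeZero n] : Equiv.Perm (Fin n) := Equiv.addRight (1 : Fin n)

lemma rot_apply (i : Fin n) : rot n i = i + 1 := rfl

lemma rot_inv_apply (i : Fin n) : (rot n)⁻¹ i = i - 1 := by
  rw [Equiv.Perm.inv_eq_iff_eq, rot_apply]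
  ring

lemma add_two_ne (hn : 3 ≤ n) (a : Fin n) : a + 1 + 1 ≠ a := by
  intro h
  have h2 : a + 1 = a - 1 := by rw [eq_sub_iff_add_eq, h]
  exact add_one_ne_sub_one hn a h2

lemma good_forward (hn : 3 ≤ n) {σ : Equiv.Perm (Fin n)} (hg : Good σ)
    {i : Fin n} (h1 : σ i = i + 1) (h2 : σ (i + 1) ≠ i) : σ = rot n := by
  have key : ∀ k : ℕ, σ (i + (k : Fin n)) = i + (k : Fin n) + 1 ∧
      σ (i + (k : Fin n) + 1) = i + (k : Fin n) + 1 + 1 := by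
    intro k
    induction k with
    | zero =>
      simp only [Nat.cast_zero, add_zero]
      refine ⟨h1, ?_⟩
      rcases hg (i + 1) with h | h | h
      · exact absurd (σ.injective (h1.trans h.symm)).symm (add_one_ne hn i)
      · exact h
      · rw [add_sub_cancel_right] at h
        exact absurd h h2
    | succ k ih =>
      obtain ⟨ihk, ihk1⟩ := ih
      have hc : ((k + 1 : ℕ) : Fin n) = (k : Fin n) + 1 := by push_cast; ring
      have ha : i + ((k : Fin n) + 1) = i + (k : Fin n) + 1 := by ring
      rw [hc, ha]
      refine ⟨ihk1, ?_⟩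
      rcases hg (i + (k : Fin n) + 1 + 1) with h | h | h
      · exfalso
        have := σ.injective (ihk1.trans h.symm)
        exact add_one_ne hn (i + (k : Fin n) + 1) this.symm
      · exact h
      · exfalso
        have hs : i + (k : Fin n) + 1 + 1 - 1 = i + (k : Fin n) + 1 := by ring
        rw [hs] at h
        have hik : σ (i + (k : Fin n)) = i + (k : Fin n) + 1 := ihk
        exact add_two_ne hn (i + (k : Fin n)) (σ.injective (h.trans hik.symm))
  ext j
  have hj : i + (((j - i : Fin n) : ℕ) : Fin n) = j := by
    rw [Fin.cast_val_eq_self]; ring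
  have hk := (key ((j - i : Fin n) : ℕ)).1
  rw [hj] at hk
  rw [hk, rot_apply]

lemma good_inv {σ : Equiv.Perm (Fin n)} (hg : Good σ) : Good σ⁻¹ := by
  intro j
  have happ : σ (σ⁻¹ j) = j := σ.apply_symm_apply j
  rcases hg (σ⁻¹ j) with h | h | h
  · exact Or.inl (h.symm.trans happ)
  · right; right
    rw [happ] at h
    linear_combination -h
  · right; left
    rw [happ] at h
    linear_combination -h

lemma good_backward (hn : 3 ≤ n) {σ : Equiv.Perm (Fin n)} (hg : Good σ)
    {i : Fin n} (h1 : σ i = i - 1) (h2 : σ (i - 1) ≠ i) : σ = (rot n)⁻¹ := by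
  have hi : i - 1 + 1 = i := by ring
  have e1 : σ⁻¹ (i - 1) = i - 1 + 1 := by
    rw [hi, Equiv.Perm.inv_eq_iff_eq, h1]
  have e2 : σ⁻¹ (i - 1 + 1) ≠ i - 1 := by
    rw [hi, Ne, Equiv.Perm.inv_eq_iff_eq]
    exact fun h => h2 h.symm
  have := good_forward hn (good_inv hg) e1 e2
  rw [← this, inv_inv]

lemma good_invol (hn : 3 ≤ n) {σ : Equiv.Perm (Fin n)} (hg : Good σ)
    (hr1 : σ ≠ rot n) (hr2 : σ ≠ (rot n)⁻¹) : Function.Involutive σ := by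
  intro i
  rcases hg i with h | h | h
  · rw [h, h]
  · by_cases hc : σ (i + 1) = i
    · rw [h, hc]
    · exact absurd (good_forward hn hg h hc) hr1
  · by_cases hc : σ (i - 1) = i
    · rw [h, hc]
    · exact absurd (good_backward hn hg h hc) hr2

lemma exists_matching (hn : 3 ≤ n) {σ : Equiv.Perm (Fin n)} (hg : Good σ)
    (hinv : Function.Involutive σ) :
    ∃ M, IsCycleMatching n M ∧ permOf M = σ := by
  classical
  refine ⟨(Finset.univ.filter (fun i => σ i ≠ i)).image (fun i => s(i, σ i)), ?_, ?_⟩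
  · constructor
    · intro e he
      obtain ⟨i, hi, rfl⟩ := Finset.mem_image.mp he
      rw [Finset.mem_filter] at hi
      rw [SimpleGraph.mem_edgeSet, adj_iff hn]
      rcases hg i with h | h | h
      · exact absurd h hi.2
      · exact Or.inl h
      · exact Or.inr h
    · intro e he f hf hef v hv
      obtain ⟨i, hi, rfl⟩ := Finset.mem_image.mp he
      obtain ⟨j, hj, rfl⟩ := Finset.mem_image.mp hf
      apply hef
      rcases Sym2.mem_iff.mp hv.1 with rfl | h1
      · rcases Sym2.mem_iff.mp hv.2 with rfl | h2
        · rfl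
        · rw [h2, hinv j, Sym2.eq_swap]
      · rcases Sym2.mem_iff.mp hv.2 with h2 | h2
        · have hj' : j = σ i := h2.symm.trans h1
          rw [hj', hinv i, Sym2.eq_swap]
        · have hij : i = j := hinv.injective (h1.symm.trans h2)
          rw [hij]
  · have hM : IsCycleMatching n ((Finset.univ.filter (fun i => σ i ≠ i)).image
        (fun i => s(i, σ i))) := by
      constructor
      · intro e he
        obtain ⟨i, hi, rfl⟩ := Finset.mem_image.mp he
        rw [Finset.mem_filter] at hi
        rw [SimpleGraph.mem_edgeSet, adj_iff hn]
        rcases hg i with h | h | h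
        · exact absurd h hi.2
        · exact Or.inl h
        · exact Or.inr h
      · intro e he f hf hef v hv
        obtain ⟨i, hi, rfl⟩ := Finset.mem_image.mp he
        obtain ⟨j, hj, rfl⟩ := Finset.mem_image.mp hf
        apply hef
        rcases Sym2.mem_iff.mp hv.1 with rfl | h1
        · rcases Sym2.mem_iff.mp hv.2 with rfl | h2
          · rfl
          · rw [h2, hinv j, Sym2.eq_swap]
        · rcases Sym2.mem_iff.mp hv.2 with h2 | h2
          · have hj' : j = σ i := h2.symm.trans h1
            rw [hj', hinv i, Sym2.eq_swap]
          · have hij : i = j := hinv.injective (h1.symm.trans h2)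
            rw [hij]
    apply Equiv.ext
    intro i
    by_cases h : σ i = i
    · have hfix : ∀ e ∈ (Finset.univ.filter (fun i => σ i ≠ i)).image (fun i => s(i, σ i)),
          i ∉ e := by
        intro e he hie
        obtain ⟨j, hj, rfl⟩ := Finset.mem_image.mp he
        rw [Finset.mem_filter] at hj
        rcases Sym2.mem_iff.mp hie with rfl | h2
        · exact hj.2 h
        · have e1 : σ i = j := by rw [h2]; exact hinv j
          have e2 : σ i = σ j := by rw [h, h2]
          exact hj.2 (e2.symm.trans e1)
      rw [permOf_fixed hM hfix, h]
    · have hmem : s(i, σ i) ∈ (Finset.univ.filter (fun i => σ i ≠ i)).image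
          (fun i => s(i, σ i)) :=
        Finset.mem_image.mpr ⟨i, Finset.mem_filter.mpr ⟨Finset.mem_univ i, h⟩, rfl⟩
      exact permOf_eq hM h hmem

lemma good_mem (hn : 3 ≤ n) {σ : Equiv.Perm (Fin n)} (hg : Good σ) :
    σ = rot n ∨ σ = (rot n)⁻¹ ∨ ∃ M, IsCycleMatching n M ∧ permOf M = σ := by
  by_cases h1 : σ = rot n
  · exact Or.inl h1
  by_cases h2 : σ = (rot n)⁻¹
  · exact Or.inr (Or.inl h2)
  · exact Or.inr (Or.inr (exists_matching hn hg (good_invol hn hg h1 h2)))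

end Cyc18
namespace Cyc18
set_option linter.unusedSectionVars false
set_option linter.unusedVariables false
variable {n : ℕ} [NeZero n]
open Fin.CommRing

lemma add_one_val (hn : 3 ≤ n) (i : Fin n) :
    ((i + 1 : Fin n) : ℕ) = if (i : ℕ) = n - 1 then 0 else (i : ℕ) + 1 := by
  have := (eq_add_one_iff hn (a := i) (b := i + 1)).mp rfl
  have hi := i.isLt
  have hj := (i + 1 : Fin n).isLt
  split_ifs with h <;> omega

lemma sub_one_val (hn : 3 ≤ n) (i : Fin n) :
    ((i - 1 : Fin n) : ℕ) = if (i : ℕ) = 0 then n - 1 else (i : ℕ) - 1 := by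
  have := (eq_sub_one_iff hn (a := i) (b := i - 1)).mp rfl
  have hi := i.isLt
  have hj := (i - 1 : Fin n).isLt
  split_ifs with h <;> omega

lemma T_rot (hn : 3 ≤ n) (ε : ℝ) (i : Fin n) :
    Tpm n ε (i + 1) i = if (i : ℕ) = n - 1 then ε else -1 := by
  have hv := add_one_val hn i
  have hi := i.isLt
  rw [Tpm_apply]
  by_cases h : (i : ℕ) = n - 1
  · rw [if_pos h] at hv
    rw [if_pos h, if_neg (by omega), if_neg (by omega), if_pos ⟨hv, h⟩]
  · rw [if_neg h] at hv
    rw [if_neg h, if_neg (by omega), if_pos (by omega)]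

lemma T_rot_inv (hn : 3 ≤ n) (ε : ℝ) (i : Fin n) :
    Tpm n ε (i - 1) i = if (i : ℕ) = 0 then -ε else 1 := by
  have hv := sub_one_val hn i
  have hi := i.isLt
  rw [Tpm_apply]
  by_cases h : (i : ℕ) = 0
  · rw [if_pos h] at hv
    rw [if_pos h, if_neg (by omega), if_neg (by omega), if_neg (by omega),
      if_pos ⟨h, hv⟩]
  · rw [if_neg h] at hv
    rw [if_neg h, if_pos (by omega)]

lemma rot_ne_inv (hn : 3 ≤ n) : rot n ≠ (rot n)⁻¹ := by
  intro h
  have h0 : rot n ((rot n) 0) = (0 : Fin n) := by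
    nth_rewrite 1 [h]
    exact Equiv.symm_apply_apply _ _
  rw [rot_apply, rot_apply] at h0
  exact add_two_ne hn 0 h0

lemma permOf_ne_rot (hn : 3 ≤ n) (M : Finset (Sym2 (Fin n))) : permOf M ≠ rot n := by
  intro h
  have := permOf_invol M 0
  rw [h, rot_apply, rot_apply] at this
  exact add_two_ne hn 0 this

lemma permOf_ne_rot_inv (hn : 3 ≤ n) (M : Finset (Sym2 (Fin n))) : permOf M ≠ (rot n)⁻¹ := by
  intro h
  have := permOf_invol M 0
  rw [h, rot_inv_apply, rot_inv_apply] at this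
  have h2 : (0 : Fin n) = 0 - 1 - 1 := this.symm
  rw [sub_sub] at h2
  have h3 : (0 : Fin n) + (1 + 1) = 0 := by
    rw [eq_sub_iff_add_eq] at h2
    linear_combination h2
  exact add_two_ne hn 0 (by linear_combination h3)

end Cyc18
namespace Cyc18
set_option linter.unusedSectionVars false
set_option linter.unusedVariables false
variable {n : ℕ}

lemma two_mul_card_le {M : Finset (Sym2 (Fin n))} (hM : IsCycleMatching n M) :
    2 * M.card ≤ n := by
  classical
  have hdisj : ∀ e ∈ M, ∀ f ∈ M, e ≠ f →
      Disjoint (Finset.univ.filter (· ∈ e)) (Finset.univ.filter (· ∈ f)) := by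
    intro e he f hf hef
    rw [Finset.disjoint_left]
    intro v hv hv'
    rw [Finset.mem_filter] at hv hv'
    exact hM.2 e he f hf hef v ⟨hv.2, hv'.2⟩
  have hcard : ∀ e ∈ M, (Finset.univ.filter (· ∈ e)).card = 2 := by
    intro e he
    obtain ⟨a, b, hab, rfl⟩ := edge_exists (hM.1 e he)
    have : Finset.univ.filter (· ∈ s(a, b)) = {a, b} := by
      ext v
      simp [Sym2.mem_iff]
    rw [this, Finset.card_pair hab]
  have h1 : (M.biUnion (fun e => Finset.univ.filter (· ∈ e))).card = 2 * M.card := by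
    rw [Finset.card_biUnion hdisj, Finset.sum_congr rfl hcard, Finset.sum_const,
      smul_eq_mul, mul_comm]
  calc 2 * M.card = _ := h1.symm
    _ ≤ (Finset.univ : Finset (Fin n)).card := Finset.card_le_card (Finset.subset_univ _)
    _ = n := by rw [Finset.card_univ, Fintype.card_fin]

open scoped Classical in
noncomputable def matchFinset (n : ℕ) : Finset (Finset (Sym2 (Fin n))) :=
  Finset.univ.filter (IsCycleMatching n)

open scoped Classical in
lemma mem_matchFinset {M : Finset (Sym2 (Fin n))} :
    M ∈ matchFinset n ↔ IsCycleMatching n M := by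
  rw [matchFinset, Finset.mem_filter]
  simp

lemma num_eq (j : ℕ) :
    numCycleMatchings n j = ((matchFinset n).filter (fun M => M.card = j)).card := by
  classical
  rw [numCycleMatchings, Nat.card_eq_fintype_card, Fintype.card_subtype]
  apply congrArg
  ext M
  simp only [Finset.mem_filter, Finset.mem_univ, true_and, mem_matchFinset]

lemma sum_matchings (hn : 3 ≤ n) (t : ℝ) :
    ∑ M ∈ matchFinset n, t ^ (2 * M.card)
      = ∑ j ∈ Finset.range (n / 2 + 1), (numCycleMatchings n j : ℝ) * t ^ (2 * j) := by
  classical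
  rw [← Finset.sum_fiberwise_of_maps_to (g := Finset.card) (t := Finset.range (n / 2 + 1))
    (fun M hM => by
      rw [Finset.mem_range]
      have := two_mul_card_le (mem_matchFinset.mp hM)
      omega) (fun M => t ^ (2 * M.card))]
  apply Finset.sum_congr rfl
  intro j hj
  have : ∀ M ∈ (matchFinset n).filter (fun M => M.card = j),
      t ^ (2 * M.card) = t ^ (2 * j) := by
    intro M hM
    rw [(Finset.mem_filter.mp hM).2]
  rw [Finset.sum_congr rfl this, Finset.sum_const, nsmul_eq_mul, num_eq]

end Cyc18
namespace Cyc18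
set_option linter.unusedSectionVars false
set_option linter.unusedVariables false
variable {n : ℕ} [NeZero n]

lemma term_matching (hn : 3 ≤ n) {t ε : ℝ} (hε : ε * ε = 1)
    {M : Finset (Sym2 (Fin n))} (hM : IsCycleMatching n M) :
    (Equiv.Perm.sign (permOf M) : ℤ) •
        ∏ i, ((1 : Matrix (Fin n) (Fin n) ℝ) + t • Tpm n ε) (permOf M i) i
      = t ^ (2 * M.card) := by
  rw [sign_permOf hM, prod_permOf hn hε hM]
  have h1 : (((-1 : ℤˣ) ^ M.card : ℤˣ) : ℤ) = (-1) ^ M.card := by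
    push_cast
    ring
  rw [h1, zsmul_eq_mul]
  push_cast
  rw [← mul_pow]
  rw [show (-1 : ℝ) * -(t * t) = t * t by ring, two_mul, pow_add, ← mul_pow]

lemma prod_eq_zero_of_not_good (hn : 3 ≤ n) {t ε : ℝ} {σ : Equiv.Perm (Fin n)}
    (h : ¬ Good σ) :
    ∏ i, ((1 : Matrix (Fin n) (Fin n) ℝ) + t • Tpm n ε) (σ i) i = 0 := by
  rw [Good] at h
  push_neg at h
  obtain ⟨i, h1, h2, h3⟩ := h
  apply Finset.prod_eq_zero (Finset.mem_univ i)
  rw [A_ne t ε h1, Tpm_not_adj hn ε h2 h3, mul_zero]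

lemma permOf_mem_of_eq {M M' : Finset (Sym2 (Fin n))} (hM : IsCycleMatching n M)
    (hM' : IsCycleMatching n M') (h : permOf M = permOf M')
    {e : Sym2 (Fin n)} (he : e ∈ M) : e ∈ M' := by
  obtain ⟨a, b, hab, rfl⟩ := edge_exists (hM.1 e he)
  have h1 : permOf M a = b := permOf_eq hM (Ne.symm hab) he
  have h2 : permOf M' a = b := by rw [← h, h1]
  rcases permOf_spec hM' a with ⟨hfix, -⟩ | ⟨hmem, hne⟩
  · exact absurd (h2.symm.trans hfix) (Ne.symm hab)
  · rwa [h2] at hmem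

lemma permOf_inj {M M' : Finset (Sym2 (Fin n))} (hM : IsCycleMatching n M)
    (hM' : IsCycleMatching n M') (h : permOf M = permOf M') : M = M' := by
  ext e
  exact ⟨permOf_mem_of_eq hM hM' h, permOf_mem_of_eq hM' hM h.symm⟩

end Cyc18

namespace Cyc18

lemma rot_eq_finRotate (m : ℕ) : rot (m + 3) = finRotate (m + 3) :=
  Equiv.ext fun i => (finRotate_succ_apply i).symm

lemma sign_rot (m : ℕ) : Equiv.Perm.sign (rot (m + 3)) = (-1) ^ (m + 2) := by
  rw [rot_eq_finRotate, sign_finRotate]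
  rfl

lemma sign_rot_inv (m : ℕ) : Equiv.Perm.sign ((rot (m + 3))⁻¹) = (-1) ^ (m + 2) := by
  rw [Equiv.Perm.sign_inv, sign_rot]

lemma prod_rot (m : ℕ) (t ε : ℝ) :
    ∏ i, ((1 : Matrix (Fin (m + 3)) (Fin (m + 3)) ℝ) + t • Tpm (m + 3) ε) (rot (m + 3) i) i
      = t ^ (m + 3) * ((-1) ^ (m + 2) * ε) := by
  have hn : 3 ≤ m + 3 := by omega
  have hstep : ∀ i : Fin (m + 3),
      ((1 : Matrix (Fin (m + 3)) (Fin (m + 3)) ℝ) + t • Tpm (m + 3) ε) (rot (m + 3) i) i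
        = t * (if (i : ℕ) = m + 2 then ε else -1) := by
    intro i
    rw [rot_apply, A_ne t ε (add_one_ne hn i), T_rot hn]
    norm_num
  rw [Finset.prod_congr rfl (fun i _ => hstep i), Finset.prod_mul_distrib,
    Finset.prod_const, Finset.card_univ, Fintype.card_fin]
  congr 1
  rw [Fin.prod_univ_castSucc]
  have hlast : ((Fin.last (m + 2) : Fin (m + 3)) : ℕ) = m + 2 := rfl
  rw [if_pos hlast]
  have hcs : ∀ i : Fin (m + 2), (if ((Fin.castSucc i : Fin (m + 3)) : ℕ) = m + 2
      then ε else -1) = -1 := by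
    intro i
    rw [if_neg]
    have := i.isLt
    simp only [Fin.coe_castSucc]
    omega
  rw [Finset.prod_congr rfl (fun i _ => hcs i), Finset.prod_const, Finset.card_univ,
    Fintype.card_fin]

lemma prod_rot_inv (m : ℕ) (t ε : ℝ) :
    ∏ i, ((1 : Matrix (Fin (m + 3)) (Fin (m + 3)) ℝ) + t • Tpm (m + 3) ε)
        ((rot (m + 3))⁻¹ i) i
      = t ^ (m + 3) * (-ε) := by
  have hn : 3 ≤ m + 3 := by omega
  have hstep : ∀ i : Fin (m + 3),
      ((1 : Matrix (Fin (m + 3)) (Fin (m + 3)) ℝ) + t • Tpm (m + 3) ε) ((rot (m + 3))⁻¹ i) i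
        = t * (if (i : ℕ) = 0 then -ε else 1) := by
    intro i
    rw [rot_inv_apply, A_ne t ε (sub_one_ne hn i), T_rot_inv hn]
  rw [Finset.prod_congr rfl (fun i _ => hstep i), Finset.prod_mul_distrib,
    Finset.prod_const, Finset.card_univ, Fintype.card_fin]
  congr 1
  rw [Fin.prod_univ_succ]
  have h0 : (((0 : Fin (m + 3))) : ℕ) = 0 := rfl
  rw [if_pos h0]
  have hcs : ∀ i : Fin (m + 2), (if ((Fin.succ i : Fin (m + 3)) : ℕ) = 0
      then -ε else 1) = 1 := by
    intro i
    rw [if_neg]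
    simp [Fin.val_succ]
  rw [Finset.prod_congr rfl (fun i _ => hcs i), Finset.prod_const, one_pow, mul_one]

end Cyc18
namespace Cyc18

lemma units_neg_one_pow_smul (k : ℕ) (x : ℝ) :
    ((-1 : ℤˣ) ^ k) • x = (-1 : ℝ) ^ k * x := by
  rw [Units.smul_def, zsmul_eq_mul]
  push_cast
  ring

lemma det_A (m : ℕ) (t ε : ℝ) (hε : ε * ε = 1) :
    ((1 : Matrix (Fin (m + 3)) (Fin (m + 3)) ℝ) + t • Tpm (m + 3) ε).det
      = (∑ M ∈ matchFinset (m + 3), t ^ (2 * M.card))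
        + (ε * t ^ (m + 3) + (-1) ^ (m + 3) * (ε * t ^ (m + 3))) := by
  classical
  have hn : 3 ≤ m + 3 := by omega
  rw [Matrix.det_apply]
  set f : Equiv.Perm (Fin (m + 3)) → ℝ := fun σ =>
    Equiv.Perm.sign σ •
      ∏ i, ((1 : Matrix (Fin (m + 3)) (Fin (m + 3)) ℝ) + t • Tpm (m + 3) ε) (σ i) i with hf
  set S : Finset (Equiv.Perm (Fin (m + 3))) :=
    insert (rot (m + 3)) (insert ((rot (m + 3))⁻¹) ((matchFinset (m + 3)).image permOf))
    with hS
  have hzero : ∀ σ ∈ (Finset.univ : Finset (Equiv.Perm (Fin (m + 3)))), σ ∉ S → f σ = 0 := by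
    intro σ _ hσ
    have hg : ¬ Good σ := by
      intro hg
      apply hσ
      rcases good_mem hn hg with h | h | ⟨M, hM, h⟩
      · rw [h, hS]; exact Finset.mem_insert_self _ _
      · rw [h, hS]; exact Finset.mem_insert_of_mem (Finset.mem_insert_self _ _)
      · rw [← h, hS]
        exact Finset.mem_insert_of_mem (Finset.mem_insert_of_mem
          (Finset.mem_image.mpr ⟨M, mem_matchFinset.mpr hM, rfl⟩))
    rw [hf]
    simp only []
    rw [prod_eq_zero_of_not_good hn hg, smul_zero]
  rw [← Finset.sum_subset (Finset.subset_univ S) hzero]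
  have hrot_notin : rot (m + 3) ∉
      insert ((rot (m + 3))⁻¹) ((matchFinset (m + 3)).image permOf) := by
    simp only [Finset.mem_insert, Finset.mem_image, not_or, not_exists]
    refine ⟨rot_ne_inv hn, ?_⟩
    intro M
    rintro ⟨-, h⟩
    exact permOf_ne_rot hn M h
  have hrotinv_notin : (rot (m + 3))⁻¹ ∉ (matchFinset (m + 3)).image permOf := by
    simp only [Finset.mem_image, not_exists]
    intro M
    rintro ⟨-, h⟩
    exact permOf_ne_rot_inv hn M h
  have hinj : ∀ M ∈ matchFinset (m + 3), ∀ M' ∈ matchFinset (m + 3),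
      permOf M = permOf M' → M = M' := by
    intro M hM M' hM' h
    exact permOf_inj (mem_matchFinset.mp hM) (mem_matchFinset.mp hM') h
  rw [hS, Finset.sum_insert hrot_notin, Finset.sum_insert hrotinv_notin,
    Finset.sum_image hinj]
  have hterm : ∀ M ∈ matchFinset (m + 3), f (permOf M) = t ^ (2 * M.card) := by
    intro M hM
    have h := term_matching (t := t) hn hε (mem_matchFinset.mp hM)
    rw [hf]
    simp only []
    rw [Units.smul_def]
    exact h
  rw [Finset.sum_congr rfl hterm]
  have hfrot : f (rot (m + 3)) = ε * t ^ (m + 3) := by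
    rw [hf]
    simp only []
    rw [sign_rot, prod_rot, units_neg_one_pow_smul]
    have : (-1 : ℝ) ^ (m + 2) * (-1 : ℝ) ^ (m + 2) = 1 := by
      rw [← mul_pow]; norm_num
    linear_combination (t ^ (m + 3) * ε) * this
  have hfrotinv : f ((rot (m + 3))⁻¹) = (-1) ^ (m + 3) * (ε * t ^ (m + 3)) := by
    rw [hf]
    simp only []
    rw [sign_rot_inv, prod_rot_inv, units_neg_one_pow_smul, pow_succ]
    ring
  rw [hfrot, hfrotinv]
  ring

end Cyc18

theorem det_one_add_smul_T' (n : ℕ) (hn : 3 ≤ n) (t : ℝ) :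
    (Odd n →
      ((1 : Matrix (Fin n) (Fin n) ℝ) + t • Tpm n 1).det =
          ∑ j ∈ Finset.range (n / 2 + 1), (numCycleMatchings n j : ℝ) * t ^ (2 * j) ∧
        ((1 : Matrix (Fin n) (Fin n) ℝ) + t • Tpm n (-1)).det =
          ∑ j ∈ Finset.range (n / 2 + 1), (numCycleMatchings n j : ℝ) * t ^ (2 * j)) ∧
    (Even n →
      ((1 : Matrix (Fin n) (Fin n) ℝ) + t • Tpm n 1).det =
          (∑ j ∈ Finset.range (n / 2 + 1), (numCycleMatchings n j : ℝ) * t ^ (2 * j)) +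
            2 * t ^ n ∧
        ((1 : Matrix (Fin n) (Fin n) ℝ) + t • Tpm n (-1)).det =
          (∑ j ∈ Finset.range (n / 2 + 1), (numCycleMatchings n j : ℝ) * t ^ (2 * j)) -
            2 * t ^ n) := by
  obtain ⟨m, rfl⟩ : ∃ m, n = m + 3 := ⟨n - 3, by omega⟩
  have h1 := Cyc18.det_A m t 1 (by norm_num)
  have h2 := Cyc18.det_A m t (-1) (by norm_num)
  have hsum := Cyc18.sum_matchings (show 3 ≤ m + 3 by omega) t
  rw [hsum] at h1 h2
  constructor
  · intro hodd
    have ho : (-1 : ℝ) ^ (m + 3) = -1 := hodd.neg_one_pow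
    rw [ho] at h1 h2
    constructor
    · rw [h1]; ring
    · rw [h2]; ring
  · intro heven
    have he : (-1 : ℝ) ^ (m + 3) = 1 := heven.neg_one_pow
    rw [he] at h1 h2
    constructor
    · rw [h1]; ring
    · rw [h2]; ring

/-- For `n ≥ 3` let `M(t) = ∑_{j=0}^{⌊n/2⌋} φ(j, C_n) t^{2j}` be the
matching polynomial of `C_n`.  Then for every real `t`: if `n` is odd,
`det(I + t T_{n,+}) = det(I + t T_{n,-}) = M(t)`; if `n` is even,
`det(I + t T_{n,+}) = M(t) + 2tⁿ` and `det(I + t T_{n,-}) = M(t) - 2tⁿ`. -/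
theorem det_one_add_smul_T (n : ℕ) (hn : 3 ≤ n) (t : ℝ) :
    (Odd n →
      ((1 : Matrix (Fin n) (Fin n) ℝ) + t • Tplus n).det =
          ∑ j ∈ Finset.range (n / 2 + 1), (numCycleMatchings n j : ℝ) * t ^ (2 * j) ∧
        ((1 : Matrix (Fin n) (Fin n) ℝ) + t • Tminus n).det =
          ∑ j ∈ Finset.range (n / 2 + 1), (numCycleMatchings n j : ℝ) * t ^ (2 * j)) ∧
    (Even n →
      ((1 : Matrix (Fin n) (Fin n) ℝ) + t • Tplus n).det =
          (∑ j ∈ Finset.range (n / 2 + 1), (numCycleMatchings n j : ℝ) * t ^ (2 * j)) +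
            2 * t ^ n ∧
        ((1 : Matrix (Fin n) (Fin n) ℝ) + t • Tminus n).det =
          (∑ j ∈ Finset.range (n / 2 + 1), (numCycleMatchings n j : ℝ) * t ^ (2 * j)) -
            2 * t ^ n) := by
  exact det_one_add_smul_T' n hn t
end
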